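/- arXiv:1012.3898 — 6 statements merged into one kernel-verified Lean document; each statement's English description precedes it below -/
import Mathlib

section
/- Let p > 3 be a prime and let t be a nonzero element of ℤ/pℤ. Then in ℤ/pℤ the following four quantities are all equal: (1) P_{⌊p/4⌋}(2/t − 1); (2) Σ_{k=0}^{⌊p/4⌋} C(4k,2k)·C(2k,k)·((t−1)/(64t))^k; (3) (−1)^{⌊p/4⌋}·Σ_{k=0}^{⌊p/4⌋} C(4k,2k)·C(2k,k)·(64t)^{−k}; (4) −(−6t)^{(p−1)/2}·Σ_{x ∈ ℤ/pℤ} (t·x³ − 3(t+3)·x + 2(t−9))^{(p−1)/2}. Moreover, if s ∈ ℤ/pℤ satisfies s² = t, then this common value equals s^{(p−1)/2}·P_{(p−1)/2}(s). -/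
/-- The Legendre polynomial `P_n` evaluated at `x`, in any commutative ring
(meaningful when 2 is invertible):
`P_n(x) = 2^{-n} * Σ_{k=0}^{⌊n/2⌋} (-1)^k C(n,k) C(2n-2k,n) x^{n-2k}`. -/
noncomputable def legP {R : Type*} [CommRing R] (n : ℕ) (x : R) : R :=
  Ring.inverse (2 : R) ^ n *
    ∑ k ∈ Finset.range (n / 2 + 1),
      (-1 : R) ^ k * (n.choose k : R) * (((2 * n - 2 * k).choose n : ℕ) : R) * x ^ (n - 2 * k)


open Polynomial Finset Nat

section hub

variable {R : Type*} [CommRing R]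

lemma coeff_comp_C_mul_X (P : R[X]) (z : R) (k : ℕ) :
    (P.comp (C z * X)).coeff k = z ^ k * P.coeff k := by
  induction P using Polynomial.induction_on' with
  | add p q hp hq => simp [add_comp, hp, hq, mul_add]
  | monomial i a =>
    rw [monomial_comp, mul_pow, ← C_pow, ← mul_assoc, ← C_mul, coeff_C_mul, coeff_X_pow,
      coeff_monomial]
    by_cases h : k = i
    · subst h; simp [mul_comm]
    · simp [h, Ne.symm h]

lemma hubA (x : R) (n : ℕ) :
    (((X + C (x - 1)) * (X + C (x + 1))) ^ n).coeff n
      = ∑ k ∈ range (n + 1),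
          (-1 : R) ^ k * (n.choose k : R) * (((2 * n - 2 * k).choose n : ℕ) : R) * x ^ (n - 2 * k) := by
  have hG : (X + C (x - 1)) * (X + C (x + 1)) = (X + C x) ^ 2 - 1 := by
    simp only [C_sub, C_add, C_1]; ring
  rw [hG, sub_eq_add_neg, add_pow, finset_sum_coeff, ← Finset.sum_range_reflect]
  apply Finset.sum_congr rfl
  intro k hk
  rw [Finset.mem_range] at hk
  have hk' : k ≤ n := by omega
  have h1 : n + 1 - 1 - k = n - k := by omega
  rw [h1]
  have h2 : ((X + C x) ^ 2) ^ (n - k) * (-1 : R[X]) ^ (n - (n - k)) * ((n.choose (n - k) : ℕ) : R[X])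
      = (X + C x) ^ (2 * (n - k)) * C ((-1 : R) ^ k * ((n.choose k : ℕ) : R)) := by
    rw [← pow_mul, show n - (n - k) = k by omega, Nat.choose_symm hk']
    rw [C_mul, C_pow, C_neg, C_1, C_eq_natCast]
    ring
  rw [h2, coeff_mul_C, coeff_X_add_C_pow]
  rw [show 2 * (n - k) - n = n - 2 * k by omega, show (2 * (n - k)) = 2 * n - 2 * k by omega]
  ring

lemma hubB {F : Type*} [Field F] (x : F) (n : ℕ) :
    (((X + C (x - 1)) * (X + C (x + 1))) ^ n).coeff n
      = ∑ k ∈ range (n + 1),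
          (n.choose k : F) * (((n + k).choose n : ℕ) : F) * (x - 1) ^ k * 2 ^ (n - k) := by
  by_cases hz : x - 1 = 0
  · have hx : x = 1 := by linear_combination hz
    subst hx
    rw [show (1:F) - 1 = 0 by ring, show (1:F) + 1 = 2 by ring, C_0, add_zero, mul_pow]
    have h1 : ((X : F[X]) ^ n * (X + C (2:F)) ^ n).coeff (0 + n)
        = (((X + C (2:F)) ^ n).coeff 0) := coeff_X_pow_mul _ n 0
    rw [zero_add] at h1
    rw [h1, coeff_X_add_C_pow]
    rw [Finset.sum_eq_single 0]
    · simp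
    · intro k _ hk; rw [zero_pow hk]; ring
    · intro h; simp at h
  · -- x - 1 ≠ 0 case
    set z : F := x - 1 with hzdef
    have key : ((X + C (x - 1)) * (X + C (x + 1))).comp (C z * X)
        = C z * ((1 + X) * (C z * (1 + X) + C 2)) := by
      rw [mul_comp, add_comp, add_comp, X_comp, C_comp, C_comp]
      rw [show x + 1 = z + 2 by rw [hzdef]; ring, ← hzdef, C_add]
      ring
    have hW : ((((1:F[X]) + X) * (C z * (1 + X) + C 2)) ^ n).coeff n
        = ∑ k ∈ range (n + 1),
            (n.choose k : F) * (((n + k).choose n : ℕ) : F) * z ^ k * 2 ^ (n - k) := by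
      rw [mul_pow, add_pow (C z * (1 + X)) (C 2) n, Finset.mul_sum, finset_sum_coeff]
      apply Finset.sum_congr rfl
      intro k hk
      rw [Finset.mem_range] at hk
      have h3 : (1 + X : F[X]) ^ n * ((C z * (1 + X)) ^ k * C 2 ^ (n - k) * ((n.choose k : ℕ) : F[X]))
          = (1 + X) ^ (n + k) * C (z ^ k * 2 ^ (n - k) * (n.choose k : F)) := by
        rw [mul_pow, ← C_pow, ← C_pow, C_mul, C_mul, C_eq_natCast, pow_add]
        ring
      rw [h3, coeff_mul_C, coeff_one_add_X_pow]
      ring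
    have hcan : z ^ n * (((X + C (x - 1)) * (X + C (x + 1))) ^ n).coeff n
        = z ^ n * ((((1:F[X]) + X) * (C z * (1 + X) + C 2)) ^ n).coeff n := by
      rw [← coeff_comp_C_mul_X (((X + C (x - 1)) * (X + C (x + 1))) ^ n) z n]
      rw [pow_comp, key, mul_pow, ← C_pow, coeff_C_mul]
    have := mul_left_cancel₀ (pow_ne_zero n hz) hcan
    rw [this, hW]

end hub

section legPlem

variable {F : Type*} [Field F]

lemma legP_extend (n : ℕ) (x : F) :
    legP n x = Ring.inverse (2 : F) ^ n *
      ∑ k ∈ range (n + 1),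
        (-1 : F) ^ k * (n.choose k : F) * (((2 * n - 2 * k).choose n : ℕ) : F) * x ^ (n - 2 * k) := by
  rw [legP]
  congr 1
  apply Finset.sum_subset
  · intro k hk; rw [Finset.mem_range] at *; omega
  · intro k hk1 hk2
    rw [Finset.mem_range] at *
    have : 2 * n - 2 * k < n := by omega
    rw [Nat.choose_eq_zero_of_lt this]
    simp

lemma legP_shifted (h2 : (2 : F) ≠ 0) (n : ℕ) (v : F) :
    legP n (2 * v - 1) = ∑ k ∈ range (n + 1),
      (n.choose k : F) * (((n + k).choose n : ℕ) : F) * (v - 1) ^ k := by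
  rw [legP_extend, ← hubA (2 * v - 1) n, hubB (2 * v - 1) n, Finset.mul_sum]
  apply Finset.sum_congr rfl
  intro k hk
  rw [Finset.mem_range] at hk
  have hinv : Ring.inverse (2 : F) = 2⁻¹ := by simp [Ring.inverse_eq_inv']
  have h2n : (2 : F) ^ k * (2 : F) ^ (n - k) = 2 ^ n := by rw [← pow_add]; congr 1; omega
  have hone : (2⁻¹ : F) ^ n * ((2:F) ^ k * 2 ^ (n - k)) = 1 := by
    rw [h2n, inv_pow, inv_mul_cancel₀ (pow_ne_zero _ h2)]
  rw [hinv]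
  have hsv : (2 * v - 1 - 1 : F) = 2 * (v - 1) := by ring
  rw [hsv, mul_pow]
  linear_combination ((n.choose k : F) * (((n + k).choose n : ℕ) : F) * (v - 1) ^ k) * hone

lemma legP_neg {R : Type*} [CommRing R] (n : ℕ) (y : R) :
    legP n (-y) = (-1) ^ n * legP n y := by
  rw [legP, legP, Finset.mul_sum, Finset.mul_sum, Finset.mul_sum]
  apply Finset.sum_congr rfl
  intro k hk
  rw [Finset.mem_range] at hk
  have h2k : 2 * k ≤ n := by omega
  have hy : (-y) ^ (n - 2 * k) = (-1) ^ (n - 2 * k) * y ^ (n - 2 * k) := by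
    rw [neg_pow]
  have hpar : ((-1 : R)) ^ (n - 2 * k) * ((-1 : R)) ^ (2 * k) = (-1) ^ n := by
    rw [← pow_add]; congr 1; omega
  have h1 : ((-1 : R)) ^ (2 * k) = 1 := by rw [pow_mul]; simp
  rw [h1, mul_one] at hpar
  rw [hy, hpar]
  ring

end legPlem



section zmodsec
variable {p : ℕ} [Fact p.Prime]

lemma ncast_ne (j : ℕ) (h1 : 0 < j) (h2 : j < p) : ((j : ℕ) : ZMod p) ≠ 0 := by
  rw [Ne, ZMod.natCast_eq_zero_iff]
  intro hdvd
  have := Nat.le_of_dvd h1 hdvd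
  omega

lemma fact_ne (j : ℕ) (h : j ≤ p - 1) : ((j ! : ℕ) : ZMod p) ≠ 0 := by
  have hP : p.Prime := Fact.out
  rw [Ne, ZMod.natCast_eq_zero_iff, hP.dvd_factorial]
  have := hP.two_le
  omega

lemma choose_cast (N k : ℕ) (h : k ≤ N) :
    ((N.choose k : ℕ) : ZMod p) * ((k ! : ℕ) : ZMod p) * (((N - k)! : ℕ) : ZMod p)
      = ((N ! : ℕ) : ZMod p) := by
  have := Nat.choose_mul_factorial_mul_factorial h
  exact_mod_cast congrArg (Nat.cast : ℕ → ZMod p) this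

lemma wilson_chain (hp : 3 < p) : ∀ j i, j + i = p - 1 →
    ((i ! : ℕ) : ZMod p) * ((j ! : ℕ) : ZMod p) = (-1) ^ (j + 1) := by
  intro j
  induction j with
  | zero =>
    intro i hi
    have : i = p - 1 := by omega
    subst this
    simp [ZMod.wilsons_lemma]
  | succ j IH =>
    intro i hi
    have IH' := IH (i + 1) (by omega)
    have t1 : ((i+1)! : ℕ) = (i+1) * i ! := Nat.factorial_succ i
    have t3 : ((j+1)! : ℕ) = (j+1) * j ! := Nat.factorial_succ j
    rw [t1] at IH'
    rw [t3]
    have hC : ((i : ℕ) : ZMod p) + 1 + ((j : ℕ) : ZMod p) + 1 = 0 := by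
      have hnat : ((i + 1 + (j + 1) : ℕ) : ZMod p) = ((p : ℕ) : ZMod p) := by
        congr 1; omega
      rw [ZMod.natCast_self] at hnat
      push_cast at hnat
      linear_combination hnat
    push_cast at IH' ⊢
    linear_combination (-1 : ZMod p) * IH' + ((i ! : ℕ) : ZMod p) * ((j ! : ℕ) : ZMod p) * hC

lemma L2fact (hp : 3 < p) (n : ℕ) (hn : 4*n+1 = p ∨ 4*n+3 = p) :
    ∀ k j, k + j = n → (((4*k)! : ℕ) : ZMod p) * ((j ! : ℕ) : ZMod p)
      = (-64 : ZMod p)^k * (((2*k)! : ℕ) : ZMod p) * (((n+k)! : ℕ) : ZMod p) := by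
  have hlt : 4*n < p := by rcases hn with h | h <;> omega
  have hN : (4*(n : ZMod p)+1) * (4*(n : ZMod p)+3) = 0 := by
    rcases hn with h | h
    · have h0 : ((4*n+1 : ℕ) : ZMod p) = 0 := by rw [h]; exact ZMod.natCast_self p
      push_cast at h0
      rw [h0, zero_mul]
    · have h0 : ((4*n+3 : ℕ) : ZMod p) = 0 := by rw [h]; exact ZMod.natCast_self p
      push_cast at h0
      rw [h0, mul_zero]
  intro k
  induction k with
  | zero =>
    intro j hj
    have : j = n := by omega
    subst this
    norm_num
  | succ k IH =>
    intro j hj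
    have IH' := IH (j+1) (by omega)
    have hjne : ((j+1 : ℕ) : ZMod p) ≠ 0 := ncast_ne (j+1) (by omega) (by omega)
    have t1 : ((4*(k+1))! : ℕ) = (4*k+1)*((4*k+2)*((4*k+3)*((4*k+4)*(4*k)!))) := by
      rw [show 4*(k+1) = 4*k+4 by ring]
      rw [show 4*k+4 = (4*k+3)+1 from rfl, Nat.factorial_succ,
          show 4*k+3 = (4*k+2)+1 from rfl, Nat.factorial_succ,
          show 4*k+2 = (4*k+1)+1 from rfl, Nat.factorial_succ, Nat.factorial_succ]
      ring
    have t2 : ((2*(k+1))! : ℕ) = (2*k+1)*((2*k+2)*(2*k)!) := by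
      rw [show 2*(k+1) = 2*k+2 by ring, show 2*k+2 = (2*k+1)+1 from rfl,
        Nat.factorial_succ, Nat.factorial_succ]
      ring
    have t3 : ((j+1)! : ℕ) = (j+1) * j ! := Nat.factorial_succ j
    have t4 : ((n+(k+1))! : ℕ) = (n+k+1)*(n+k)! := by
      rw [show n+(k+1) = (n+k)+1 from rfl, Nat.factorial_succ]
    have hJ : (j : ZMod p) = (n : ZMod p) - ((k : ZMod p)+1) := by
      have hnat : ((k+1+j : ℕ) : ZMod p) = ((n : ℕ) : ZMod p) := by rw [hj]
      push_cast at hnat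
      linear_combination hnat
    apply mul_left_cancel₀ hjne
    rw [t3] at IH'
    rw [t1, t2, t4]
    push_cast at IH' ⊢
    rw [hJ] at IH' ⊢
    linear_combination ((4*(k:ZMod p)+1)*(4*(k:ZMod p)+2)*(4*(k:ZMod p)+3)*(4*(k:ZMod p)+4)) * IH'
      + (4*(2*(k:ZMod p)+1)*(2*(k:ZMod p)+2)*((-64 : ZMod p)^k * (((2*k)! : ℕ) : ZMod p)
          * (((n+k)! : ℕ) : ZMod p))) * hN

end zmodsec

section zmodsec2
variable {p : ℕ} [Fact p.Prime]

lemma L4fact (hp : 3 < p) (n m : ℕ) (hn : 4*n+1 = p ∨ 4*n+3 = p) (hm : 2*m+1 = p) :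
    ∀ k j i l, k + j = n → 2*k + i = m → k + l = m →
      ((m ! : ℕ) : ZMod p) * ((m ! : ℕ) : ZMod p) * ((k ! : ℕ) : ZMod p) * ((j ! : ℕ) : ZMod p)
        = (((n+k)! : ℕ) : ZMod p) * (((2*k)! : ℕ) : ZMod p) * ((i ! : ℕ) : ZMod p)
            * ((l ! : ℕ) : ZMod p) := by
  have hlt : 4*n < p := by rcases hn with h | h <;> omega
  have hN : (4*(n : ZMod p)+1) * (4*(n : ZMod p)+3) = 0 := by
    rcases hn with h | h
    · have h0 : ((4*n+1 : ℕ) : ZMod p) = 0 := by rw [h]; exact ZMod.natCast_self p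
      push_cast at h0
      rw [h0, zero_mul]
    · have h0 : ((4*n+3 : ℕ) : ZMod p) = 0 := by rw [h]; exact ZMod.natCast_self p
      push_cast at h0
      rw [h0, mul_zero]
  have hM : 2*(m : ZMod p) + 1 = 0 := by
    have h0 : ((2*m+1 : ℕ) : ZMod p) = 0 := by rw [hm]; exact ZMod.natCast_self p
    push_cast at h0
    exact h0
  have h2ne : (2 : ZMod p) ≠ 0 := by
    have := ncast_ne (p := p) 2 (by omega) (by omega)
    simpa using this
  intro k
  induction k with
  | zero =>
    intro j i l hj hi hl
    rw [show j = n by omega, show i = m by omega, show l = m by omega]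
    norm_num
    ring
  | succ k IH =>
    intro j i l hj hi hl
    have IH' := IH (j+1) (i+2) (l+1) (by omega) (by omega) (by omega)
    have h8ne : (8 : ZMod p) ≠ 0 := by
      have : (8 : ZMod p) = 2^3 := by norm_num
      rw [this]
      exact pow_ne_zero 3 h2ne
    have hjne : ((j+1 : ℕ) : ZMod p) ≠ 0 := ncast_ne (j+1) (by omega) (by omega)
    have hine1 : ((i+1 : ℕ) : ZMod p) ≠ 0 := ncast_ne (i+1) (by omega) (by omega)
    have hine2 : ((i+2 : ℕ) : ZMod p) ≠ 0 := ncast_ne (i+2) (by omega) (by omega)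
    have hlne : ((l+1 : ℕ) : ZMod p) ≠ 0 := ncast_ne (l+1) (by omega) (by omega)
    have hcne : (8 : ZMod p) * (((j+1 : ℕ) : ZMod p) * (((i+2 : ℕ) : ZMod p)
        * (((i+1 : ℕ) : ZMod p) * ((l+1 : ℕ) : ZMod p)))) ≠ 0 := by
      exact mul_ne_zero h8ne (mul_ne_zero hjne (mul_ne_zero hine2 (mul_ne_zero hine1 hlne)))
    have tk : ((k+1)! : ℕ) = (k+1) * k ! := Nat.factorial_succ k
    have t2 : ((2*(k+1))! : ℕ) = (2*k+1)*((2*k+2)*(2*k)!) := by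
      rw [show 2*(k+1) = 2*k+2 by ring, show 2*k+2 = (2*k+1)+1 from rfl,
        Nat.factorial_succ, Nat.factorial_succ]
      ring
    have t4 : ((n+(k+1))! : ℕ) = (n+k+1)*(n+k)! := by
      rw [show n+(k+1) = (n+k)+1 from rfl, Nat.factorial_succ]
    have t3 : ((j+1)! : ℕ) = (j+1) * j ! := Nat.factorial_succ j
    have ti : ((i+2)! : ℕ) = (i+2)*((i+1) * i !) := by
      rw [show i+2 = (i+1)+1 from rfl, Nat.factorial_succ, Nat.factorial_succ]
    have tl : ((l+1)! : ℕ) = (l+1) * l ! := Nat.factorial_succ l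
    have hJ : (j : ZMod p) = (n : ZMod p) - ((k : ZMod p)+1) := by
      have hnat : ((k+1+j : ℕ) : ZMod p) = ((n : ℕ) : ZMod p) := by rw [hj]
      push_cast at hnat
      linear_combination hnat
    have hI : (i : ZMod p) = (m : ZMod p) - (2*(k : ZMod p)+2) := by
      have hnat : ((2*(k+1)+i : ℕ) : ZMod p) = ((m : ℕ) : ZMod p) := by rw [hi]
      push_cast at hnat
      linear_combination hnat
    have hL : (l : ZMod p) = (m : ZMod p) - ((k : ZMod p)+1) := by
      have hnat : ((k+1+l : ℕ) : ZMod p) = ((m : ℕ) : ZMod p) := by rw [hl]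
      push_cast at hnat
      linear_combination hnat
    apply mul_left_cancel₀ hcne
    rw [t3, ti, tl] at IH'
    rw [tk, t2, t4]
    push_cast at IH' ⊢
    rw [hJ] at IH' ⊢
    rw [hI] at IH' ⊢
    rw [hL] at IH' ⊢
    linear_combination
      (8*(((k:ZMod p)+1)*(((m:ZMod p)-2*(k:ZMod p))*((m:ZMod p)-2*(k:ZMod p)-1)*((m:ZMod p)-(k:ZMod p))))) * IH'
      + ((3 + 25*(k:ZMod p) + 54*(k:ZMod p)^2 + 32*(k:ZMod p)^3 - 6*(m:ZMod p)
          - 26*(m:ZMod p)*(k:ZMod p) - 20*(m:ZMod p)*(k:ZMod p)^2 + 4*(m:ZMod p)^2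
          + 4*(m:ZMod p)^2*(k:ZMod p))
        * ((((n+k)! : ℕ) : ZMod p) * (((2*k)! : ℕ) : ZMod p)
          * (((m:ZMod p)-2*(k:ZMod p))*((m:ZMod p)-2*(k:ZMod p)-1)*((i ! : ℕ) : ZMod p))
          * (((m:ZMod p)-(k:ZMod p))*((l ! : ℕ) : ZMod p)))) * hM
      + ((-(1 + 3*(k:ZMod p) + 2*(k:ZMod p)^2))
        * ((((n+k)! : ℕ) : ZMod p) * (((2*k)! : ℕ) : ZMod p)
          * (((m:ZMod p)-2*(k:ZMod p))*((m:ZMod p)-2*(k:ZMod p)-1)*((i ! : ℕ) : ZMod p))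
          * (((m:ZMod p)-(k:ZMod p))*((l ! : ℕ) : ZMod p)))) * hN

end zmodsec2

section zmodsec3
variable {p : ℕ} [Fact p.Prime]

lemma ch2 (hp : 3 < p) (n : ℕ) (hn : 4*n+1 = p ∨ 4*n+3 = p) (k : ℕ) (hk : k ≤ n) :
    (((4*k).choose (2*k) : ℕ) : ZMod p) * (((2*k).choose k : ℕ) : ZMod p)
      = (-64 : ZMod p)^k * ((n.choose k : ℕ) : ZMod p) * (((n+k).choose k : ℕ) : ZMod p) := by
  have hlt : 4*n < p := by rcases hn with h | h <;> omega
  have A1 := choose_cast (p := p) (4*k) (2*k) (by omega)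
  rw [show 4*k - 2*k = 2*k by omega] at A1
  have A2 := choose_cast (p := p) (2*k) k (by omega)
  rw [show 2*k - k = k by omega] at A2
  have A5 := choose_cast (p := p) n k hk
  have A6 := choose_cast (p := p) (n+k) k (by omega)
  rw [show n + k - k = n by omega] at A6
  have L2k := L2fact hp n hn k (n-k) (by omega)
  have Qne : (((2*k)! : ℕ) : ZMod p) * ((k ! : ℕ) : ZMod p) * ((k ! : ℕ) : ZMod p)
      * ((n ! : ℕ) : ZMod p) * (((n-k)! : ℕ) : ZMod p) ≠ 0 := by
    refine mul_ne_zero (mul_ne_zero (mul_ne_zero (mul_ne_zero ?_ ?_) ?_) ?_) ?_ <;>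
      exact fact_ne _ (by omega)
  apply mul_right_cancel₀ Qne
  linear_combination
    ((((4*k).choose (2*k) : ℕ) : ZMod p) * (((2*k)! : ℕ) : ZMod p) * ((n ! : ℕ) : ZMod p)
      * (((n-k)! : ℕ) : ZMod p)) * A2
    + (((n ! : ℕ) : ZMod p) * (((n-k)! : ℕ) : ZMod p)) * A1
    + ((n ! : ℕ) : ZMod p) * L2k
    + (-((-64 : ZMod p)^k * (((2*k)! : ℕ) : ZMod p) * (((n+k).choose k : ℕ) : ZMod p)
        * ((k ! : ℕ) : ZMod p) * ((n ! : ℕ) : ZMod p))) * A5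
    + (-((-64 : ZMod p)^k * (((2*k)! : ℕ) : ZMod p) * ((n ! : ℕ) : ZMod p))) * A6

lemma ch4 (hp : 3 < p) (n m : ℕ) (hn : 4*n+1 = p ∨ 4*n+3 = p) (hm : 2*m+1 = p) (k : ℕ)
    (hk : k ≤ n) :
    ((m.choose (2*k) : ℕ) : ZMod p) * ((m.choose k : ℕ) : ZMod p)
      = ((n.choose k : ℕ) : ZMod p) * (((n+k).choose k : ℕ) : ZMod p) := by
  have hlt : 4*n < p := by rcases hn with h | h <;> omega
  have hmn : m = 2*n ∨ m = 2*n+1 := by rcases hn with h | h <;> omega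
  have h2km : 2*k ≤ m := by omega
  have B1 := choose_cast (p := p) m (2*k) h2km
  have B2 := choose_cast (p := p) m k (by omega)
  have A5 := choose_cast (p := p) n k hk
  have A6 := choose_cast (p := p) (n+k) k (by omega)
  rw [show n + k - k = n by omega] at A6
  have L4k := L4fact hp n m hn hm k (n-k) (m-2*k) (m-k) (by omega) (by omega) (by omega)
  have Qne : (((2*k)! : ℕ) : ZMod p) * (((m-2*k)! : ℕ) : ZMod p) * ((k ! : ℕ) : ZMod p)
      * (((m-k)! : ℕ) : ZMod p) * ((k ! : ℕ) : ZMod p) * (((n-k)! : ℕ) : ZMod p)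
      * ((n ! : ℕ) : ZMod p) ≠ 0 := by
    refine mul_ne_zero (mul_ne_zero (mul_ne_zero (mul_ne_zero (mul_ne_zero
      (mul_ne_zero ?_ ?_) ?_) ?_) ?_) ?_) ?_ <;> exact fact_ne _ (by omega)
  apply mul_right_cancel₀ Qne
  linear_combination
    (((m.choose k : ℕ) : ZMod p) * ((k ! : ℕ) : ZMod p) * (((m-k)! : ℕ) : ZMod p)
      * ((k ! : ℕ) : ZMod p) * (((n-k)! : ℕ) : ZMod p) * ((n ! : ℕ) : ZMod p)) * B1
    + (((m ! : ℕ) : ZMod p) * ((k ! : ℕ) : ZMod p) * (((n-k)! : ℕ) : ZMod p)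
      * ((n ! : ℕ) : ZMod p)) * B2
    + ((n ! : ℕ) : ZMod p) * L4k
    + (-((((n+k).choose k : ℕ) : ZMod p) * ((k ! : ℕ) : ZMod p) * ((n ! : ℕ) : ZMod p)
        * (((2*k)! : ℕ) : ZMod p) * (((m-2*k)! : ℕ) : ZMod p) * (((m-k)! : ℕ) : ZMod p))) * A5
    + (-(((n ! : ℕ) : ZMod p) * (((2*k)! : ℕ) : ZMod p) * (((m-2*k)! : ℕ) : ZMod p)
        * (((m-k)! : ℕ) : ZMod p))) * A6

lemma ch6 (hp : 3 < p) (m k : ℕ) (hm : 2*m+1 = p) (hk : 2*k ≤ m) :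
    (((2*m-2*k).choose m : ℕ) : ZMod p) = (-1 : ZMod p)^m * ((m.choose (2*k) : ℕ) : ZMod p) := by
  have D1 := choose_cast (p := p) (2*m-2*k) m (by omega)
  rw [show 2*m-2*k-m = m-2*k by omega] at D1
  have W2k := wilson_chain hp (2*k) (2*m-2*k) (by omega)
  have hw : ((-1 : ZMod p))^(2*k+1) = -1 := by
    rw [pow_succ, pow_mul]
    norm_num
  rw [hw] at W2k
  have Wm := wilson_chain hp m m (by omega)
  rw [pow_succ] at Wm
  have B1 := choose_cast (p := p) m (2*k) hk
  have hsq : (-1 : ZMod p)^m * (-1 : ZMod p)^m = 1 := by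
    rw [← pow_add]
    exact Even.neg_one_pow ⟨m, rfl⟩
  have Qne : ((m ! : ℕ) : ZMod p) * (((m-2*k)! : ℕ) : ZMod p) * (((2*k)! : ℕ) : ZMod p) ≠ 0 := by
    refine mul_ne_zero (mul_ne_zero ?_ ?_) ?_ <;> exact fact_ne _ (by omega)
  apply mul_right_cancel₀ Qne
  linear_combination (((2*k)! : ℕ) : ZMod p) * D1 + W2k
    + (-((-1 : ZMod p)^m * ((m ! : ℕ) : ZMod p))) * B1
    + (-(-1 : ZMod p)^m) * Wm + hsq

lemma L5 (hp : 3 < p) (n m : ℕ) (hn : 4*n+1 = p ∨ 4*n+3 = p) (hm : 2*m+1 = p) :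
    (2 : ZMod p)^m = (-1 : ZMod p)^(m+n) := by
  have hP : p.Prime := Fact.out
  have hodd : p % 2 = 1 := by
    rcases hn with h | h <;> omega
  have h2ne : (2 : ZMod p) ≠ 0 := by
    have := ncast_ne (p := p) 2 (by omega) (by omega)
    simpa using this
  have hdiv : p / 2 = m := by omega
  by_cases hsq : IsSquare (2 : ZMod p)
  · have h1 : (2 : ZMod p) ^ (p / 2) = 1 := (ZMod.euler_criterion p h2ne).mp hsq
    rw [hdiv] at h1
    rw [h1]
    have h78 : p % 8 = 1 ∨ p % 8 = 7 := (ZMod.exists_sq_eq_two_iff (by omega)).mp hsq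
    have heven : (m + n) % 2 = 0 := by omega
    exact (Even.neg_one_pow (Nat.even_iff.mpr heven)).symm
  · have h1 : (2 : ZMod p) ^ (p / 2) ≠ 1 := fun h => hsq ((ZMod.euler_criterion p h2ne).mpr h)
    rw [hdiv] at h1
    have h2 : ((2 : ZMod p)^m)^2 = 1 := by
      rw [← pow_mul, show m*2 = p - 1 by omega]
      exact ZMod.pow_card_sub_one_eq_one h2ne
    have h3 : ((2 : ZMod p)^m - 1) * ((2 : ZMod p)^m + 1) = 0 := by linear_combination h2
    rcases mul_eq_zero.mp h3 with h | h
    · exact absurd (by linear_combination h) h1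
    · have hneg : (2 : ZMod p)^m = -1 := by linear_combination h
      rw [hneg]
      have h78 : ¬(p % 8 = 1 ∨ p % 8 = 7) := fun h => hsq ((ZMod.exists_sq_eq_two_iff (by omega)).mpr h)
      have hodd' : (m + n) % 2 = 1 := by omega
      exact (Odd.neg_one_pow (Nat.odd_iff.mpr hodd')).symm

end zmodsec3



section partD
variable {p : ℕ} [Fact p.Prime]

lemma sum_pow_eq (hp : 3 < p) (e : ℕ) (h3 : e < 2*(p-1)) :
    (∑ x : ZMod p, x^e) = if e = p - 1 then -1 else 0 := by
  have hP : p.Prime := Fact.out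
  rcases Nat.lt_or_ge e (p-1) with hlt | hge
  · rw [if_neg (by omega)]
    rcases Nat.eq_zero_or_pos e with he0 | hepos
    · subst he0
      simp only [pow_zero]
      rw [Finset.sum_const, Finset.card_univ, ZMod.card, nsmul_eq_mul, mul_one,
        ZMod.natCast_self]
    · exact FiniteField.sum_pow_lt_card_sub_one _ e (by rw [ZMod.card]; omega)
  rcases Nat.eq_or_lt_of_le hge with heq | hgt
  · rw [if_pos heq.symm, ← heq]
    have hpt : ∀ x : ZMod p, x^(p-1) = if x = 0 then 0 else 1 - 0 := by
      intro x
      split_ifs with h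
      · subst h; exact zero_pow (by omega)
      · rw [ZMod.pow_card_sub_one_eq_one h, sub_zero]
    have hpt2 : ∀ x : ZMod p, x^(p-1) = 1 - (if x = 0 then 1 else 0) := by
      intro x
      rw [hpt x]
      split_ifs <;> ring
    rw [Finset.sum_congr rfl (fun x _ => hpt2 x), Finset.sum_sub_distrib,
      Finset.sum_const, Finset.card_univ, ZMod.card, nsmul_eq_mul, mul_one,
      ZMod.natCast_self, Finset.sum_ite_eq' Finset.univ (0 : ZMod p) (fun _ => (1 : ZMod p))]
    simp
  · rw [if_neg (by omega)]
    have hpt : ∀ x : ZMod p, x^e = x^(e - (p-1)) := by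
      intro x
      by_cases h : x = 0
      · subst h; rw [zero_pow (by omega), zero_pow (by omega)]
      · have he : x^e = x^((e - (p-1)) + (p-1)) := by congr 1; omega
        rw [he, pow_add, ZMod.pow_card_sub_one_eq_one h, mul_one]
    rw [Finset.sum_congr rfl (fun x _ => hpt x)]
    exact FiniteField.sum_pow_lt_card_sub_one _ _ (by rw [ZMod.card]; omega)

lemma C2sum (hp : 3 < p) (m n : ℕ) (hm : 2*m+1 = p) (hmn : m = 2*n ∨ m = 2*n+1) (t : ZMod p) :
    ∑ z : ZMod p, ((z+1)*(t*z^2-1))^m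
      = -∑ k ∈ range (n+1), (-1 : ZMod p)^k * ((m.choose (2*k) : ℕ) : ZMod p)
          * ((m.choose k : ℕ) : ZMod p) * t^(m-k) := by
  have hm2 : 2 ≤ m := by omega
  have expand : ∀ z : ZMod p, ((z+1)*(t*z^2-1))^m
      = ∑ i ∈ range (m+1), ∑ j ∈ range (m+1),
        ((m.choose i : ℕ) : ZMod p) * ((m.choose j : ℕ) : ZMod p) * (-1)^(m-j) * t^j
          * z^(i+2*j) := by
    intro z
    rw [mul_pow, add_pow z 1 m, sub_eq_add_neg, add_pow (t*z^2) (-1) m, Finset.sum_mul_sum]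
    apply Finset.sum_congr rfl
    intro i _
    apply Finset.sum_congr rfl
    intro j _
    rw [mul_pow t (z^2) j, ← pow_mul, pow_add]
    ring
  rw [Finset.sum_congr rfl (fun z _ => expand z), Finset.sum_comm]
  have swap2 : ∀ i ∈ range (m+1), (∑ z : ZMod p, ∑ j ∈ range (m+1),
      ((m.choose i : ℕ) : ZMod p) * ((m.choose j : ℕ) : ZMod p) * (-1)^(m-j) * t^j * z^(i+2*j))
      = ∑ j ∈ range (m+1), (if i = 2*m-2*j ∧ 2*j ≥ m then
          -(((m.choose i : ℕ) : ZMod p) * ((m.choose j : ℕ) : ZMod p) * (-1)^(m-j) * t^j)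
          else 0) := by
    intro i hi
    rw [Finset.mem_range] at hi
    rw [Finset.sum_comm]
    apply Finset.sum_congr rfl
    intro j hj
    rw [Finset.mem_range] at hj
    rw [← Finset.mul_sum, sum_pow_eq hp (i+2*j) (by omega)]
    have hcond : (i + 2*j = p - 1) ↔ (i = 2*m-2*j ∧ 2*j ≥ m) := by omega
    split_ifs with h1 h2 h2
    · ring
    · exact absurd (hcond.mp h1) h2
    · exact absurd (hcond.mpr h2) h1
    · ring
  rw [Finset.sum_congr rfl swap2, Finset.sum_comm]
  -- now : ∑ j ∈ range (m+1), ∑ i ∈ range (m+1), if i = 2*m-2*j ∧ m ≤ 2*j then ... else 0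
  have inner : ∀ j ∈ range (m+1), (∑ i ∈ range (m+1),
      if i = 2*m-2*j ∧ 2*j ≥ m then
        -(((m.choose i : ℕ) : ZMod p) * ((m.choose j : ℕ) : ZMod p) * (-1)^(m-j) * t^j) else 0)
      = (if 2*j ≥ m then
        -(((m.choose (2*m-2*j) : ℕ) : ZMod p) * ((m.choose j : ℕ) : ZMod p) * (-1)^(m-j) * t^j)
        else 0) := by
    intro j hj
    rw [Finset.mem_range] at hj
    by_cases hc : 2*j ≥ m
    · rw [if_pos hc]
      rw [Finset.sum_eq_single (2*m-2*j)]
      · rw [if_pos ⟨rfl, hc⟩]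
      · intro i _ hne
        rw [if_neg (by tauto)]
      · intro habs
        exact absurd (Finset.mem_range.mpr (by omega)) habs
    · rw [if_neg hc]
      apply Finset.sum_eq_zero
      intro i _
      rw [if_neg (by tauto)]
  rw [Finset.sum_congr rfl inner, ← Finset.sum_range_reflect]
  rw [← Finset.sum_neg_distrib]
  rw [show m + 1 - 1 = m from rfl]
  have step : ∀ k ∈ range (m+1), (if 2*(m-k) ≥ m then
      -(((m.choose (2*m-2*(m-k)) : ℕ) : ZMod p) * ((m.choose (m-k) : ℕ) : ZMod p)
        * (-1)^(m-(m-k)) * t^(m-k)) else 0)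
      = (if k ≤ n then
        -((-1 : ZMod p)^k * ((m.choose (2*k) : ℕ) : ZMod p) * ((m.choose k : ℕ) : ZMod p)
          * t^(m-k)) else 0) := by
    intro k hk
    rw [Finset.mem_range] at hk
    by_cases hc : k ≤ n
    · rw [if_pos (by omega), if_pos hc]
      rw [show 2*m-2*(m-k) = 2*k by omega, show m-(m-k) = k by omega,
        Nat.choose_symm (by omega : k ≤ m)]
      ring
    · rw [if_neg (by omega), if_neg hc]
  rw [Finset.sum_congr rfl step,
    ← Finset.sum_subset (Finset.range_subset_range.mpr (by omega : n+1 ≤ m+1))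
      (fun k _ hk2 => by rw [Finset.mem_range] at hk2; rw [if_neg (by omega)])]
  apply Finset.sum_congr rfl
  intro k hk
  rw [Finset.mem_range] at hk
  rw [if_pos (by omega : k ≤ n)]

end partD

theorem stmt_0 (p : ℕ) [Fact p.Prime] (hp : 3 < p) (t : ZMod p) (ht : t ≠ 0) :
    legP (p / 4) (2 / t - 1)
        = ∑ k ∈ Finset.range (p / 4 + 1),
            (((4 * k).choose (2 * k) : ℕ) : ZMod p) * (((2 * k).choose k : ℕ) : ZMod p) *
              ((t - 1) / (64 * t)) ^ k
      ∧ legP (p / 4) (2 / t - 1)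
        = (-1 : ZMod p) ^ (p / 4) * ∑ k ∈ Finset.range (p / 4 + 1),
            (((4 * k).choose (2 * k) : ℕ) : ZMod p) * (((2 * k).choose k : ℕ) : ZMod p) *
              ((64 * t)⁻¹) ^ k
      ∧ legP (p / 4) (2 / t - 1)
        = -(-6 * t) ^ ((p - 1) / 2) *
            ∑ x : ZMod p, (t * x ^ 3 - 3 * (t + 3) * x + 2 * (t - 9)) ^ ((p - 1) / 2)
      ∧ ∀ s : ZMod p, s ^ 2 = t →
          legP (p / 4) (2 / t - 1) = s ^ ((p - 1) / 2) * legP ((p - 1) / 2) s := by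
  have hP : p.Prime := Fact.out
  have hodd : p % 2 = 1 := Nat.odd_iff.mp (hP.odd_of_ne_two (by omega))
  set n := p / 4 with hndef
  set m := (p - 1) / 2 with hmdef
  have hm : 2*m+1 = p := by omega
  have hn : 4*n+1 = p ∨ 4*n+3 = p := by omega
  have hmn : m = 2*n ∨ m = 2*n+1 := by omega
  have h2ne : (2 : ZMod p) ≠ 0 := by
    have := ncast_ne (p := p) 2 (by omega) (by omega); simpa using this
  have h3ne : (3 : ZMod p) ≠ 0 := by
    have := ncast_ne (p := p) 3 (by omega) (by omega); simpa using this
  have h64ne : (64 : ZMod p) ≠ 0 := by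
    have : (64 : ZMod p) = 2^6 := by norm_num
    rw [this]; exact pow_ne_zero _ h2ne
  have hx : 2 / t - 1 = 2 * t⁻¹ - 1 := by rw [div_eq_mul_inv]
  have hcsymm : ∀ k : ℕ, (n+k).choose n = (n+k).choose k := by
    intro k
    rw [← Nat.choose_symm (Nat.le_add_left k n)]
    congr 1
    omega
  -- H1
  have H1 : legP n (2 * t⁻¹ - 1) = ∑ k ∈ range (n + 1),
      (n.choose k : ZMod p) * (((n + k).choose n : ℕ) : ZMod p) * (t⁻¹ - 1) ^ k :=
    legP_shifted h2ne n t⁻¹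
  -- H2
  have H2 : legP n (2 * t⁻¹ - 1) = (-1 : ZMod p)^n * ∑ k ∈ range (n + 1),
      (n.choose k : ZMod p) * (((n + k).choose n : ℕ) : ZMod p) * (-t⁻¹) ^ k := by
    have e1 := legP_neg n (2*t⁻¹-1)
    have e2 : -(2*t⁻¹-1) = 2*(1-t⁻¹) - 1 := by ring
    rw [e2, legP_shifted h2ne n (1-t⁻¹)] at e1
    rw [show (1 : ZMod p) - t⁻¹ - 1 = -t⁻¹ by ring] at e1
    have hsign : (-1 : ZMod p)^n * (-1 : ZMod p)^n = 1 := by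
      rw [← pow_add]; exact Even.neg_one_pow ⟨n, rfl⟩
    linear_combination (-(-1 : ZMod p)^n) * e1 + (-(legP n (2*t⁻¹-1))) * hsign
  have hsgn : (-2 : ZMod p)^m = (-1 : ZMod p)^n := by
    rw [show (-2 : ZMod p) = (-1) * 2 by ring, mul_pow, L5 hp n m hn hm, ← pow_add,
      show m + (m + n) = 2*m + n by ring, pow_add, pow_mul]
    norm_num
  have ht2m : t^(2*m) = 1 := by
    rw [show 2*m = p - 1 by omega]
    exact ZMod.pow_card_sub_one_eq_one ht
  constructor
  · -- part (1)
    rw [hx, H1]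
    apply Finset.sum_congr rfl
    intro k hk
    rw [Finset.mem_range] at hk
    rw [ch2 hp n hn k (by omega), hcsymm k]
    have hb : (t⁻¹ - 1 : ZMod p)^k = (-64 : ZMod p)^k * ((t-1)/(64*t))^k := by
      rw [← mul_pow]
      congr 1
      field_simp
      ring
    rw [hb]
    ring
  constructor
  · -- part (2)
    rw [hx, H2]
    congr 1
    apply Finset.sum_congr rfl
    intro k hk
    rw [Finset.mem_range] at hk
    rw [ch2 hp n hn k (by omega), hcsymm k]
    have hb : (-t⁻¹ : ZMod p)^k = (-64 : ZMod p)^k * ((64*t)⁻¹)^k := by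
      rw [← mul_pow]
      congr 1
      rw [mul_inv]
      field_simp
    rw [hb]
    ring
  constructor
  · -- part (3)
    rw [hx]
    have hS1 : (∑ x : ZMod p, (t * x ^ 3 - 3 * (t + 3) * x + 2 * (t - 9)) ^ m)
        = ∑ x : ZMod p, ((x+2)*(t*(x-1)^2-9))^m := by
      apply Finset.sum_congr rfl
      intro x _
      congr 1
      ring
    have hS2 : (∑ x : ZMod p, ((x+2)*(t*(x-1)^2-9))^m)
        = ∑ y : ZMod p, ((y+3)*(t*y^2-9))^m := by
      rw [← Equiv.sum_comp (Equiv.addRight (1 : ZMod p))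
        (fun x => ((x+2)*(t*(x-1)^2-9))^m)]
      apply Finset.sum_congr rfl
      intro y _
      simp only [Equiv.coe_addRight]
      congr 1
      ring
    have hS3 : (∑ y : ZMod p, ((y+3)*(t*y^2-9))^m)
        = ∑ z : ZMod p, 27^m * ((z+1)*(t*z^2-1))^m := by
      rw [← Equiv.sum_comp (Equiv.mulLeft₀ (3 : ZMod p) h3ne)
        (fun y => ((y+3)*(t*y^2-9))^m)]
      apply Finset.sum_congr rfl
      intro z _
      simp only [Equiv.mulLeft₀_apply]
      rw [show (3*z+3)*(t*(3*z)^2-9) = 27*((z+1)*(t*z^2-1)) by ring, mul_pow]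
    have h81 : (81 : ZMod p)^m = 1 := by
      have e1 : (81 : ZMod p)^m = ((3 : ZMod p)^(2*m))^2 := by
        rw [← pow_mul, show (81 : ZMod p) = 3^4 by norm_num, ← pow_mul]
        congr 1
        ring
      rw [e1, show 2*m = p-1 by omega, ZMod.pow_card_sub_one_eq_one h3ne, one_pow]
    have hpow : (-6*t : ZMod p)^m * 27^m = (-2*t)^m := by
      rw [← mul_pow, show (-6*t : ZMod p)*27 = (-2*t)*81 by ring, mul_pow, h81, mul_one]
    rw [hS1, hS2, hS3, ← Finset.mul_sum, C2sum hp m n hm hmn t]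
    have hre : -(-6*t : ZMod p)^m * (27^m * -(∑ k ∈ range (n+1),
        (-1 : ZMod p)^k * ((m.choose (2*k) : ℕ) : ZMod p) * ((m.choose k : ℕ) : ZMod p) * t^(m-k)))
        = ((-2 : ZMod p)^m * t^m) * (∑ k ∈ range (n+1),
        (-1 : ZMod p)^k * ((m.choose (2*k) : ℕ) : ZMod p) * ((m.choose k : ℕ) : ZMod p) * t^(m-k)) := by
      rw [show ((-2 : ZMod p)^m * t^m) = (-2*t : ZMod p)^m by rw [mul_pow], ← hpow]
      ring
    rw [hre, Finset.mul_sum]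
    have hterm : ∀ k ∈ range (n+1), ((-2 : ZMod p)^m * t^m) *
        ((-1 : ZMod p)^k * ((m.choose (2*k) : ℕ) : ZMod p) * ((m.choose k : ℕ) : ZMod p) * t^(m-k))
        = (-1 : ZMod p)^n * ((n.choose k : ZMod p) * (((n + k).choose n : ℕ) : ZMod p) * (-t⁻¹) ^ k) := by
      intro k hk
      rw [Finset.mem_range] at hk
      have hkn : k ≤ n := by omega
      have h4 : t^m * t^(m-k) = (t^k)⁻¹ := by
        apply eq_inv_of_mul_eq_one_left
        rw [mul_assoc, ← pow_add, ← pow_add, show m + ((m-k) + k) = 2*m by omega]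
        exact ht2m
      have h2' : (-t⁻¹ : ZMod p)^k = (-1 : ZMod p)^k * (t^k)⁻¹ := by
        rw [neg_pow, inv_pow]
      have ch4k := ch4 hp n m hn hm k hkn
      rw [hcsymm k, h2']
      linear_combination (t^m * (-1 : ZMod p)^k * ((m.choose (2*k) : ℕ) : ZMod p)
          * ((m.choose k : ℕ) : ZMod p) * t^(m-k)) * hsgn
        + ((-1 : ZMod p)^n * (-1 : ZMod p)^k * ((m.choose (2*k) : ℕ) : ZMod p)
          * ((m.choose k : ℕ) : ZMod p)) * h4
        + ((-1 : ZMod p)^n * (-1 : ZMod p)^k * (t^k)⁻¹) * ch4k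
    rw [Finset.sum_congr rfl hterm, ← Finset.mul_sum, ← H2]
  · -- part (4)
    intro s hs
    rw [hx]
    have hsne : s ≠ 0 := by
      intro h
      rw [h] at hs
      simp at hs
      exact ht hs.symm
    have hts : t^m = 1 := by
      rw [← hs, ← pow_mul, show 2*m = p-1 by omega]
      exact ZMod.pow_card_sub_one_eq_one hsne
    have hinv : Ring.inverse (2 : ZMod p) = 2⁻¹ := by simp [Ring.inverse_eq_inv']
    have hi2 : ((2 : ZMod p)⁻¹)^m = (2 : ZMod p)^m := by
      rw [inv_pow]
      apply inv_eq_of_mul_eq_one_right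
      rw [← pow_add, show m + m = p - 1 by omega]
      exact ZMod.pow_card_sub_one_eq_one h2ne
    rw [H2]
    symm
    rw [legP, hinv, show m/2 = n by omega, Finset.mul_sum, Finset.mul_sum]
    have hterm4 : ∀ k ∈ range (n+1), s^m * ((2 : ZMod p)⁻¹^m *
        ((-1 : ZMod p)^k * (m.choose k : ZMod p) * (((2*m - 2*k).choose m : ℕ) : ZMod p) * s^(m-2*k)))
        = (-1 : ZMod p)^n * ((n.choose k : ZMod p) * (((n + k).choose n : ℕ) : ZMod p) * (-t⁻¹) ^ k) := by
      intro k hk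
      rw [Finset.mem_range] at hk
      have hkn : k ≤ n := by omega
      have h2k : 2*k ≤ m := by omega
      have e1 : s^m * s^(m-2*k) = t^(m-k) := by
        rw [← pow_add, show m+(m-2*k) = 2*(m-k) by omega, pow_mul, hs]
      have e2 : t^(m-k) = (t^k)⁻¹ := by
        apply eq_inv_of_mul_eq_one_left
        rw [← pow_add, show (m-k)+k = m by omega]
        exact hts
      have h2' : (-t⁻¹ : ZMod p)^k = (-1 : ZMod p)^k * (t^k)⁻¹ := by
        rw [neg_pow, inv_pow]
      have hsgn2 : (-1 : ZMod p)^m * (2 : ZMod p)^m = (-1 : ZMod p)^n := by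
        rw [← mul_pow, show ((-1 : ZMod p))*2 = -2 by ring, hsgn]
      have ch4k := ch4 hp n m hn hm k hkn
      have e3 : s^m * s^(m-2*k) = (t^k)⁻¹ := by rw [e1, e2]
      rw [ch6 hp m k hm h2k, hcsymm k, hi2, h2']
      linear_combination ((2 : ZMod p)^m * (-1 : ZMod p)^k * (-1 : ZMod p)^m
          * ((m.choose k : ℕ) : ZMod p) * ((m.choose (2*k) : ℕ) : ZMod p)) * e3
        + ((-1 : ZMod p)^k * ((m.choose (2*k) : ℕ) : ZMod p) * ((m.choose k : ℕ) : ZMod p)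
          * (t^k)⁻¹) * hsgn2
        + ((-1 : ZMod p)^n * (-1 : ZMod p)^k * (t^k)⁻¹) * ch4k
    rw [Finset.sum_congr rfl hterm4, ← Finset.mul_sum, ← H2]
end

section
/- Let p > 3 be a prime and let t be any element of ℤ/pℤ. Then in ℤ/pℤ: P_{⌊p/4⌋}(t) = Σ_{k=0}^{⌊p/4⌋} C(4k,2k)·C(2k,k)·((1−t)/128)^k = −6^{(p−1)/2}·Σ_{x ∈ ℤ/pℤ} (x³ − (3/2)·(3t+5)·x + 9t + 7)^{(p−1)/2}. -/
open Finset Polynomial Nat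

lemma oddprod_mul (K : ℕ) : (∏ i ∈ range K, (2*i+1)) * 2^K * K ! = (2*K)! := by
  induction K with
  | zero => simp
  | succ K ih =>
    have h2 : (2*(K+1))! = (2*K+2) * ((2*K+1) * (2*K)!) := by
      rw [show 2*(K+1) = (2*K+1)+1 by ring, Nat.factorial_succ, show (2*K+1) = (2*K)+1 from rfl,
        Nat.factorial_succ]
    rw [prod_range_succ, pow_succ, Nat.factorial_succ, h2, ← ih]
    ring

lemma oddsplit (k : ℕ) :
    (∏ i ∈ range (2*k), (2*i+1)) = (∏ i ∈ range k, (4*i+1)) * (∏ i ∈ range k, (4*i+3)) := by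
  induction k with
  | zero => simp
  | succ k ih =>
    rw [show 2*(k+1) = (2*k)+1+1 by ring, prod_range_succ, prod_range_succ, ih,
      prod_range_succ, prod_range_succ]
    ring

noncomputable def Apoly (n : ℕ) : Polynomial ℤ :=
  ∑ k ∈ range (n+1), C ((-1)^k * (n.choose k) * ((2*n-2*k).choose n) : ℤ) * X^(n-2*k)

noncomputable def Bpoly (n : ℕ) : Polynomial ℤ :=
  ∑ k ∈ range (n+1), C ((n.choose k : ℤ) * ((n+k).choose k)) * X^k

lemma deriv_A (n : ℕ) :
    derivative^[n] (((X:ℤ[X])^2 - 1)^n) = C (n ! : ℤ) * Apoly n := by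
  have h1 : ((X:ℤ[X])^2 - 1)^n
      = ∑ k ∈ range (n+1), C ((-1:ℤ)^k * (n.choose k)) * X^(2*(n-k)) := by
    rw [sub_eq_add_neg, add_pow, ← Finset.sum_range_reflect]
    apply Finset.sum_congr rfl
    intro k hk
    have hk' : k ≤ n := by simpa using Nat.lt_succ_iff.mp (mem_range.mp hk)
    rw [Nat.add_sub_cancel, Nat.sub_sub_self hk', Nat.choose_symm hk']
    rw [← pow_mul]
    have : (-1 : ℤ[X]) ^ k = C ((-1 : ℤ)^k) := by
      simp [C_neg]
    rw [this, map_mul, C_eq_natCast]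
    ring
  rw [h1, iterate_derivative_sum, Apoly, Finset.mul_sum]
  apply Finset.sum_congr rfl
  intro k hk
  have hk' : k ≤ n := Nat.lt_succ_iff.mp (mem_range.mp hk)
  rw [iterate_derivative_C_mul, iterate_derivative_X_pow_eq_C_mul,
    descFactorial_eq_factorial_mul_choose]
  have e1 : 2*(n-k) = 2*n - 2*k := by omega
  have e2 : 2*(n-k) - n = n - 2*k := by omega
  rw [e1, show 2*n-2*k-n = n - 2*k by omega]
  simp only [← C_mul, Nat.cast_mul, mul_comm, mul_left_comm, mul_assoc]

lemma deriv_B (n : ℕ) :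
    derivative^[n] (((X:ℤ[X])^2 + X)^n) = C (n ! : ℤ) * Bpoly n := by
  have h1 : ((X:ℤ[X])^2 + X)^n = ∑ k ∈ range (n+1), C ((n.choose k : ℤ)) * X^(n+k) := by
    rw [add_pow]
    apply Finset.sum_congr rfl
    intro k hk
    have hk' : k ≤ n := Nat.lt_succ_iff.mp (mem_range.mp hk)
    rw [← pow_mul, ← pow_add, C_eq_natCast]
    rw [show 2*k + (n-k) = n + k by omega]
    ring
  rw [h1, iterate_derivative_sum, Bpoly, Finset.mul_sum]
  apply Finset.sum_congr rfl
  intro k hk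
  rw [iterate_derivative_C_mul, iterate_derivative_X_pow_eq_C_mul,
    descFactorial_eq_factorial_mul_choose]
  rw [show n + k - n = k by omega, show (n+k).choose n = (n+k).choose k from
    by rw [← Nat.choose_symm (Nat.le_add_right n k), Nat.add_sub_cancel_left]]
  simp only [← C_mul, Nat.cast_mul, mul_comm, mul_left_comm, mul_assoc]

lemma iter_deriv_comp_affine (j : ℕ) (q : ℤ[X]) :
    derivative^[j] (q.comp (C 2 * X + 1)) = (2:ℤ[X])^j * ((derivative^[j] q).comp (C 2 * X + 1)) := by
  induction j generalizing q with
  | zero => simp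
  | succ j ih =>
    rw [Function.iterate_succ_apply, derivative_comp]
    have hd : derivative (C 2 * X + 1 : ℤ[X]) = C 2 := by simp
    rw [hd, iterate_derivative_C_mul, ih, ← Function.iterate_succ_apply]
    have hc : (C 2 : ℤ[X]) = 2 := by norm_num
    rw [hc, pow_succ]
    ring

lemma keyB (n : ℕ) : C ((2:ℤ)^n) * Bpoly n = (Apoly n).comp (C 2 * X + 1) := by
  have hcomp : ((((X:ℤ[X])^2 - 1)^n).comp (C 2 * X + 1)) = C ((4:ℤ)^n) * ((X:ℤ[X])^2 + X)^n := by
    rw [pow_comp, sub_comp, pow_comp, X_comp, one_comp]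
    have hc2 : (C 2 : ℤ[X]) = 2 := by norm_num
    have hc4 : (C 4 : ℤ[X]) = 4 := by norm_num
    rw [show ((C 2 * X + 1 : ℤ[X])^2 - 1) = C 4 * (X^2 + X) by rw [hc2, hc4]; ring]
    rw [mul_pow, ← C_pow]
  have h1 := iter_deriv_comp_affine n (((X:ℤ[X])^2 - 1)^n)
  rw [hcomp, deriv_A, iterate_derivative_C_mul, deriv_B, mul_comp, C_comp,
    show ((2:ℤ[X])^n) = C ((2:ℤ)^n) by rw [C_pow]; norm_num] at h1
  have hC : (C ((n:ℕ)! : ℤ)) ≠ 0 := by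
    simp only [ne_eq, C_eq_zero]
    exact_mod_cast (Nat.factorial_pos n).ne'
  have h2 : C ((n:ℕ)! : ℤ) * (C ((4:ℤ)^n) * Bpoly n)
      = C ((n:ℕ)! : ℤ) * (C ((2:ℤ)^n) * (Apoly n).comp (C 2 * X + 1)) := by
    linear_combination h1
  have h3 := mul_left_cancel₀ hC h2
  have h2' : (C ((2:ℤ)^n)) ≠ 0 := by
    simp only [ne_eq, C_eq_zero]
    positivity
  apply mul_left_cancel₀ h2'
  rw [← h3, ← mul_assoc, ← C_mul, ← mul_pow]
  norm_num

lemma legP_eq_shift {p : ℕ} [Fact p.Prime] (hp : 3 < p) (n : ℕ) (t : ZMod p) :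
    legP n t = ∑ k ∈ range (n+1),
      (n.choose k : ZMod p) * ((n+k).choose k : ZMod p) * ((t-1) * (2:ZMod p)⁻¹)^k := by
  have h2 : (2 : ZMod p) ≠ 0 := by
    rw [show (2 : ZMod p) = ((2:ℕ) : ZMod p) by norm_cast, Ne, ZMod.natCast_eq_zero_iff]
    intro h
    exact absurd (Nat.le_of_dvd (by norm_num) h) (by omega)
  set y : ZMod p := (t-1) * (2:ZMod p)⁻¹ with hy
  have h := congrArg (Polynomial.aeval y) (keyB n)
  rw [map_mul, aeval_C, aeval_comp] at h
  have hyt : Polynomial.aeval y (C 2 * X + 1 : ℤ[X]) = t := by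
    simp only [map_add, map_mul, aeval_C, aeval_X, map_one, map_ofNat, algebraMap_int_eq,
      eq_intCast, Int.cast_ofNat]
    rw [hy]
    field_simp
    ring
  rw [hyt] at h
  have hB : Polynomial.aeval y (Bpoly n)
      = ∑ k ∈ range (n+1), (n.choose k : ZMod p) * ((n+k).choose k : ZMod p) * y^k := by
    rw [Bpoly, map_sum]
    apply Finset.sum_congr rfl
    intro k _
    rw [map_mul, aeval_C, map_pow, aeval_X]
    push_cast
    ring
  have hA : Polynomial.aeval t (Apoly n)
      = ∑ k ∈ range (n+1),
          (-1 : ZMod p)^k * (n.choose k : ZMod p) * ((2*n-2*k).choose n : ZMod p) * t^(n-2*k) := by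
    rw [Apoly, map_sum]
    apply Finset.sum_congr rfl
    intro k _
    rw [map_mul, aeval_C, map_pow, aeval_X]
    push_cast
    ring
  rw [hA, hB, map_pow, algebraMap_int_eq] at h
  have h' : (2:ZMod p)^n * (∑ k ∈ range (n+1),
        (n.choose k : ZMod p) * ((n+k).choose k : ZMod p) * y^k)
      = ∑ k ∈ range (n+1),
          (-1 : ZMod p)^k * (n.choose k : ZMod p) * ((2*n-2*k).choose n : ZMod p) * t^(n-2*k) := by
    rw [← h]
    norm_num
  -- legP unfold
  rw [legP, Ring.inverse_eq_inv']
  have hext : ∑ k ∈ Finset.range (n / 2 + 1),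
      (-1 : ZMod p) ^ k * (n.choose k : ZMod p) * (((2 * n - 2 * k).choose n : ℕ) : ZMod p) * t ^ (n - 2 * k)
      = ∑ k ∈ range (n+1),
          (-1 : ZMod p)^k * (n.choose k : ZMod p) * ((2*n-2*k).choose n : ZMod p) * t^(n-2*k) := by
    apply Finset.sum_subset
    · apply Finset.range_subset_range.mpr
      omega
    · intro k hk1 hk2
      have : 2*n - 2*k < n := by
        simp only [mem_range] at hk1 hk2
        omega
      rw [Nat.choose_eq_zero_of_lt this]
      push_cast
      ring
  rw [hext, ← h', ← mul_assoc, inv_pow, inv_mul_cancel₀ (pow_ne_zero n h2), one_mul]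

lemma prod_desc (p : ℕ) [Fact p.Prime] (N k : ℕ) (hkN : k ≤ N) :
    ((k ! * N.choose k : ℕ) : ZMod p) = ∏ i ∈ range k, ((N : ZMod p) - (i : ℕ)) := by
  rw [← Nat.descFactorial_eq_factorial_mul_choose, Nat.descFactorial_eq_prod_range,
    Nat.cast_prod]
  exact Finset.prod_congr rfl fun i hi => by
    rw [Nat.cast_sub (le_trans (Nat.le_of_lt_succ (Nat.lt_succ_of_lt (mem_range.mp hi))) hkN)]

lemma h4n (p : ℕ) [Fact p.Prime] : (4 : ZMod p) * ((p/4 : ℕ) : ZMod p) = -((p % 4 : ℕ) : ZMod p) := by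
  have h : (((4 * (p/4) + p % 4 : ℕ)) : ZMod p) = 0 := by
    rw [Nat.div_add_mod]; exact ZMod.natCast_self p
  push_cast at h
  linear_combination h

lemma hrodd (p : ℕ) [Fact p.Prime] (hp : 3 < p) : p % 4 = 1 ∨ p % 4 = 3 := by
  have hodd : Odd p := Nat.Prime.odd_of_ne_two (Fact.out) (by omega)
  obtain ⟨c, hc⟩ := hodd
  omega

section
variable {p : ℕ} [Fact p.Prime]

lemma K1 (hp : 3 < p) (k : ℕ) (hk : k ≤ p / 4) :
    ((p/4).choose k : ZMod p) * (((p/4 + k).choose k : ℕ) : ZMod p) * 64^k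
        * ((k ! : ℕ) : ZMod p)^2 * (((2*k)! : ℕ) : ZMod p)
      = (-1)^k * (((4*k)! : ℕ) : ZMod p) := by
  set n := p / 4 with hn
  set r := p % 4 with hrdef
  have c1 : ((k ! : ℕ) : ZMod p) * (n.choose k : ℕ) * 4^k
      = (-1)^k * ∏ i ∈ range k, (4*(i:ZMod p) + (r : ℕ)) := by
    have := prod_desc p n k hk
    push_cast at this
    calc ((k ! : ℕ) : ZMod p) * (n.choose k : ℕ) * 4^k
        = (∏ i ∈ range k, ((n : ZMod p) - (i:ℕ))) * ∏ _i ∈ range k, (4:ZMod p) := by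
          rw [← this, Finset.prod_const, card_range]
      _ = ∏ i ∈ range k, (((n : ZMod p) - (i:ℕ)) * 4) := by rw [← Finset.prod_mul_distrib]
      _ = ∏ i ∈ range k, ((-1) * (4*(i:ZMod p) + (r : ℕ))) := by
          apply Finset.prod_congr rfl
          intro i _
          have h4 := h4n p
          linear_combination h4
      _ = (-1)^k * ∏ i ∈ range k, (4*(i:ZMod p) + (r : ℕ)) := by
          rw [Finset.prod_mul_distrib, Finset.prod_const, card_range]
  have c2 : ((k ! : ℕ) : ZMod p) * ((n+k).choose k : ℕ) * 4^k
      = ∏ i ∈ range k, (4*(i:ZMod p) + 4 - (r : ℕ)) := by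
    have hd := prod_desc p (n+k) k (Nat.le_add_left k n)
    push_cast at hd
    calc ((k ! : ℕ) : ZMod p) * ((n+k).choose k : ℕ) * 4^k
        = (∏ i ∈ range k, ((n : ZMod p) + (k:ℕ) - (i:ℕ))) * ∏ _i ∈ range k, (4:ZMod p) := by
          rw [← hd, Finset.prod_const, card_range]
      _ = ∏ i ∈ range k, (((n : ZMod p) + (k:ℕ) - (i:ℕ)) * 4) := by
          rw [← Finset.prod_mul_distrib]
      _ = ∏ i ∈ range k, (((n : ZMod p) + (k:ℕ) - ((k - 1 - i : ℕ):ZMod p)) * 4) := by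
          rw [← Finset.prod_range_reflect]
      _ = ∏ i ∈ range k, (4*(i:ZMod p) + 4 - (r : ℕ)) := by
          apply Finset.prod_congr rfl
          intro i hi
          have hik : i < k := mem_range.mp hi
          have hc : ((k - 1 - i : ℕ) : ZMod p) = (k : ZMod p) - 1 - (i:ℕ) := by
            have e : (k - 1 - i : ℕ) + (i + 1) = k := by omega
            have := congrArg (fun x : ℕ => (x : ZMod p)) e
            push_cast at this
            linear_combination this
          rw [hc]
          have h4 := h4n p
          linear_combination h4
  have c3 : (∏ i ∈ range k, (4*(i:ZMod p) + (r : ℕ))) * (∏ i ∈ range k, (4*(i:ZMod p) + 4 - (r : ℕ)))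
      = ((∏ i ∈ range (2*k), (2*i+1) : ℕ) : ZMod p) := by
    rw [oddsplit, Nat.cast_mul, Nat.cast_prod, Nat.cast_prod]
    rcases hrodd p hp with h | h
    · rw [show ((r:ℕ) : ZMod p) = 1 by rw [← hrdef] at h; rw [h]; norm_num]
      congr 1
      · apply Finset.prod_congr rfl; intro i _; push_cast; ring
      · apply Finset.prod_congr rfl; intro i _; push_cast; ring
    · rw [show ((r:ℕ) : ZMod p) = 3 by rw [← hrdef] at h; rw [h]; norm_num, mul_comm]
      congr 1
      · apply Finset.prod_congr rfl; intro i _; push_cast; ring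
      · apply Finset.prod_congr rfl; intro i _; push_cast; ring
  have c4 : ((∏ i ∈ range (2*k), (2*i+1) : ℕ) : ZMod p) * (4^k * (((2*k)! : ℕ) : ZMod p))
      = (((4*k)! : ℕ) : ZMod p) := by
    have h := congrArg (fun x : ℕ => (x : ZMod p)) (oddprod_mul (2*k))
    simp only [Nat.cast_mul, Nat.cast_pow, Nat.cast_prod] at h
    rw [show 2*(2*k) = 4*k by ring] at h
    rw [← h]
    push_cast
    rw [show ((2:ZMod p))^(2*k) = 4^k by rw [pow_mul]; norm_num]
    ring
  calc ((p/4).choose k : ZMod p) * (((p/4 + k).choose k : ℕ) : ZMod p) * 64^k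
        * ((k ! : ℕ) : ZMod p)^2 * (((2*k)! : ℕ) : ZMod p)
      = (((k ! : ℕ) : ZMod p) * (n.choose k : ℕ) * 4^k)
        * (((k ! : ℕ) : ZMod p) * ((n+k).choose k : ℕ) * 4^k)
        * (4^k * (((2*k)! : ℕ) : ZMod p)) := by
        rw [show (64 : ZMod p)^k = 4^k*4^k*4^k by
          rw [show (64:ZMod p) = 4^3 by norm_num, ← pow_mul]; ring]
        ring
    _ = ((-1)^k * ∏ i ∈ range k, (4*(i:ZMod p) + (r : ℕ)))
        * (∏ i ∈ range k, (4*(i:ZMod p) + 4 - (r : ℕ)))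
        * (4^k * (((2*k)! : ℕ) : ZMod p)) := by rw [c1, c2]
    _ = (-1)^k * (((∏ i ∈ range k, (4*(i:ZMod p) + (r : ℕ)))
        * (∏ i ∈ range k, (4*(i:ZMod p) + 4 - (r : ℕ))))
        * (4^k * (((2*k)! : ℕ) : ZMod p))) := by ring
    _ = (-1)^k * (((∏ i ∈ range (2*k), (2*i+1) : ℕ) : ZMod p)
        * (4^k * (((2*k)! : ℕ) : ZMod p))) := by rw [c3]
    _ = (-1)^k * (((4*k)! : ℕ) : ZMod p) := by rw [c4]

lemma K2 (hp : 3 < p) (k : ℕ) (hk : 2*k ≤ (p-1)/2) :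
    ((((p-1)/2).choose (2*k) : ℕ) : ZMod p) * 16^k * (((2*k)! : ℕ) : ZMod p)^2
      = (((4*k)! : ℕ) : ZMod p) := by
  set m := (p-1)/2 with hm
  have hpodd : p % 2 = 1 := by
    have hodd : Odd p := Nat.Prime.odd_of_ne_two (Fact.out) (by omega)
    obtain ⟨c, hc⟩ := hodd; omega
  have h2m : (2 : ZMod p) * ((m : ℕ) : ZMod p) = -1 := by
    have he : 2 * m + 1 = p := by omega
    have := congrArg (fun x : ℕ => (x : ZMod p)) he
    push_cast at this
    rw [ZMod.natCast_self] at this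
    linear_combination this
  have c1 : (((2*k)! : ℕ) : ZMod p) * ((m.choose (2*k) : ℕ) : ZMod p) * 2^(2*k)
      = ((∏ i ∈ range (2*k), (2*i+1) : ℕ) : ZMod p) := by
    have hd := prod_desc p m (2*k) hk
    push_cast at hd
    calc (((2*k)! : ℕ) : ZMod p) * ((m.choose (2*k) : ℕ) : ZMod p) * 2^(2*k)
        = (∏ i ∈ range (2*k), ((m : ZMod p) - (i:ℕ))) * ∏ _i ∈ range (2*k), (2:ZMod p) := by
          rw [← hd, Finset.prod_const, card_range]
      _ = ∏ i ∈ range (2*k), (((m : ZMod p) - (i:ℕ)) * 2) := by rw [← Finset.prod_mul_distrib]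
      _ = ∏ i ∈ range (2*k), ((-1) * ((2*i+1 : ℕ) : ZMod p)) := by
          apply Finset.prod_congr rfl
          intro i _
          push_cast
          linear_combination h2m
      _ = (-1)^(2*k) * ∏ i ∈ range (2*k), ((2*i+1 : ℕ) : ZMod p) := by
          rw [Finset.prod_mul_distrib, Finset.prod_const, card_range]
      _ = ((∏ i ∈ range (2*k), (2*i+1) : ℕ) : ZMod p) := by
          rw [pow_mul]
          push_cast
          norm_num
  have c4 : ((∏ i ∈ range (2*k), (2*i+1) : ℕ) : ZMod p) * (4^k * (((2*k)! : ℕ) : ZMod p))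
      = (((4*k)! : ℕ) : ZMod p) := by
    have h := congrArg (fun x : ℕ => (x : ZMod p)) (oddprod_mul (2*k))
    simp only [Nat.cast_mul, Nat.cast_pow, Nat.cast_prod] at h
    rw [show 2*(2*k) = 4*k by ring] at h
    rw [← h]
    push_cast
    rw [show ((2:ZMod p))^(2*k) = 4^k by rw [pow_mul]; norm_num]
    ring
  calc ((m.choose (2*k) : ℕ) : ZMod p) * 16^k * (((2*k)! : ℕ) : ZMod p)^2
      = ((((2*k)! : ℕ) : ZMod p) * ((m.choose (2*k) : ℕ) : ZMod p) * 2^(2*k))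
        * (4^k * (((2*k)! : ℕ) : ZMod p)) := by
        rw [show (16 : ZMod p)^k = 2^(2*k)*4^k by
          rw [show (16:ZMod p) = 2^2*4 by norm_num, mul_pow, ← pow_mul, mul_comm 2 k]]
        ring
    _ = ((∏ i ∈ range (2*k), (2*i+1) : ℕ) : ZMod p) * (4^k * (((2*k)! : ℕ) : ZMod p)) := by
        rw [c1]
    _ = (((4*k)! : ℕ) : ZMod p) := by rw [c4]

lemma PS (e : ℕ) (he : 0 < e) (he2 : e < 2*(p-1)) :
    ∑ x : ZMod p, x^e = if e = p - 1 then (-1 : ZMod p) else 0 := by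
  classical
  have hp1 : 1 < p := (Fact.out : p.Prime).one_lt
  let emb : (ZMod p)ˣ ↪ ZMod p := ⟨Units.val, fun _ _ h => Units.ext h⟩
  have huniv : (univ.map emb) = univ \ {0} := by
    ext x
    simp only [mem_map, mem_univ, true_and, mem_sdiff, mem_singleton, emb,
      Function.Embedding.coeFn_mk]
    constructor
    · rintro ⟨u, rfl⟩
      exact u.ne_zero
    · intro hx
      exact ⟨(Units.mk0 x hx), rfl⟩
  have step : ∑ x : ZMod p, x ^ e = ∑ u : (ZMod p)ˣ, ((u:ZMod p))^e := by
    calc ∑ x : ZMod p, x ^ e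
        = ∑ x ∈ univ \ {(0 : ZMod p)}, x ^ e := by
          rw [← Finset.sum_sdiff (Finset.singleton_subset_iff.mpr (mem_univ (0:ZMod p))),
            Finset.sum_singleton, zero_pow he.ne', add_zero]
      _ = ∑ u : (ZMod p)ˣ, ((u:ZMod p))^e := by
          rw [← huniv, Finset.sum_map]
          rfl
  rw [step]
  have hs := FiniteField.sum_pow_units (ZMod p) e
  rw [ZMod.card] at hs
  rw [hs]
  congr 1
  simp only [eq_iff_iff]
  constructor
  · rintro ⟨c, rfl⟩
    rcases c with _ | _ | c
    · omega
    · omega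
    · exfalso
      have : 2*(p-1) ≤ (p-1) * (c+1+1) := by nlinarith [Nat.sub_pos_of_lt hp1]
      omega
  · rintro rfl
    exact ⟨1, (mul_one _).symm⟩

lemma sumS (hp : 3 < p) (c : ZMod p) :
    ∑ u : ZMod p, (u^3 + 6*u^2 + c*u)^((p-1)/2)
      = -∑ i ∈ range (p/4+1),
          ((((p-1)/2).choose (2*i) : ℕ) : ZMod p) * (((2*i).choose i : ℕ) : ZMod p)
            * 6^((p-1)/2 - 2*i) * c^i := by
  set m := (p-1)/2 with hm
  have hpodd : p % 2 = 1 := by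
    have hodd : Odd p := Nat.Prime.odd_of_ne_two (Fact.out) (by omega)
    obtain ⟨k, hk⟩ := hodd; omega
  have hm1 : 1 ≤ m := by omega
  have h2m : 2*m = p - 1 := by omega
  have hmn : p/4 ≤ m := by omega
  -- step 1: expansion of the integrand
  have step1 : ∀ u : ZMod p, (u^3 + 6*u^2 + c*u)^m
      = ∑ j ∈ range (m+1), ∑ i ∈ range (j+1),
          ((m.choose j : ℕ) : ZMod p) * ((j.choose i : ℕ) : ZMod p)
            * c^(j-i) * 6^(m-j) * u^(2*m - j + 2*i) := by
    intro u
    have hfac : u^3 + 6*u^2 + c*u = u * ((u^2 + c) + 6*u) := by ring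
    rw [hfac, mul_pow, add_pow, Finset.mul_sum]
    apply Finset.sum_congr rfl
    intro j hj
    have hjm : j ≤ m := Nat.lt_succ_iff.mp (mem_range.mp hj)
    rw [add_pow, Finset.sum_mul, Finset.sum_mul, Finset.mul_sum]
    apply Finset.sum_congr rfl
    intro i hi
    have hij : i ≤ j := Nat.lt_succ_iff.mp (mem_range.mp hi)
    rw [mul_pow, ← pow_mul]
    rw [show 2*m - j + 2*i = m + 2*i + (m-j) by omega, pow_add, pow_add]
    ring
  rw [Finset.sum_congr rfl (fun u _ => step1 u)]
  rw [Finset.sum_comm]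
  have step2 : ∀ j ∈ range (m+1),
      (∑ u : ZMod p, ∑ i ∈ range (j+1),
          ((m.choose j : ℕ) : ZMod p) * ((j.choose i : ℕ) : ZMod p)
            * c^(j-i) * 6^(m-j) * u^(2*m - j + 2*i))
      = ∑ i ∈ range (j+1), (if j = 2*i then
          -(((m.choose j : ℕ) : ZMod p) * ((j.choose i : ℕ) : ZMod p) * c^(j-i) * 6^(m-j))
          else 0) := by
    intro j hj
    have hjm : j ≤ m := Nat.lt_succ_iff.mp (mem_range.mp hj)
    rw [Finset.sum_comm]
    apply Finset.sum_congr rfl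
    intro i hi
    have hij : i ≤ j := Nat.lt_succ_iff.mp (mem_range.mp hi)
    rw [← Finset.mul_sum]
    rw [PS (2*m - j + 2*i) (by omega) (by omega)]
    by_cases h : j = 2*i
    · rw [if_pos h, if_pos (show 2*m - j + 2*i = p - 1 by omega)]
      ring
    · rw [if_neg h, if_neg (show ¬ (2*m - j + 2*i = p - 1) by omega)]
      ring
  rw [Finset.sum_congr rfl step2]
  have step3 : ∀ j ∈ range (m+1),
      (∑ i ∈ range (j+1), (if j = 2*i then
          -(((m.choose j : ℕ) : ZMod p) * ((j.choose i : ℕ) : ZMod p) * c^(j-i) * 6^(m-j))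
          else 0))
      = ∑ i ∈ range (m+1), (if j = 2*i then
          -(((m.choose j : ℕ) : ZMod p) * ((j.choose i : ℕ) : ZMod p) * c^(j-i) * 6^(m-j))
          else 0) := by
    intro j hj
    apply Finset.sum_subset
    · exact Finset.range_subset_range.mpr (by
        have := Nat.lt_succ_iff.mp (mem_range.mp hj); omega)
    · intro i hi1 hi2
      have hij : j < i := by
        simp only [mem_range] at hi1 hi2; omega
      rw [Nat.choose_eq_zero_of_lt hij]
      split_ifs <;> simp
  rw [Finset.sum_congr rfl step3, Finset.sum_comm]
  have step4 : ∀ i ∈ range (m+1),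
      (∑ j ∈ range (m+1), (if j = 2*i then
          -(((m.choose j : ℕ) : ZMod p) * ((j.choose i : ℕ) : ZMod p) * c^(j-i) * 6^(m-j))
          else 0))
      = (if 2*i < m+1 then
          -(((m.choose (2*i) : ℕ) : ZMod p) * (((2*i).choose i : ℕ) : ZMod p) * c^(2*i-i) * 6^(m-2*i))
          else 0) := by
    intro i _
    rw [Finset.sum_ite_eq' (range (m+1)) (2*i)
      (fun j => -(((m.choose j : ℕ) : ZMod p) * ((j.choose i : ℕ) : ZMod p) * c^(j-i) * 6^(m-j)))]
    simp only [mem_range]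
  rw [Finset.sum_congr rfl step4]
  have hsub : range (p/4+1) ⊆ range (m+1) := Finset.range_subset_range.mpr (by omega)
  rw [← Finset.sum_subset hsub (by
    intro i hi1 hi2
    simp only [mem_range] at hi1 hi2
    rw [if_neg (by omega)])]
  rw [Finset.sum_congr rfl (fun i hi => by
    have hi' : i < p/4+1 := mem_range.mp hi
    rw [if_pos (by omega : 2*i < m+1), show 2*i - i = i by omega])]
  rw [← Finset.sum_neg_distrib]
  exact Finset.sum_congr rfl fun i _ => by ring

end
section
variable {p : ℕ} [Fact p.Prime]

lemma factcast_ne {k : ℕ} (h : k < p) : ((k ! : ℕ) : ZMod p) ≠ 0 := by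
  rw [Ne, ZMod.natCast_eq_zero_iff]
  intro hd
  exact absurd ((Nat.Prime.dvd_factorial Fact.out).mp hd) (by omega)

lemma two_ne (hp : 3 < p) : (2 : ZMod p) ≠ 0 := by
  rw [show (2 : ZMod p) = ((2:ℕ) : ZMod p) by norm_cast, Ne, ZMod.natCast_eq_zero_iff]
  intro h
  exact absurd (Nat.le_of_dvd (by norm_num) h) (by omega)

lemma three_ne (hp : 3 < p) : (3 : ZMod p) ≠ 0 := by
  rw [show (3 : ZMod p) = ((3:ℕ) : ZMod p) by norm_cast, Ne, ZMod.natCast_eq_zero_iff]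
  intro h
  exact absurd (Nat.le_of_dvd (by norm_num) h) (by omega)

end

theorem stmt_1 (p : ℕ) [Fact p.Prime] (hp : 3 < p) (t : ZMod p) :
    legP (p / 4) t
        = ∑ k ∈ Finset.range (p / 4 + 1),
            (((4 * k).choose (2 * k) : ℕ) : ZMod p) * (((2 * k).choose k : ℕ) : ZMod p) *
              ((1 - t) / 128) ^ k
      ∧ legP (p / 4) t
        = -(6 : ZMod p) ^ ((p - 1) / 2) *
            ∑ x : ZMod p, (x ^ 3 - 3 / 2 * (3 * t + 5) * x + 9 * t + 7) ^ ((p - 1) / 2) := by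
  have hpodd : p % 2 = 1 := by
    have hodd : Odd p := Nat.Prime.odd_of_ne_two (Fact.out) (by omega)
    obtain ⟨w, hw⟩ := hodd; omega
  have h2 : (2 : ZMod p) ≠ 0 := two_ne hp
  have h3 : (3 : ZMod p) ≠ 0 := three_ne hp
  have h6 : (6 : ZMod p) ≠ 0 := by
    rw [show (6:ZMod p) = 2*3 by norm_num]; exact mul_ne_zero h2 h3
  have h128 : (128 : ZMod p) ≠ 0 := by
    rw [show (128:ZMod p) = 2^7 by norm_num]; exact pow_ne_zero _ h2
  have h64 : (64 : ZMod p) ≠ 0 := by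
    rw [show (64:ZMod p) = 2^6 by norm_num]; exact pow_ne_zero _ h2
  have h16 : (16 : ZMod p) ≠ 0 := by
    rw [show (16:ZMod p) = 2^4 by norm_num]; exact pow_ne_zero _ h2
  have conj1 : legP (p / 4) t
      = ∑ k ∈ Finset.range (p / 4 + 1),
          (((4 * k).choose (2 * k) : ℕ) : ZMod p) * (((2 * k).choose k : ℕ) : ZMod p) *
            ((1 - t) / 128) ^ k := by
    rw [legP_eq_shift hp (p/4) t]
    apply Finset.sum_congr rfl
    intro k hk
    have hk' : k ≤ p/4 := Nat.lt_succ_iff.mp (mem_range.mp hk)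
    have hF1 : ((k ! : ℕ) : ZMod p) ≠ 0 := factcast_ne (by omega)
    have hF2 : (((2*k)! : ℕ) : ZMod p) ≠ 0 := factcast_ne (by omega)
    have hw : (64:ZMod p)^k * ((k ! : ℕ):ZMod p)^2 * (((2*k)! : ℕ):ZMod p) * 2^k ≠ 0 :=
      mul_ne_zero (mul_ne_zero (mul_ne_zero (pow_ne_zero _ h64) (pow_ne_zero _ hF1)) hF2)
        (pow_ne_zero _ h2)
    apply mul_right_cancel₀ hw
    have hK1 := K1 hp k hk'
    have hc1 : (((2*k).choose k : ℕ) : ZMod p) * ((k ! : ℕ):ZMod p) * ((k ! : ℕ):ZMod p)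
        = (((2*k)! : ℕ) : ZMod p) := by
      have h := Nat.choose_mul_factorial_mul_factorial (show k ≤ 2*k by omega)
      rw [show 2*k - k = k by omega] at h
      exact_mod_cast congrArg (fun x : ℕ => (x : ZMod p)) h
    have hc2 : (((4*k).choose (2*k) : ℕ) : ZMod p) * (((2*k)! : ℕ):ZMod p) * (((2*k)! : ℕ):ZMod p)
        = (((4*k)! : ℕ) : ZMod p) := by
      have h := Nat.choose_mul_factorial_mul_factorial (show 2*k ≤ 4*k by omega)
      rw [show 4*k - 2*k = 2*k by omega] at h
      exact_mod_cast congrArg (fun x : ℕ => (x : ZMod p)) h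
    have hy2 : ((t-1) * (2:ZMod p)⁻¹)^k * 2^k = (t-1)^k := by
      rw [← mul_pow, mul_assoc, inv_mul_cancel₀ h2, mul_one]
    have hdiv : ((1-t)/128 : ZMod p)^k * (64^k * 2^k) = (1-t)^k := by
      have h128' : ((1-t)/128 : ZMod p) * (64 * 2) = 1 - t := by
        rw [show ((64:ZMod p) * 2) = 128 by norm_num, div_mul_cancel₀ _ h128]
      rw [← mul_pow, ← mul_pow, h128']
    have hneg : (-1 : ZMod p)^k * (t-1)^k = (1-t)^k := by
      rw [← mul_pow, show ((-1) * (t-1) : ZMod p) = 1-t by ring]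
    have hZ : (((4*k).choose (2*k) : ℕ) : ZMod p) * (((2*k).choose k : ℕ) : ZMod p)
        * ((k ! : ℕ):ZMod p)^2 * (((2*k)! : ℕ):ZMod p) = (((4*k)! : ℕ) : ZMod p) := by
      linear_combination (((4*k).choose (2*k) : ℕ) : ZMod p) * (((2*k)! : ℕ):ZMod p) * hc1 + hc2
    calc ((p/4).choose k : ZMod p) * (((p/4 + k).choose k : ℕ) : ZMod p)
          * ((t-1) * (2:ZMod p)⁻¹)^k
          * ((64:ZMod p)^k * ((k ! : ℕ):ZMod p)^2 * (((2*k)! : ℕ):ZMod p) * 2^k)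
        = (((p/4).choose k : ZMod p) * (((p/4 + k).choose k : ℕ) : ZMod p) * 64^k
            * ((k ! : ℕ):ZMod p)^2 * (((2*k)! : ℕ):ZMod p))
          * (((t-1) * (2:ZMod p)⁻¹)^k * 2^k) := by ring
      _ = ((-1)^k * (((4*k)! : ℕ) : ZMod p)) * (t-1)^k := by rw [hK1, hy2]
      _ = (((4*k)! : ℕ) : ZMod p) * ((-1 : ZMod p)^k * (t-1)^k) := by ring
      _ = (((4*k)! : ℕ) : ZMod p) * (1-t)^k := by rw [hneg]
      _ = ((((4*k).choose (2*k) : ℕ) : ZMod p) * (((2*k).choose k : ℕ) : ZMod p)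
            * ((k ! : ℕ):ZMod p)^2 * (((2*k)! : ℕ):ZMod p)) * (1-t)^k := by rw [hZ]
      _ = ((((4*k).choose (2*k) : ℕ) : ZMod p) * (((2*k).choose k : ℕ) : ZMod p)
            * ((k ! : ℕ):ZMod p)^2 * (((2*k)! : ℕ):ZMod p))
          * (((1-t)/128 : ZMod p)^k * (64^k * 2^k)) := by rw [hdiv]
      _ = (((4 * k).choose (2 * k) : ℕ) : ZMod p) * (((2 * k).choose k : ℕ) : ZMod p) *
            ((1 - t) / 128) ^ k
          * ((64:ZMod p)^k * ((k ! : ℕ):ZMod p)^2 * (((2*k)! : ℕ):ZMod p) * 2^k) := by ring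
  refine ⟨conj1, ?_⟩
  rw [conj1]
  set m := (p-1)/2 with hm
  obtain ⟨cc, hcc⟩ : ∃ c : ZMod p, c = 9 * (1 - t) * (2:ZMod p)⁻¹ := ⟨_, rfl⟩
  have sub1 : ∑ x : ZMod p, (x ^ 3 - 3 / 2 * (3 * t + 5) * x + 9 * t + 7) ^ m
      = ∑ u : ZMod p, (u^3 + 6*u^2 + cc*u)^m := by
    refine (Fintype.sum_equiv (Equiv.addRight (2 : ZMod p))
      (fun u => (u^3 + 6*u^2 + cc*u)^m)
      (fun x => (x ^ 3 - 3 / 2 * (3 * t + 5) * x + 9 * t + 7) ^ m) ?_).symm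
    intro u
    have hbase : u^3 + 6*u^2 + cc*u
        = (u+2) ^ 3 - 3 / 2 * (3 * t + 5) * (u+2) + 9 * t + 7 := by
      rw [hcc]
      field_simp
      ring
    simp only [Equiv.coe_addRight]
    rw [hbase]
  rw [sub1, sumS hp cc, neg_mul_neg, Finset.mul_sum]
  apply Finset.sum_congr rfl
  intro k hk
  have hk' : k ≤ p/4 := Nat.lt_succ_iff.mp (mem_range.mp hk)
  have h2km : 2*k ≤ m := by omega
  have hF2 : (((2*k)! : ℕ) : ZMod p) ≠ 0 := factcast_ne (by omega)
  have hK2 := K2 hp k h2km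
  have hc2 : (((4*k).choose (2*k) : ℕ) : ZMod p) * (((2*k)! : ℕ):ZMod p) * (((2*k)! : ℕ):ZMod p)
      = (((4*k)! : ℕ) : ZMod p) := by
    have h := Nat.choose_mul_factorial_mul_factorial (show 2*k ≤ 4*k by omega)
    rw [show 4*k - 2*k = 2*k by omega] at h
    exact_mod_cast congrArg (fun x : ℕ => (x : ZMod p)) h
  have hw2 : (128:ZMod p)^k * 16^k * (((2*k)! : ℕ):ZMod p)^2 * 6^(2*k) * 2^k ≠ 0 :=
    mul_ne_zero (mul_ne_zero (mul_ne_zero (mul_ne_zero (pow_ne_zero _ h128)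
      (pow_ne_zero _ h16)) (pow_ne_zero _ hF2)) (pow_ne_zero _ h6)) (pow_ne_zero _ h2)
  apply mul_right_cancel₀ hw2
  have hq : ((1-t)/128 : ZMod p)^k * 128^k = (1-t)^k := by
    rw [← mul_pow, div_mul_cancel₀ _ h128]
  have hccp : cc^k * 2^k = 9^k * (1-t)^k := by
    rw [← mul_pow, hcc, mul_assoc, inv_mul_cancel₀ h2, mul_one, mul_pow]
  have hferm : (6:ZMod p)^m * 6^(m-2*k) * 6^(2*k) = 1 := by
    rw [← pow_add, ← pow_add, show m + (m-2*k) + 2*k = p - 1 by omega,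
      ZMod.pow_card_sub_one_eq_one h6]
  have hnum : (16:ZMod p)^k * 6^(2*k) * 2^k = 9^k * 128^k := by
    rw [show (6:ZMod p)^(2*k) = 36^k by rw [pow_mul]; norm_num,
      ← mul_pow, ← mul_pow, ← mul_pow]
    norm_num
  calc (((4 * k).choose (2 * k) : ℕ) : ZMod p) * (((2 * k).choose k : ℕ) : ZMod p) *
          ((1 - t) / 128) ^ k
        * ((128:ZMod p)^k * 16^k * (((2*k)! : ℕ):ZMod p)^2 * 6^(2*k) * 2^k)
      = ((((4*k).choose (2*k) : ℕ) : ZMod p) * (((2*k)! : ℕ):ZMod p) * (((2*k)! : ℕ):ZMod p))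
        * (((2 * k).choose k : ℕ) : ZMod p) * (((1-t)/128 : ZMod p)^k * 128^k)
        * (16^k * 6^(2*k) * 2^k) := by ring
    _ = (((4*k)! : ℕ) : ZMod p) * (((2 * k).choose k : ℕ) : ZMod p) * (1-t)^k
        * (9^k * 128^k) := by rw [hc2, hq, hnum]
    _ = ((((p-1)/2).choose (2*k) : ℕ) : ZMod p) * 16^k * (((2*k)! : ℕ):ZMod p)^2
        * (((2 * k).choose k : ℕ) : ZMod p) * (1-t)^k * (9^k * 128^k) := by rw [hK2]
    _ = ((6:ZMod p)^m * 6^(m-2*k) * 6^(2*k))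
        * (((((p-1)/2).choose (2*k) : ℕ) : ZMod p) * 16^k * (((2*k)! : ℕ):ZMod p)^2
          * (((2 * k).choose k : ℕ) : ZMod p) * (1-t)^k * (9^k * 128^k)) := by
        rw [hferm, one_mul]
    _ = (6:ZMod p)^m * (((m.choose (2*k) : ℕ) : ZMod p) * (((2*k).choose k : ℕ) : ZMod p)
          * 6^(m-2*k) * cc^k)
        * ((128:ZMod p)^k * 16^k * (((2*k)! : ℕ):ZMod p)^2 * 6^(2*k) * 2^k) := by
        rw [← hm]
        linear_combination (-((6:ZMod p)^m * 6^(m-2*k) * 6^(2*k)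
          * ((m.choose (2*k) : ℕ) : ZMod p) * 16^k * (((2*k)! : ℕ):ZMod p)^2
          * (((2*k).choose k : ℕ) : ZMod p) * 128^k)) * hccp
end

section
/- Let p ≥ 17 be a prime and let t be any element of ℤ/pℤ. Let χ : ℤ/pℤ → ℤ be the quadratic character (χ(a) = 1 if a is a nonzero square, χ(a) = −1 if a is a nonsquare, χ(0) = 0). Then, as an equality of integers, Σ_{x ∈ ℤ/pℤ} χ(x³ − (3/2)·(3t+5)·x + 9t + 7) = χ(2) · Σ_{x ∈ ℤ/pℤ} χ(x³ + (3/2)·(3t−5)·x + 9t − 7). -/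
open Finset

section aux

variable (p : ℕ) [Fact p.Prime]

private lemma charNeTwo (hp : 17 ≤ p) : ringChar (ZMod p) ≠ 2 := by
  rw [ZMod.ringChar_zmod_n]; omega

private lemma twoNeZero (hp : 17 ≤ p) : (2 : ZMod p) ≠ 0 := by
  have : ((2 : ℕ) : ZMod p) ≠ 0 := by
    rw [Ne, ZMod.natCast_eq_zero_iff]
    intro h
    have := Nat.le_of_dvd (by norm_num) h
    omega
  simpa using this

private lemma sum_shift (F : ZMod p → ℤ) (c : ZMod p) :
    ∑ x : ZMod p, F (x + c) = ∑ x : ZMod p, F x :=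
  Fintype.sum_equiv (Equiv.addRight c) _ _ (fun _ => rfl)

/-- The core 2-isogeny character sum identity. -/
private lemma core (hp : 17 ≤ p) (a b : ZMod p) :
    ∑ x : ZMod p, quadraticChar (ZMod p) (x * (x ^ 2 + a * x + b))
      = ∑ x : ZMod p, quadraticChar (ZMod p) (x * (x ^ 2 - 2 * a * x + (a ^ 2 - 4 * b))) := by
  have hF : ringChar (ZMod p) ≠ 2 := charNeTwo p hp
  have h2 : (2 : ZMod p) ≠ 0 := twoNeZero p hp
  have h4 : (4 : ZMod p) ≠ 0 := by
    intro h
    apply h2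
    have h' : (2 : ZMod p) * 2 = 0 := by rw [show (2 : ZMod p) * 2 = 4 by norm_num, h]
    rcases mul_eq_zero.mp h' with h'' | h'' <;> exact h''
  set χ := quadraticChar (ZMod p) with hχ
  by_cases hb : b = 0
  · -- degenerate case: both sides equal -χ a
    subst hb
    have hL : ∀ x : ZMod p, (χ (x * (x ^ 2 + a * x + 0)) : ℤ)
        = χ (x + a) - (if x = 0 then (χ a : ℤ) else 0) := by
      intro x
      by_cases hx : x = 0
      · subst hx
        rw [if_pos rfl, zero_mul, zero_add, sub_self, χ.map_zero]
      · have h' : x * (x ^ 2 + a * x + 0) = x ^ 2 * (x + a) := by ring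
        rw [h', map_mul, quadraticChar_sq_one' hx, one_mul, if_neg hx, sub_zero]
    have hR : ∀ x : ZMod p, (χ (x * (x ^ 2 - 2 * a * x + (a ^ 2 - 4 * 0))) : ℤ)
        = χ x - (if x = a then (χ a : ℤ) else 0) := by
      intro x
      by_cases hx : x = a
      · subst hx
        have h' : x * (x ^ 2 - 2 * x * x + (x ^ 2 - 4 * 0)) = 0 := by ring
        rw [h', if_pos rfl, sub_self, χ.map_zero]
      · have hxa : x - a ≠ 0 := sub_ne_zero.mpr hx
        have h' : x * (x ^ 2 - 2 * a * x + (a ^ 2 - 4 * 0)) = x * (x - a) ^ 2 := by ring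
        rw [h', map_mul, quadraticChar_sq_one' hxa, mul_one, if_neg hx, sub_zero]
    simp only [hL, hR, Finset.sum_sub_distrib, Finset.sum_ite_eq' Finset.univ,
      Finset.mem_univ, if_true]
    rw [sum_shift p (fun x => (χ x : ℤ)) a, quadraticChar_sum_zero hF]
  · -- main case b ≠ 0
    have stepA : ∑ x : ZMod p, (χ (x * (x ^ 2 + a * x + b)) : ℤ)
        = ∑ x ∈ univ.filter (fun x : ZMod p => x ≠ 0), χ (x + a + b / x) := by
      rw [← Finset.sum_filter_of_ne (p := fun x : ZMod p => x ≠ 0)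
        (f := fun x => (χ (x * (x ^ 2 + a * x + b)) : ℤ))]
      · apply Finset.sum_congr rfl
        intro x hx
        have hx0 : x ≠ 0 := (Finset.mem_filter.mp hx).2
        have h' : x * (x ^ 2 + a * x + b) = x ^ 2 * (x + a + b / x) := by
          field_simp
        rw [h', map_mul, quadraticChar_sq_one' hx0, one_mul]
      · intro x _ h hx0
        apply h
        rw [hx0, zero_mul, χ.map_zero]
    have stepB : ∑ x ∈ univ.filter (fun x : ZMod p => x ≠ 0), (χ (x + a + b / x) : ℤ)
        = ∑ q ∈ (univ ×ˢ univ).filter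
            (fun q : ZMod p × ZMod p => q.2 ^ 2 = (q.1 - a) ^ 2 - 4 * b), χ q.1 := by
      apply Finset.sum_nbij' (fun x => (x + a + b / x, x - b / x))
        (fun q => (q.1 - a + q.2) / 2)
      · intro x hx
        have hx0 : x ≠ 0 := (Finset.mem_filter.mp hx).2
        simp only [Finset.mem_filter, Finset.mem_product, Finset.mem_univ, true_and]
        field_simp
        ring
      · intro q hq
        have hq' : q.2 ^ 2 = (q.1 - a) ^ 2 - 4 * b := (Finset.mem_filter.mp hq).2
        simp only [Finset.mem_filter, Finset.mem_univ, true_and]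
        intro h0
        have hx : q.1 - a + q.2 = 0 := (div_eq_zero_iff.mp h0).resolve_right h2
        have h4b : (4 : ZMod p) * b = 0 := by
          linear_combination hq' + (q.1 - a - q.2) * hx
        exact hb ((mul_eq_zero.mp h4b).resolve_left h4)
      · intro x hx
        have hx0 : x ≠ 0 := (Finset.mem_filter.mp hx).2
        field_simp
        ring
      · intro q hq
        have hq' : q.2 ^ 2 = (q.1 - a) ^ 2 - 4 * b := (Finset.mem_filter.mp hq).2
        set x : ZMod p := (q.1 - a + q.2) / 2 with hxdef
        have hx0 : x ≠ 0 := by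
          intro h0
          have hx : q.1 - a + q.2 = 0 := (div_eq_zero_iff.mp h0).resolve_right h2
          have h4b : (4 : ZMod p) * b = 0 := by
            linear_combination hq' + (q.1 - a - q.2) * hx
          exact hb ((mul_eq_zero.mp h4b).resolve_left h4)
        have e1 : x * (x + a + b / x) = x ^ 2 + a * x + b := by
          field_simp
        have e2 : x ^ 2 + a * x + b = x * q.1 := by
          rw [hxdef]
          field_simp
          linear_combination hq'
        have e3 : x * (x - b / x) = x ^ 2 - b := by
          field_simp
        have e4 : x ^ 2 - b = x * q.2 := by
          rw [hxdef]
          field_simp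
          linear_combination (-1 : ZMod p) * hq'
        have c1 : x + a + b / x = q.1 := mul_left_cancel₀ hx0 (by rw [e1, e2])
        have c2 : x - b / x = q.2 := mul_left_cancel₀ hx0 (by rw [e3, e4])
        exact Prod.ext c1 c2
      · intro x _
        rfl
    have stepC : ∑ q ∈ (univ ×ˢ univ).filter
            (fun q : ZMod p × ZMod p => q.2 ^ 2 = (q.1 - a) ^ 2 - 4 * b), (χ q.1 : ℤ)
        = ∑ u : ZMod p, (χ ((u - a) ^ 2 - 4 * b) + 1) * χ u := by
      rw [Finset.sum_filter, Finset.sum_product]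
      apply Finset.sum_congr rfl
      intro u _
      have hsplit : ∀ y : ZMod p, (if y ^ 2 = (u - a) ^ 2 - 4 * b then (χ u : ℤ) else 0)
          = (if y ^ 2 = (u - a) ^ 2 - 4 * b then (1 : ℤ) else 0) * χ u := by
        intro y; split <;> simp
      simp only [hsplit, ← Finset.sum_mul, Finset.sum_boole]
      congr 1
      have hcard := quadraticChar_card_sqrts hF ((u - a) ^ 2 - 4 * b)
      rw [Set.toFinset_setOf] at hcard
      exact_mod_cast hcard
    rw [stepA, stepB, stepC]
    have expand : ∀ u : ZMod p, ((χ ((u - a) ^ 2 - 4 * b) + 1) * χ u : ℤ)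
        = χ (u * (u ^ 2 - 2 * a * u + (a ^ 2 - 4 * b))) + χ u := by
      intro u
      have harg : u * (u ^ 2 - 2 * a * u + (a ^ 2 - 4 * b)) = ((u - a) ^ 2 - 4 * b) * u := by
        ring
      rw [harg, map_mul]
      ring
    simp only [expand, Finset.sum_add_distrib]
    rw [quadraticChar_sum_zero hF]
    ring

end aux

theorem stmt_2 (p : ℕ) [Fact p.Prime] (hp : 17 ≤ p) (t : ZMod p) :
    ∑ x : ZMod p, quadraticChar (ZMod p) (x ^ 3 - 3 / 2 * (3 * t + 5) * x + 9 * t + 7)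
      = quadraticChar (ZMod p) 2 *
          ∑ x : ZMod p, quadraticChar (ZMod p) (x ^ 3 + 3 / 2 * (3 * t - 5) * x + 9 * t - 7) := by
  have hF : ringChar (ZMod p) ≠ 2 := charNeTwo p hp
  have h2 : (2 : ZMod p) ≠ 0 := twoNeZero p hp
  set χ := quadraticChar (ZMod p) with hχ
  have step1 : ∑ x : ZMod p, (χ (x ^ 3 - 3 / 2 * (3 * t + 5) * x + 9 * t + 7) : ℤ)
      = ∑ x : ZMod p, χ (x * (x ^ 2 + 6 * x + (9 - 9 * t) / 2)) := by
    rw [← sum_shift p (fun x => (χ (x ^ 3 - 3 / 2 * (3 * t + 5) * x + 9 * t + 7) : ℤ)) 2]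
    apply Finset.sum_congr rfl
    intro x _
    congr 1
    field_simp
    ring
  have step2 := core p hp 6 ((9 - 9 * t) / 2)
  have step3 : ∑ x : ZMod p, (χ (x * (x ^ 2 - 2 * 6 * x + (6 ^ 2 - 4 * ((9 - 9 * t) / 2)))) : ℤ)
      = χ 2 * ∑ x : ZMod p, χ (x * (x ^ 2 - 6 * x + (9 + 9 * t) / 2)) := by
    rw [← Fintype.sum_equiv (Equiv.mulLeft₀ (2 : ZMod p) h2)
      (fun x => (χ ((2 * x) * ((2 * x) ^ 2 - 2 * 6 * (2 * x) + (6 ^ 2 - 4 * ((9 - 9 * t) / 2)))) : ℤ))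
      (fun x => (χ (x * (x ^ 2 - 2 * 6 * x + (6 ^ 2 - 4 * ((9 - 9 * t) / 2)))) : ℤ))
      (fun x => rfl)]
    rw [Finset.mul_sum]
    apply Finset.sum_congr rfl
    intro x _
    have harg : (2 * x) * ((2 * x) ^ 2 - 2 * 6 * (2 * x) + (6 ^ 2 - 4 * ((9 - 9 * t) / 2)))
        = 2 * (2 ^ 2 * (x * (x ^ 2 - 6 * x + (9 + 9 * t) / 2))) := by
      field_simp
      ring
    rw [harg, map_mul, map_mul, quadraticChar_sq_one' h2, one_mul]
  have step4 : ∑ x : ZMod p, (χ (x * (x ^ 2 - 6 * x + (9 + 9 * t) / 2)) : ℤ)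
      = ∑ x : ZMod p, χ (x ^ 3 + 3 / 2 * (3 * t - 5) * x + 9 * t - 7) := by
    rw [← sum_shift p (fun x => (χ (x ^ 3 + 3 / 2 * (3 * t - 5) * x + 9 * t - 7) : ℤ)) (-2)]
    apply Finset.sum_congr rfl
    intro x _
    congr 1
    field_simp
    ring
  rw [step1, step2, step3, step4]
end

section
/- For all nonnegative integers m and n, the following identity of integers holds: Σ_{k=0}^{m} C(2k,k)²·C(n+k,2k)·C(k,m−k) = Σ_{k=0}^{m} C(2k,k)·C(n+k,2k)·C(2(m−k),m−k)·C(n+m−k,2(m−k)). -/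
open Finset Polynomial

noncomputable section StmtAux

/-- descending factorial as a rational product -/
private def dz (a b : ℕ) : ℚ := ∏ i ∈ range b, ((a : ℚ) - i)

private lemma dz_succ (a b : ℕ) : dz a (b+1) = dz a b * ((a:ℚ) - b) := by
  simp [dz, prod_range_succ]

private lemma dz_top (a b : ℕ) : dz (a+1) (b+1) = ((a:ℚ)+1) * dz a b := by
  rw [dz, prod_range_succ']
  push_cast
  simp only [sub_zero]
  rw [mul_comm, dz]
  congr 1
  apply prod_congr rfl
  intro i _
  push_cast
  ring

private lemma dz_top' (a b : ℕ) : dz (a+1) b * ((a:ℚ) + 1 - b) = ((a:ℚ)+1) * dz a b := by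
  have h1 := dz_succ (a+1) b
  have h2 := dz_top a b
  rw [h1] at h2
  push_cast at h2 ⊢
  linarith [h2]

private lemma choose_dz (a b : ℕ) : (a.choose b : ℚ) * (b.factorial : ℚ) = dz a b := by
  induction b with
  | zero => simp [dz]
  | succ b ih =>
    rw [dz_succ, ← ih, Nat.factorial_succ]
    rcases le_or_gt (b+1) a with h | h
    · have h2 : (b:ℕ) ≤ a := le_trans (Nat.le_succ b) h
      have hnat := Nat.choose_succ_right_eq a b
      have hc : (a.choose (b+1) : ℚ) * (b+1) = (a.choose b : ℚ) * ((a:ℚ) - b) := by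
        have := congrArg (fun x : ℕ => (x : ℚ)) hnat
        push_cast [Nat.cast_sub h2] at this
        push_cast
        linarith [this]
      push_cast
      calc (a.choose (b+1) : ℚ) * ((b+1) * (b.factorial : ℚ))
          = ((a.choose (b+1) : ℚ) * (b+1)) * (b.factorial : ℚ) := by ring
        _ = ((a.choose b : ℚ) * ((a:ℚ) - b)) * (b.factorial : ℚ) := by rw [hc]
        _ = (a.choose b : ℚ) * (b.factorial : ℚ) * ((a:ℚ) - b) := by ring
    · rw [Nat.choose_eq_zero_of_lt h]
      rcases Nat.lt_succ_iff_lt_or_eq.mp h with h' | h'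
      · rw [Nat.choose_eq_zero_of_lt h']
        simp
      · subst h'
        simp [Nat.choose_self]

private lemma fact_ne_s10 (b : ℕ) : ((b.factorial : ℚ)) ≠ 0 := by
  exact_mod_cast Nat.factorial_ne_zero b

private lemma choose_eq_dz (a b : ℕ) : (a.choose b : ℚ) = dz a b / (b.factorial : ℚ) := by
  rw [← choose_dz a b]
  field_simp

/-- coefficients of the Legendre-type polynomial -/
private def ccq (n k : ℕ) : ℚ := ((2*k).choose k : ℚ) * ((n+k).choose (2*k) : ℚ)
private def ppq (n k : ℕ) : ℚ := ((2*k).choose k : ℚ)^2 * ((n+k).choose (2*k) : ℚ)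
private def qqq (n k : ℕ) : ℚ :=
  (2*(k:ℚ)+1) * ((2*k).choose k : ℚ)^2 * ((n+k).choose (2*k+1) : ℚ)

private lemma ccq_vanish (n k : ℕ) (h : n+1 ≤ k) : ccq n k = 0 := by
  have : n + k < 2*k := by omega
  simp [ccq, Nat.choose_eq_zero_of_lt this]

private lemma ppq_vanish (n k : ℕ) (h : n+1 ≤ k) : ppq n k = 0 := by
  have : n + k < 2*k := by omega
  simp [ppq, Nat.choose_eq_zero_of_lt this]

private lemma qqq_vanish (n k : ℕ) (h : n ≤ k) : qqq n k = 0 := by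
  have : n + k < 2*k+1 := by omega
  simp [qqq, Nat.choose_eq_zero_of_lt this]

private lemma S2 (n k : ℕ) : qqq (n+1) k + qqq n k = (2*(n:ℚ)+1) * ppq n k := by
  have h1 : (n+1)+k = (n+k)+1 := by ring
  simp only [qqq, ppq, h1]
  rw [choose_eq_dz (n+k) (2*k), choose_eq_dz (n+k) (2*k+1), choose_eq_dz ((n+k)+1) (2*k+1),
      dz_top (n+k) (2*k), dz_succ (n+k) (2*k)]
  have hf : (((2*k+1).factorial : ℕ) : ℚ) = (2*(k:ℚ)+1) * ((2*k).factorial : ℚ) := by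
    rw [Nat.factorial_succ]; push_cast; ring
  rw [hf]
  have h2 := fact_ne_s10 (2*k)
  have h3 : (2*(k:ℚ)+1) ≠ 0 := by positivity
  field_simp
  push_cast
  ring

private lemma S1z (n : ℕ) : ((n:ℚ)+2) * ccq (n+2) 0 + ((n:ℚ)+1) * ccq n 0
    = (2*(n:ℚ)+3) * (ccq (n+1) 0) := by
  simp [ccq]
  ring

set_option maxHeartbeats 1000000 in
private lemma S1s (n k : ℕ) : ((n:ℚ)+2) * ccq (n+2) (k+1) + ((n:ℚ)+1) * ccq n (k+1)
    = (2*(n:ℚ)+3) * (ccq (n+1) (k+1) + 2 * ccq (n+1) k) := by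
  have e1 : (n+2)+(k+1) = ((n+k+1)+1)+1 := by ring
  have e2 : n+(k+1) = n+k+1 := by ring
  have e3 : (n+1)+(k+1) = (n+k+1)+1 := by ring
  have e4 : (n+1)+k = n+k+1 := by ring
  have e5 : 2*(k+1) = (2*k+1)+1 := by ring
  simp only [ccq, e1, e2, e3, e4, e5]
  rw [choose_eq_dz (((n+k+1)+1)+1) ((2*k+1)+1), choose_eq_dz (n+k+1) ((2*k+1)+1),
      choose_eq_dz ((n+k+1)+1) ((2*k+1)+1), choose_eq_dz (n+k+1) (2*k),
      choose_eq_dz ((2*k+1)+1) (k+1), choose_eq_dz (2*k) k]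
  rw [dz_top ((n+k+1)+1) (2*k+1), dz_top (n+k+1) (2*k+1), dz_top (n+k+1) (2*k),
      dz_succ (n+k+1) (2*k+1), dz_succ (n+k+1) (2*k), dz_top (2*k+1) k]
  have hk1 : ((k:ℚ)+1) ≠ 0 := by positivity
  have hc : dz (2*k+1) k * ((k:ℚ)+1) = (2*(k:ℚ)+1) * dz (2*k) k := by
    have := dz_top' (2*k) k
    push_cast at this ⊢
    linarith [this]
  have hdz : dz (2*k+1) k = (2*(k:ℚ)+1) * dz (2*k) k / ((k:ℚ)+1) := by
    field_simp
    linarith [hc]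
  rw [hdz]
  have hf1 : ((((2*k+1)+1).factorial : ℕ) : ℚ)
      = (2*(k:ℚ)+2) * (2*(k:ℚ)+1) * ((2*k).factorial : ℚ) := by
    rw [Nat.factorial_succ, Nat.factorial_succ]; push_cast; ring
  have hf2 : (((k+1).factorial : ℕ) : ℚ) = ((k:ℚ)+1) * ((k.factorial : ℕ) : ℚ) := by
    rw [Nat.factorial_succ]; push_cast; ring
  rw [hf1, hf2]
  have h2 := fact_ne_s10 (2*k)
  have h3 := fact_ne_s10 k
  have h4 : (2*(k:ℚ)+1) ≠ 0 := by positivity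
  have h5 : (2*(k:ℚ)+2) ≠ 0 := by positivity
  field_simp
  push_cast
  ring

private lemma S3z (n : ℕ) :
    ((n:ℚ)+2)^2 * ppq (n+2) 0 + 2*(2*(n:ℚ)+3) * (qqq (n+1) 0 + 4 * 0)
      = (2*(n:ℚ)+3)^2 * (ppq (n+1) 0 + 4 * 0) + ((n:ℚ)+1)^2 * ppq n 0 := by
  simp [ppq, qqq, Nat.choose_one_right]
  push_cast
  ring

set_option maxHeartbeats 2000000 in
private lemma S3s (n k : ℕ) :
    ((n:ℚ)+2)^2 * ppq (n+2) (k+1) + 2*(2*(n:ℚ)+3) * (qqq (n+1) (k+1) + 4 * qqq (n+1) k)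
      = (2*(n:ℚ)+3)^2 * (ppq (n+1) (k+1) + 4 * ppq (n+1) k) + ((n:ℚ)+1)^2 * ppq n (k+1) := by
  have e1 : (n+2)+(k+1) = ((n+k+1)+1)+1 := by ring
  have e2 : n+(k+1) = n+k+1 := by ring
  have e3 : (n+1)+(k+1) = (n+k+1)+1 := by ring
  have e4 : (n+1)+k = n+k+1 := by ring
  have e5 : 2*(k+1) = (2*k+1)+1 := by ring
  have e6 : 2*(k+1)+1 = ((2*k+1)+1)+1 := by ring
  simp only [ppq, qqq, e1, e2, e3, e4, e5, e6]
  rw [choose_eq_dz (((n+k+1)+1)+1) ((2*k+1)+1),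
      choose_eq_dz ((n+k+1)+1) (((2*k+1)+1)+1),
      choose_eq_dz (n+k+1) (2*k+1),
      choose_eq_dz ((n+k+1)+1) ((2*k+1)+1),
      choose_eq_dz (n+k+1) (2*k),
      choose_eq_dz (n+k+1) ((2*k+1)+1),
      choose_eq_dz ((2*k+1)+1) (k+1), choose_eq_dz (2*k) k]
  rw [dz_top ((n+k+1)+1) (2*k+1),
      dz_succ ((n+k+1)+1) ((2*k+1)+1),
      dz_top (n+k+1) (2*k+1),
      dz_succ (n+k+1) (2*k+1),
      dz_top (n+k+1) (2*k),
      dz_succ (n+k+1) (2*k),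
      dz_top (2*k+1) k]
  have hk1 : ((k:ℚ)+1) ≠ 0 := by positivity
  have hc : dz (2*k+1) k * ((k:ℚ)+1) = (2*(k:ℚ)+1) * dz (2*k) k := by
    have := dz_top' (2*k) k
    push_cast at this ⊢
    linarith [this]
  have hdz : dz (2*k+1) k = (2*(k:ℚ)+1) * dz (2*k) k / ((k:ℚ)+1) := by
    field_simp
    linarith [hc]
  rw [hdz]
  have hf1 : (((((2*k+1)+1)+1).factorial : ℕ) : ℚ)
      = (2*(k:ℚ)+3) * (2*(k:ℚ)+2) * (2*(k:ℚ)+1) * ((2*k).factorial : ℚ) := by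
    rw [Nat.factorial_succ, Nat.factorial_succ, Nat.factorial_succ]; push_cast; ring
  have hf2 : ((((2*k+1)+1).factorial : ℕ) : ℚ)
      = (2*(k:ℚ)+2) * (2*(k:ℚ)+1) * ((2*k).factorial : ℚ) := by
    rw [Nat.factorial_succ, Nat.factorial_succ]; push_cast; ring
  have hf3 : (((2*k+1).factorial : ℕ) : ℚ) = (2*(k:ℚ)+1) * ((2*k).factorial : ℚ) := by
    rw [Nat.factorial_succ]; push_cast; ring
  have hf4 : (((k+1).factorial : ℕ) : ℚ) = ((k:ℚ)+1) * ((k.factorial : ℕ) : ℚ) := by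
    rw [Nat.factorial_succ]; push_cast; ring
  rw [hf1, hf2, hf3, hf4]
  have h2 := fact_ne_s10 (2*k)
  have h3 := fact_ne_s10 k
  have h4 : (2*(k:ℚ)+1) ≠ 0 := by positivity
  have h5 : (2*(k:ℚ)+2) ≠ 0 := by positivity
  have h6 : (2*(k:ℚ)+3) ≠ 0 := by positivity
  field_simp
  push_cast
  ring

/-! polynomial machinery -/

private def toU (u : ℚ[X]) (N : ℕ) (α : ℕ → ℚ) : ℚ[X] :=
  ∑ k ∈ range N, Polynomial.C (α k) * u^k

private def sh (α : ℕ → ℚ) : ℕ → ℚ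
  | 0 => 0
  | k+1 => α k

private lemma toU_shift (u : ℚ[X]) (N : ℕ) (α : ℕ → ℚ) :
    u * toU u N α = toU u (N+1) (sh α) := by
  rw [toU, toU, Finset.mul_sum, Finset.sum_range_succ']
  simp only [sh, map_zero, zero_mul, pow_zero, mul_one, add_zero]
  apply Finset.sum_congr rfl
  intro k _
  rw [pow_succ]
  ring

private lemma toU_pad (u : ℚ[X]) {N M : ℕ} (α : ℕ → ℚ) (h : N ≤ M)
    (hα : ∀ k, N ≤ k → α k = 0) : toU u N α = toU u M α := by
  apply Finset.sum_subset (Finset.range_subset_range.mpr h)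
  intro k _ hk
  rw [hα k (by simpa using hk)]
  simp

private lemma toU_congr (u : ℚ[X]) (N : ℕ) (α β : ℕ → ℚ) (h : ∀ k, α k = β k) :
    toU u N α = toU u N β := by
  apply Finset.sum_congr rfl
  intro k _
  rw [h k]

private lemma toU_add (u : ℚ[X]) (N : ℕ) (α β : ℕ → ℚ) :
    toU u N α + toU u N β = toU u N (fun k => α k + β k) := by
  rw [toU, toU, toU, ← Finset.sum_add_distrib]
  apply Finset.sum_congr rfl
  intro k _
  rw [map_add]
  ring

private lemma toU_sub (u : ℚ[X]) (N : ℕ) (α β : ℕ → ℚ) :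
    toU u N α - toU u N β = toU u N (fun k => α k - β k) := by
  rw [toU, toU, toU, ← Finset.sum_sub_distrib]
  apply Finset.sum_congr rfl
  intro k _
  rw [map_sub]
  ring

private lemma toU_smul (u : ℚ[X]) (N : ℕ) (α : ℕ → ℚ) (r : ℚ) :
    Polynomial.C r * toU u N α = toU u N (fun k => r * α k) := by
  rw [toU, toU, Finset.mul_sum]
  apply Finset.sum_congr rfl
  intro k _
  rw [map_mul]
  ring

private lemma toU_coeff_X (N : ℕ) (α : ℕ → ℚ) (k : ℕ) (hk : k < N) :
    (toU X N α).coeff k = α k := by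
  rw [toU, Polynomial.finset_sum_coeff, Finset.sum_eq_single k]
  · simp
  · intro b _ hb
    simp [Polynomial.coeff_C_mul, Polynomial.coeff_X_pow, Ne.symm hb]
  · intro h
    exact absurd (Finset.mem_range.mpr hk) h

private lemma toU_coeff_w (N : ℕ) (α : ℕ → ℚ) (m : ℕ) :
    (toU (X*(1+X)) N α).coeff m
      = ∑ k ∈ range N, α k * (if k ≤ m then ((k.choose (m-k) : ℚ)) else 0) := by
  rw [toU, Polynomial.finset_sum_coeff]
  apply Finset.sum_congr rfl
  intro k _
  have h0 : Polynomial.C (α k) * (X*(1+X))^k = ((1+X)^k * X^k) * Polynomial.C (α k) := by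
    rw [mul_pow]; ring
  rw [h0, Polynomial.coeff_mul_C, Polynomial.coeff_mul_X_pow']
  by_cases h : k ≤ m
  · simp [h, Polynomial.coeff_one_add_X_pow, mul_comm]
  · simp [h]

/-! the three polynomials -/

private def fP (n : ℕ) : ℚ[X] := toU X (n+1) (ccq n)
private def gP (n : ℕ) : ℚ[X] := toU (X*(1+X)) (n+1) (ppq n)
private def hP (n : ℕ) : ℚ[X] := toU (X*(1+X)) (n+1) (qqq n)

private lemma L1 (n : ℕ) :
    Polynomial.C ((n:ℚ)+2) * fP (n+2)
      = Polynomial.C (2*(n:ℚ)+3) * ((1+2*X) * fP (n+1)) - Polynomial.C ((n:ℚ)+1) * fP n := by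
  have c2 : (2 : ℚ[X]) = Polynomial.C (2:ℚ) := (map_ofNat Polynomial.C 2).symm
  have hy : (1+2*X) * fP (n+1) = fP (n+1) + Polynomial.C (2:ℚ) * (X * fP (n+1)) := by
    rw [← c2]; ring
  have hsh : X * fP (n+1) = toU X (n+3) (sh (ccq (n+1))) := toU_shift X (n+2) (ccq (n+1))
  have hpad1 : fP (n+1) = toU X (n+3) (ccq (n+1)) :=
    toU_pad X (ccq (n+1)) (by omega) (fun k hk => ccq_vanish (n+1) k (by omega))
  have hpad0 : fP n = toU X (n+3) (ccq n) :=
    toU_pad X (ccq n) (by omega) (fun k hk => ccq_vanish n k (by omega))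
  rw [hy, hsh, hpad1, hpad0, toU_smul]
  rw [show fP (n+2) = toU X (n+3) (ccq (n+2)) from rfl]
  rw [toU_add, toU_smul, toU_smul, toU_smul, toU_sub]
  apply toU_congr
  intro k
  cases k with
  | zero =>
    have := S1z n
    simp only [sh] at *
    linarith [this]
  | succ k =>
    have := S1s n k
    simp only [sh] at *
    linarith [this]

private lemma I1p (n : ℕ) :
    hP (n+2) = Polynomial.C (2*(n:ℚ)+3) * gP (n+1) - hP (n+1) := by
  have hpadg : gP (n+1) = toU (X*(1+X)) (n+3) (ppq (n+1)) :=
    toU_pad _ (ppq (n+1)) (by omega) (fun k hk => ppq_vanish (n+1) k (by omega))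
  have hpadh : hP (n+1) = toU (X*(1+X)) (n+3) (qqq (n+1)) :=
    toU_pad _ (qqq (n+1)) (by omega) (fun k hk => qqq_vanish (n+1) k (by omega))
  rw [hpadg, hpadh, toU_smul]
  rw [show hP (n+2) = toU (X*(1+X)) (n+3) (qqq (n+2)) from rfl]
  rw [toU_sub]
  apply toU_congr
  intro k
  have := S2 (n+1) k
  push_cast at this
  linarith [this]

private lemma I2p (n : ℕ) :
    (Polynomial.C ((n:ℚ)+2))^2 * gP (n+2)
        + 2 * Polynomial.C (2*(n:ℚ)+3) * ((1+4*(X*(1+X))) * hP (n+1))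
      = (Polynomial.C (2*(n:ℚ)+3))^2 * ((1+4*(X*(1+X))) * gP (n+1))
        + (Polynomial.C ((n:ℚ)+1))^2 * gP n := by
  have c4 : (4 : ℚ[X]) = Polynomial.C (4:ℚ) := (map_ofNat Polynomial.C 4).symm
  have hyh : (1+4*(X*(1+X))) * hP (n+1)
      = hP (n+1) + Polynomial.C (4:ℚ) * ((X*(1+X)) * hP (n+1)) := by
    rw [← c4]; ring
  have hyg : (1+4*(X*(1+X))) * gP (n+1)
      = gP (n+1) + Polynomial.C (4:ℚ) * ((X*(1+X)) * gP (n+1)) := by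
    rw [← c4]; ring
  have hshh : (X*(1+X)) * hP (n+1) = toU (X*(1+X)) (n+3) (sh (qqq (n+1))) :=
    toU_shift _ (n+2) (qqq (n+1))
  have hshg : (X*(1+X)) * gP (n+1) = toU (X*(1+X)) (n+3) (sh (ppq (n+1))) :=
    toU_shift _ (n+2) (ppq (n+1))
  have hpadh : hP (n+1) = toU (X*(1+X)) (n+3) (qqq (n+1)) :=
    toU_pad _ (qqq (n+1)) (by omega) (fun k hk => qqq_vanish (n+1) k (by omega))
  have hpadg : gP (n+1) = toU (X*(1+X)) (n+3) (ppq (n+1)) :=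
    toU_pad _ (ppq (n+1)) (by omega) (fun k hk => ppq_vanish (n+1) k (by omega))
  have hpadg0 : gP n = toU (X*(1+X)) (n+3) (ppq n) :=
    toU_pad _ (ppq n) (by omega) (fun k hk => ppq_vanish n k (by omega))
  have e1 : (Polynomial.C ((n:ℚ)+2))^2 = Polynomial.C (((n:ℚ)+2)^2) := by rw [map_pow]
  have e2 : (Polynomial.C (2*(n:ℚ)+3))^2 = Polynomial.C ((2*(n:ℚ)+3)^2) := by rw [map_pow]
  have e3 : (Polynomial.C ((n:ℚ)+1))^2 = Polynomial.C (((n:ℚ)+1)^2) := by rw [map_pow]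
  have e4 : (2 : ℚ[X]) * Polynomial.C (2*(n:ℚ)+3) = Polynomial.C (2*(2*(n:ℚ)+3)) := by
    rw [map_mul, ← (map_ofNat Polynomial.C 2 : Polynomial.C (2:ℚ) = 2)]
  rw [hyh, hyg, hshh, hshg, hpadh, hpadg, hpadg0, e1, e2, e3, e4]
  rw [show gP (n+2) = toU (X*(1+X)) (n+3) (ppq (n+2)) from rfl]
  rw [toU_smul, toU_smul, toU_smul, toU_add, toU_add, toU_smul, toU_smul, toU_smul, toU_add,
      toU_add]
  apply toU_congr
  intro k
  cases k with
  | zero =>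
    have := S3z n
    simp only [sh] at *
    linarith [this]
  | succ k =>
    have := S3s n k
    simp only [sh] at *
    linarith [this]

private lemma mainAB (n : ℕ) :
    (fP n)^2 = gP n ∧ (fP (n+1))^2 = gP (n+1) ∧
      Polynomial.C ((n:ℚ)+1) * (fP (n+1) * fP n) = (1+2*X) * hP (n+1) := by
  induction n with
  | zero =>
    have f0 : fP 0 = 1 := by
      simp [fP, toU, ccq]
    have f1 : fP 1 = 1 + 2*X := by
      simp [fP, toU, Finset.sum_range_succ, ccq]
    have g0 : gP 0 = 1 := by
      simp [gP, toU, ppq]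
    have g1 : gP 1 = 1 + 4*(X*(1+X)) := by
      simp [gP, toU, Finset.sum_range_succ, ppq]
      norm_num
    have h1 : hP 1 = 1 := by
      simp [hP, toU, Finset.sum_range_succ, qqq]
    refine ⟨?_, ?_, ?_⟩
    · rw [f0, g0]; norm_num
    · rw [f1, g1]; ring
    · rw [f1, f0, h1]; norm_num
  | succ n ih =>
    obtain ⟨hA, hA1, hB⟩ := ih
    have ecast : ((n+1 : ℕ) : ℚ) = (n:ℚ)+1 := by push_cast; ring
    have hcn : (Polynomial.C ((n:ℚ)+2) : ℚ[X]) ≠ 0 := by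
      rw [Ne, Polynomial.C_eq_zero]
      positivity
    have hcn2 : ((Polynomial.C ((n:ℚ)+2))^2 : ℚ[X]) ≠ 0 := pow_ne_zero _ hcn
    have key : (Polynomial.C ((n:ℚ)+2))^2 * (fP (n+2))^2
        = (Polynomial.C ((n:ℚ)+2))^2 * gP (n+2) := by
      linear_combination (Polynomial.C ((n:ℚ)+2) * fP (n+2)
          + (Polynomial.C (2*(n:ℚ)+3) * ((1+2*X) * fP (n+1))
            - Polynomial.C ((n:ℚ)+1) * fP n)) * (L1 n)
        + (Polynomial.C (2*(n:ℚ)+3))^2 * (1+2*X)^2 * hA1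
        + (Polynomial.C ((n:ℚ)+1))^2 * hA
        - (2*Polynomial.C (2*(n:ℚ)+3)*(1+2*X)) * hB - I2p n
    have hAnew : (fP (n+2))^2 = gP (n+2) := mul_left_cancel₀ hcn2 key
    have hBnew : Polynomial.C (((n+1:ℕ):ℚ)+1) * (fP (n+2) * fP (n+1)) = (1+2*X) * hP (n+2) := by
      have ec : (((n+1:ℕ):ℚ)+1) = (n:ℚ)+2 := by push_cast; ring
      rw [ec]
      linear_combination fP (n+1) * (L1 n)
        + Polynomial.C (2*(n:ℚ)+3) * (1+2*X) * hA1 - hB - (1+2*X) * (I1p n)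
    exact ⟨hA1, hAnew, hBnew⟩

private lemma fP_coeff (n k : ℕ) : (fP n).coeff k = ccq n k := by
  by_cases h : k < n+1
  · exact toU_coeff_X _ _ _ h
  · rw [fP, toU, Polynomial.finset_sum_coeff, Finset.sum_eq_zero, ccq_vanish n k (by omega)]
    intro j hj
    have hj' : j < n+1 := Finset.mem_range.mp hj
    simp [Polynomial.coeff_C_mul, Polynomial.coeff_X_pow, (show k ≠ j by omega)]

end StmtAux

theorem stmt_10 (m n : ℕ) :
    ∑ k ∈ Finset.range (m + 1),
        (((2 * k).choose k : ℤ)) ^ 2 * ((n + k).choose (2 * k) : ℤ) * (k.choose (m - k) : ℤ)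
      = ∑ k ∈ Finset.range (m + 1),
          ((2 * k).choose k : ℤ) * ((n + k).choose (2 * k) : ℤ) *
            ((2 * (m - k)).choose (m - k) : ℤ) * ((n + m - k).choose (2 * (m - k)) : ℤ) := by
  have hA : (fP n)^2 = gP n := (mainAB n).1
  have hco : ((fP n)^2).coeff m = (gP n).coeff m := by rw [hA]
  have hl : ((fP n)^2).coeff m = ∑ k ∈ Finset.range (m+1), ccq n k * ccq n (m - k) := by
    rw [sq, Polynomial.coeff_mul, Finset.Nat.sum_antidiagonal_eq_sum_range_succ_mk]
    apply Finset.sum_congr rfl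
    intro k _
    rw [fP_coeff, fP_coeff]
  have hr : (gP n).coeff m = ∑ k ∈ Finset.range (m+1), ppq n k * (k.choose (m-k) : ℚ) := by
    have hpad : gP n = toU (X*(1+X)) (m+n+2) (ppq n) :=
      toU_pad _ (ppq n) (by omega) (fun k hk => ppq_vanish n k (by omega))
    rw [hpad, toU_coeff_w]
    rw [← Finset.sum_subset (Finset.range_subset_range.mpr (show m+1 ≤ m+n+2 by omega))
        (fun k _ hk => by
          rw [if_neg (by simp only [Finset.mem_range] at hk; omega)]
          ring)]
    apply Finset.sum_congr rfl
    intro k hk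
    rw [if_pos (by simp only [Finset.mem_range] at hk; omega)]
  have HQ : ∑ k ∈ Finset.range (m+1), ppq n k * (k.choose (m-k) : ℚ)
      = ∑ k ∈ Finset.range (m+1), ccq n k * ccq n (m - k) := by
    rw [← hr, ← hl, hco]
  simp only [ppq, ccq] at HQ
  have e : ∀ k ∈ Finset.range (m+1),
      ((2*k).choose k : ℤ) * ((n+k).choose (2*k) : ℤ) * ((2*(m-k)).choose (m-k) : ℤ)
          * ((n+m-k).choose (2*(m-k)) : ℤ)
        = (((2*k).choose k : ℤ) * ((n+k).choose (2*k) : ℤ))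
          * ((((2*(m-k)).choose (m-k)) : ℤ) * (((n+(m-k)).choose (2*(m-k))) : ℤ)) := by
    intro k hk
    have hk' : k ≤ m := by have := Finset.mem_range.mp hk; omega
    rw [show n+m-k = n+(m-k) by omega]
    ring
  rw [Finset.sum_congr rfl e]
  exact_mod_cast HQ
end

section
/- For every nonnegative integer n, the identity P_n(x)² = Σ_{k=0}^{n} C(2k,k)²·C(n+k,2k)·((x²−1)/4)^k holds as an identity of polynomials in x with rational coefficients. -/
open Polynomial Finset

set_option maxHeartbeats 1000000



namespace Stmt11

/-- abbreviation for the "w" polynomial -/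
noncomputable def w : ℚ[X] := (X^2 - 1) * C (4⁻¹ : ℚ)

def aQ (n k : ℕ) : ℚ := (((2*k).choose k : ℕ) : ℚ)^2 * (((n+k).choose (2*k) : ℕ) : ℚ)

def cQ (n k : ℕ) : ℚ := aQ n k * ((n:ℚ) + k + 1)

def tQ (n k : ℕ) : ℚ := (n.choose k : ℚ) * (((2*n - 2*k).choose n : ℕ) : ℚ)

lemma aQ_zero (n k : ℕ) (h : n < k) : aQ n k = 0 := by
  have : (n+k).choose (2*k) = 0 := Nat.choose_eq_zero_of_lt (by omega)
  simp [aQ, this]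

lemma tQ_zero (n k : ℕ) (h : n < 2*k) : tQ n k = 0 := by
  rcases le_or_gt k n with h1 | h1
  · have : (2*n - 2*k).choose n = 0 := Nat.choose_eq_zero_of_lt (by omega)
    simp [tQ, this]
  · simp [tQ, Nat.choose_eq_zero_of_lt h1]

lemma ratio1 (m k : ℕ) :
    ((m:ℚ)+1+k) * (((m+k).choose (2*k) : ℕ) : ℚ)
      = ((m:ℚ)+1-k) * (((m+1+k).choose (2*k) : ℕ) : ℚ) := by
  rcases le_or_gt k (m+1) with h | h
  · have h2 := Nat.choose_mul_succ_eq (m+k) (2*k)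
    have h3 : m + k + 1 - 2*k = m + 1 - k := by omega
    rw [h3] at h2
    have h4 : (((m+k).choose (2*k) : ℕ) : ℚ) * ((m:ℚ)+k+1)
        = (((m+k+1).choose (2*k) : ℕ) : ℚ) * (((m:ℚ)+1)-(k:ℚ)) := by
      have := congrArg (fun x : ℕ => (x : ℚ)) h2
      push_cast [Nat.cast_sub h] at this
      convert this using 2 <;> push_cast <;> ring
    have h5 : m + 1 + k = m + k + 1 := by omega
    rw [h5]
    linarith [h4]
  · have h1 : (m+k).choose (2*k) = 0 := Nat.choose_eq_zero_of_lt (by omega)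
    have h2 : (m+1+k).choose (2*k) = 0 := Nat.choose_eq_zero_of_lt (by omega)
    simp [h1, h2]

lemma central (k : ℕ) :
    ((k:ℚ)+1) * (((2*(k+1)).choose (k+1) : ℕ) : ℚ)
      = 2*(2*(k:ℚ)+1) * (((2*k).choose k : ℕ) : ℚ) := by
  have h1 := Nat.add_one_mul_choose_eq (2*k+1) k
  have h2 := Nat.add_one_mul_choose_eq (2*k) k
  have h3 : (2*k+1).choose (k+1) = (2*k+1).choose k := by
    have := Nat.choose_symm (show k ≤ 2*k+1 by omega)
    rwa [show 2*k+1-k = k+1 by omega] at this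
  rw [h3] at h2
  -- h1 : (2k+2) * C(2k+1,k) = C(2k+2,k+1) * (k+1)   [args: 2*k+1+1]
  -- h2 : (2k+1) * C(2k,k) = C(2k+1,k) * (k+1)
  have h1q := congrArg (fun x : ℕ => (x : ℚ)) h1
  have h2q := congrArg (fun x : ℕ => (x : ℚ)) h2
  push_cast at h1q h2q
  have hk : ((k:ℚ)+1) ≠ 0 := by positivity
  apply mul_left_cancel₀ hk
  rw [show 2*(k+1) = 2*k+1+1 by omega]
  linear_combination (-((k:ℚ)+1)) * h1q - (2*(k:ℚ)+2) * h2q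

lemma Kb_coeff (n k : ℕ) :
    cQ (n+1) k = (2*(n:ℚ)+3) * aQ (n+1) k - cQ n k := by
  have h := ratio1 n k
  simp only [cQ, aQ]
  push_cast
  nlinarith [sq_nonneg ((((2*k).choose k : ℕ):ℚ)), h, mul_self_nonneg ((((2*k).choose k : ℕ):ℚ))]

lemma cc (p q r : ℕ) (h : q + r = p) :
    ((p.choose q : ℕ) : ℚ) = ((Nat.factorial p : ℕ) : ℚ) / (((Nat.factorial q : ℕ) : ℚ) * ((Nat.factorial r : ℕ) : ℚ)) := by
  rw [Nat.cast_choose ℚ (by omega : q ≤ p), show p - q = r by omega]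

lemma fact1 (a : ℕ) : ((Nat.factorial (a+1) : ℕ) : ℚ) = ((a:ℚ)+1) * ((Nat.factorial a : ℕ) : ℚ) := by
  rw [Nat.factorial_succ]; push_cast; ring

lemma fact2 (a : ℕ) : ((Nat.factorial (a+2) : ℕ) : ℚ) = ((a:ℚ)+2)*((a:ℚ)+1) * ((Nat.factorial a : ℕ) : ℚ) := by
  rw [show a+2 = (a+1)+1 by omega, fact1, fact1]; push_cast; ring

lemma fact3 (a : ℕ) : ((Nat.factorial (a+3) : ℕ) : ℚ) = ((a:ℚ)+3)*((a:ℚ)+2)*((a:ℚ)+1) * ((Nat.factorial a : ℕ) : ℚ) := by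
  rw [show a+3 = (a+2)+1 by omega, fact1, fact2]; push_cast; ring

lemma fact4 (a : ℕ) : ((Nat.factorial (a+4) : ℕ) : ℚ) = ((a:ℚ)+4)*((a:ℚ)+3)*((a:ℚ)+2)*((a:ℚ)+1) * ((Nat.factorial a : ℕ) : ℚ) := by
  rw [show a+4 = (a+3)+1 by omega, fact1, fact3]; push_cast; ring

lemma factQ_ne_zero (a : ℕ) : ((Nat.factorial a : ℕ) : ℚ) ≠ 0 :=
  Nat.cast_ne_zero.mpr (Nat.factorial_ne_zero a)

lemma Ka1 (n j : ℕ) :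
    ((n:ℚ)+2)^2 * aQ (n+2) (j+1)
      = (2*(n:ℚ)+3)^2 * (aQ (n+1) (j+1) + 4 * aQ (n+1) j)
        - 2*(2*(n:ℚ)+3) * (cQ n (j+1) + 4 * cQ n j)
        + ((n:ℚ)+1)^2 * aQ n (j+1) := by
  by_cases h1 : j + 1 ≤ n
  · -- generic case
    obtain ⟨m, rfl⟩ : ∃ m, n = m + j + 1 := ⟨n - (j+1), by omega⟩
    simp only [aQ, cQ]
    rw [show m+j+1+2+(j+1) = m+2*j+4 by omega,
        show m+j+1+1+(j+1) = m+2*j+3 by omega,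
        show m+j+1+1+j = m+2*j+2 by omega,
        show m+j+1+(j+1) = m+2*j+2 by omega,
        show m+j+1+j = m+2*j+1 by omega,
        show 2*(j+1) = 2*j+2 by omega,
        cc (m+2*j+4) (2*j+2) (m+2) (by omega),
        cc (m+2*j+3) (2*j+2) (m+1) (by omega),
        cc (m+2*j+2) (2*j) (m+2) (by omega),
        cc (m+2*j+2) (2*j+2) (m) (by omega),
        cc (m+2*j+1) (2*j) (m+1) (by omega),
        cc (2*j+2) (j+1) (j+1) (by omega),
        cc (2*j) (j) (j) (by omega),
        fact4 (m+2*j), fact3 (m+2*j), fact2 (m+2*j), fact1 (m+2*j),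
        fact2 (2*j), fact1 (j), fact2 m, fact1 m]
    have n1 := factQ_ne_zero (m+2*j)
    have n2 := factQ_ne_zero (2*j)
    have n3 := factQ_ne_zero j
    have n4 := factQ_ne_zero m
    push_cast
    field_simp
    ring
  · by_cases h2 : n = j
    · -- j = n
      subst h2
      simp only [aQ, cQ]
      rw [show n+2+(n+1) = 2*n+3 by omega, show n+1+(n+1) = 2*n+2 by omega,
          show n+1+n = 2*n+1 by omega, show n+(n+1) = 2*n+1 by omega,
          show n+n = 2*n by omega, show 2*(n+1) = 2*n+2 by omega]
      have z1 : (2*n+1).choose (2*n+2) = 0 := Nat.choose_eq_zero_of_lt (by omega)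
      have e1 : (2*n+3).choose (2*n+2) = 2*n+3 := by
        have := Nat.choose_symm (show 2*n+2 ≤ 2*n+3 by omega)
        rw [show 2*n+3 - (2*n+2) = 1 by omega] at this
        rw [← this, Nat.choose_one_right]
      have e2 : (2*n+2).choose (2*n+2) = 1 := Nat.choose_self _
      have e3 : (2*n+1).choose (2*n) = 2*n+1 := by
        have := Nat.choose_symm (show 2*n ≤ 2*n+1 by omega)
        rw [show 2*n+1 - 2*n = 1 by omega] at this
        rw [← this, Nat.choose_one_right]
      have e4 : (2*n).choose (2*n) = 1 := Nat.choose_self _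
      rw [z1, e1, e2, e3, e4]
      have h := central n
      rw [show 2*(n+1) = 2*n+2 by omega] at h
      push_cast at h ⊢
      linear_combination (2*(n:ℚ)+3)*(((n:ℚ)+1)*(((2*n+2).choose (n+1) : ℕ):ℚ) + 2*(2*(n:ℚ)+1)*(((2*n).choose n : ℕ):ℚ)) * h
    · by_cases h3 : n + 1 = j
      · -- j = n+1
        subst h3
        simp only [aQ, cQ]
        rw [show n+2+(n+1+1) = 2*n+4 by omega, show n+1+(n+1+1) = 2*n+3 by omega,
            show n+1+(n+1) = 2*n+2 by omega, show n+(n+1+1) = 2*n+2 by omega,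
            show n+(n+1) = 2*n+1 by omega, show 2*(n+1+1) = 2*n+4 by omega,
            show 2*(n+1) = 2*n+2 by omega]
        have z1 : (2*n+3).choose (2*n+4) = 0 := Nat.choose_eq_zero_of_lt (by omega)
        have z2 : (2*n+2).choose (2*n+4) = 0 := Nat.choose_eq_zero_of_lt (by omega)
        have z3 : (2*n+1).choose (2*n+2) = 0 := Nat.choose_eq_zero_of_lt (by omega)
        have e1 : (2*n+4).choose (2*n+4) = 1 := Nat.choose_self _
        have e2 : (2*n+2).choose (2*n+2) = 1 := Nat.choose_self _
        rw [z1, z2, z3, e1, e2]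
        have h := central (n+1)
        rw [show 2*(n+1+1) = 2*n+4 by omega, show 2*(n+1) = 2*n+2 by omega] at h
        push_cast at h ⊢
        linear_combination (((n:ℚ)+2)*(((2*n+4).choose (n+2) : ℕ):ℚ) + 2*(2*(n:ℚ)+3)*(((2*n+2).choose (n+1) : ℕ):ℚ)) * h
      · -- j ≥ n+2 : everything vanishes
        have hj : n + 2 ≤ j := by omega
        have z1 : aQ (n+2) (j+1) = 0 := aQ_zero _ _ (by omega)
        have z2 : aQ (n+1) (j+1) = 0 := aQ_zero _ _ (by omega)
        have z3 : aQ (n+1) j = 0 := aQ_zero _ _ (by omega)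
        have z4 : aQ n (j+1) = 0 := aQ_zero _ _ (by omega)
        have z5 : aQ n j = 0 := aQ_zero _ _ (by omega)
        simp [cQ, z1, z2, z3, z4, z5]

lemma rec0 (n : ℕ) :
    ((n:ℚ)+2) * tQ (n+2) 0 = 2*(2*(n:ℚ)+3) * tQ (n+1) 0 := by
  have h := central (n+1)
  rw [show n+1+1 = n+2 by omega] at h
  simp only [tQ, Nat.choose_zero_right]
  rw [show 2*(n+2) - 2*0 = 2*(n+2) by omega, show 2*(n+1) - 2*0 = 2*(n+1) by omega]
  push_cast at h ⊢
  linear_combination h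

lemma rec1 (n j : ℕ) :
    ((n:ℚ)+2) * tQ (n+2) (j+1)
      = 2*(2*(n:ℚ)+3) * tQ (n+1) (j+1) + 4*((n:ℚ)+1) * tQ n j := by
  by_cases h1 : 2*j+1 ≤ n
  · obtain ⟨m, rfl⟩ : ∃ m, n = m + 2*j + 1 := ⟨n - (2*j+1), by omega⟩
    simp only [tQ]
    rw [show 2*(m+2*j+1+2) - 2*(j+1) = 2*m+2*j+2+2 by omega,
        show 2*(m+2*j+1+1) - 2*(j+1) = 2*m+2*j+2 by omega,
        show 2*(m+2*j+1) - 2*j = 2*m+2*j+2 by omega,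
        cc (m+2*j+1+2) (j+1) (m+j+1+1) (by omega),
        cc (m+2*j+1+1) (j+1) (m+j+1) (by omega),
        cc (m+2*j+1) j (m+j+1) (by omega),
        cc (2*m+2*j+2+2) (m+2*j+1+2) (m+1) (by omega),
        cc (2*m+2*j+2) (m+2*j+1+1) m (by omega),
        cc (2*m+2*j+2) (m+2*j+1) (m+1) (by omega),
        fact2 (2*m+2*j+2), fact2 (m+2*j+1), fact1 (m+2*j+1),
        fact1 j, fact1 (m+j+1), fact1 m]
    have n1 := factQ_ne_zero (2*m+2*j+2)
    have n2 := factQ_ne_zero (m+2*j+1)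
    have n3 := factQ_ne_zero j
    have n4 := factQ_ne_zero (m+j+1)
    have n5 := factQ_ne_zero m
    push_cast
    field_simp
    ring
  · by_cases h2 : n = 2*j
    · subst h2
      simp only [tQ]
      rw [show 2*(2*j+2) - 2*(j+1) = 2*(j+1) by omega,
          show 2*(2*j+1) - 2*(j+1) = 2*j by omega,
          show 2*(2*j) - 2*j = 2*j by omega]
      have z1 : (2*j).choose (2*j+1) = 0 := Nat.choose_eq_zero_of_lt (by omega)
      have e1 : (2*(j+1)).choose (2*j+2) = 1 := by
        rw [show 2*(j+1) = 2*j+2 by omega]; exact Nat.choose_self _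
      have e2 : (2*j).choose (2*j) = 1 := Nat.choose_self _
      rw [z1, e1, e2]
      have h := central j
      rw [show 2*j+2 = 2*(j+1) by omega]
      push_cast at h ⊢
      linear_combination 2 * h
    · have hn : n < 2*j := by omega
      have z1 : tQ (n+2) (j+1) = 0 := tQ_zero _ _ (by omega)
      have z2 : tQ (n+1) (j+1) = 0 := tQ_zero _ _ (by omega)
      have z3 : tQ n j = 0 := tQ_zero _ _ (by omega)
      rw [z1, z2, z3]; ring

/-! ### shift function and combined coefficient identities -/

def sh (f : ℕ → ℚ) : ℕ → ℚ
  | 0 => 0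
  | (k+1) => f k

lemma rec_coeff (n k : ℕ) :
    ((n:ℚ)+2) * tQ (n+2) k
      = 2*(2*(n:ℚ)+3) * tQ (n+1) k + 4*((n:ℚ)+1) * sh (tQ n) k := by
  cases k with
  | zero => simpa [sh] using rec0 n
  | succ j => simpa [sh] using rec1 n j

lemma Ka_coeff (n k : ℕ) :
    ((n:ℚ)+2)^2 * aQ (n+2) k
      = (2*(n:ℚ)+3)^2 * (aQ (n+1) k + 4 * sh (aQ (n+1)) k)
        - 2*(2*(n:ℚ)+3) * (cQ n k + 4 * sh (cQ n) k)
        + ((n:ℚ)+1)^2 * aQ n k := by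
  cases k with
  | zero =>
    norm_num [sh, aQ, cQ]
    ring
  | succ j => simpa [sh] using Ka1 n j

/-! ### polynomial-level sums -/

noncomputable def F (n : ℕ) : ℚ[X] := ∑ k ∈ range (n+1), C (aQ n k) * w^k
noncomputable def G (n : ℕ) : ℚ[X] := ∑ k ∈ range (n+1), C (cQ n k) * w^k
noncomputable def L (n : ℕ) : ℚ[X] := ∑ k ∈ range (n+1), C ((-1)^k * tQ n k) * X^(n-2*k)

lemma F_ext (n N : ℕ) (h : n+1 ≤ N) : F n = ∑ k ∈ range N, C (aQ n k) * w^k := by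
  refine Finset.sum_subset (range_subset_range.mpr h) ?_
  intro k hk hk2
  rw [aQ_zero n k (by simp only [mem_range] at hk hk2 ⊢; omega), map_zero, zero_mul]

lemma G_ext (n N : ℕ) (h : n+1 ≤ N) : G n = ∑ k ∈ range N, C (cQ n k) * w^k := by
  refine Finset.sum_subset (range_subset_range.mpr h) ?_
  intro k hk hk2
  have : aQ n k = 0 := aQ_zero n k (by simp only [mem_range] at hk hk2 ⊢; omega)
  rw [cQ, this, zero_mul, map_zero, zero_mul]

lemma L_ext (n N : ℕ) (h : n+1 ≤ N) :
    L n = ∑ k ∈ range N, C ((-1)^k * tQ n k) * X^(n-2*k) := by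
  refine Finset.sum_subset (range_subset_range.mpr h) ?_
  intro k hk hk2
  have : tQ n k = 0 := tQ_zero n k (by simp only [mem_range] at hk hk2 ⊢; omega)
  rw [this, mul_zero, map_zero, zero_mul]

lemma hinv : Ring.inverse (2 : ℚ[X]) = C (2⁻¹ : ℚ) := by
  have h : (2 : ℚ[X]) * C (2⁻¹ : ℚ) = 1 := by
    have : (2 : ℚ[X]) = C (2 : ℚ) := (map_ofNat C 2).symm
    rw [this, ← C_mul]
    norm_num
  exact Ring.inverse_unit (Units.mkOfMulEqOne _ _ h)

lemma legP_X (n : ℕ) : legP n (X : ℚ[X]) = C ((2⁻¹:ℚ)^n) * L n := by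
  have hsmall : L n = ∑ k ∈ range (n/2+1), C ((-1)^k * tQ n k) * X^(n-2*k) := by
    refine (Finset.sum_subset (range_subset_range.mpr (by omega)) ?_).symm
    intro k hk hk2
    have : tQ n k = 0 := tQ_zero n k (by simp only [mem_range] at hk hk2 ⊢; omega)
    rw [this, mul_zero, map_zero, zero_mul]
  rw [legP, hinv, ← map_pow, hsmall]
  congr 1
  refine Finset.sum_congr rfl ?_
  intro k _
  rw [tQ, map_mul, map_mul, map_pow, map_neg, map_one, C_eq_natCast, C_eq_natCast]
  ring

lemma X_mul_L (n N : ℕ) (h : n+1 ≤ N) :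
    X * L n = ∑ k ∈ range N, C ((-1)^k * tQ n k) * X^(n+1-2*k) := by
  rw [L_ext n N h, mul_sum]
  refine Finset.sum_congr rfl ?_
  intro k _
  rcases le_or_gt (2*k) n with hk | hk
  · rw [show n+1-2*k = (n-2*k)+1 by omega, pow_succ]
    ring
  · rw [tQ_zero n k (by omega)]
    simp

lemma L_shift (n N : ℕ) (h : n+1 ≤ N) :
    ∑ k ∈ range (N+1), C ((-1)^k * sh (tQ n) k) * X^(n+2-2*k) = - L n := by
  rw [Finset.sum_range_succ' (fun k => C ((-1)^k * sh (tQ n) k) * X^(n+2-2*k)) N]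
  have h0 : C ((-1:ℚ)^0 * sh (tQ n) 0) * X^(n+2-2*0) = 0 := by
    simp [sh]
  rw [h0, add_zero, L_ext n N h, ← Finset.sum_neg_distrib]
  refine Finset.sum_congr rfl ?_
  intro k _
  have he : n+2-2*(k+1) = n-2*k := by omega
  rw [he]
  show C ((-1)^(k+1) * tQ n k) * X^(n-2*k) = -(C ((-1)^k * tQ n k) * X^(n-2*k))
  rw [pow_succ]
  rw [show (-1:ℚ)^k * -1 * tQ n k = -((-1)^k * tQ n k) by ring, map_neg]
  ring

lemma w_mul_sum (f : ℕ → ℚ) (N : ℕ) :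
    w * ∑ k ∈ range N, C (f k) * w^k = ∑ k ∈ range (N+1), C (sh f k) * w^k := by
  rw [Finset.sum_range_succ' (fun k => C (sh f k) * w^k) N]
  have h0 : C (sh f 0) * w^0 = 0 := by simp [sh]
  rw [h0, add_zero, mul_sum]
  refine Finset.sum_congr rfl ?_
  intro k _
  show w * (C (f k) * w^k) = C (sh f (k+1)) * w^(k+1)
  rw [show sh f (k+1) = f k from rfl, pow_succ]
  ring

lemma hX2 : (X^2 : ℚ[X]) = C 4 * w + 1 := by
  have : C (4:ℚ) * C (4⁻¹:ℚ) = 1 := by rw [← C_mul]; norm_num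
  unfold w
  calc (X^2 : ℚ[X]) = (X^2 - 1) * (C 4 * C 4⁻¹) + 1 := by rw [this]; ring
    _ = C 4 * ((X^2 - 1) * C 4⁻¹) + 1 := by ring

/-! ### assembled recurrences -/

lemma Kb_sum (n : ℕ) : G (n+1) = C (2*(n:ℚ)+3) * F (n+1) - G n := by
  rw [G_ext (n+1) (n+2) (by omega), F_ext (n+1) (n+2) (by omega),
    G_ext n (n+2) (by omega), Finset.mul_sum, ← Finset.sum_sub_distrib]
  refine Finset.sum_congr rfl fun k _ => ?_
  rw [Kb_coeff n k, map_sub, map_mul]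
  ring

lemma legP_rec (n : ℕ) :
    C ((n:ℚ)+2) * legP (n+2) (X:ℚ[X])
      = C (2*(n:ℚ)+3) * (X * legP (n+1) (X:ℚ[X])) - C ((n:ℚ)+1) * legP n (X:ℚ[X]) := by
  have e1 : ((2⁻¹:ℚ))^(n+1) = 2 * (2⁻¹)^(n+2) := by rw [pow_succ]; ring
  have e2 : ((2⁻¹:ℚ))^n = 4 * (2⁻¹)^(n+2) := by rw [pow_succ, pow_succ]; ring
  have key : C ((n:ℚ)+2) * L (n+2)
      = C (2*(n:ℚ)+3) * (C 2 * (X * L (n+1))) - C ((n:ℚ)+1) * (C 4 * L n) := by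
    have hL2 : C ((n:ℚ)+2) * L (n+2)
        = ∑ k ∈ range (n+3), C (((n:ℚ)+2) * ((-1)^k * tQ (n+2) k)) * X^(n+2-2*k) := by
      rw [L_ext (n+2) (n+3) (by omega), Finset.mul_sum]
      exact Finset.sum_congr rfl fun k _ => by simp only [map_mul, map_pow, map_neg, map_one]; ring
    have hL1 : X * L (n+1)
        = ∑ k ∈ range (n+3), C ((-1)^k * tQ (n+1) k) * X^(n+1+1-2*k) :=
      X_mul_L (n+1) (n+3) (by omega)
    have hL0' : L n = - ∑ k ∈ range (n+3), C ((-1)^k * sh (tQ n) k) * X^(n+2-2*k) := by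
      rw [show n+3 = n+2+1 from rfl, L_shift n (n+2) (by omega), neg_neg]
    rw [hL2, hL1, hL0']
    simp only [mul_neg, sub_neg_eq_add, Finset.mul_sum]
    rw [← Finset.sum_add_distrib]
    refine Finset.sum_congr rfl fun k _ => ?_
    have hco : C (((n:ℚ)+2) * ((-1)^k * tQ (n+2) k))
        = C (2*(n:ℚ)+3) * (C (2:ℚ) * C ((-1)^k * tQ (n+1) k))
          + C ((n:ℚ)+1) * (C (4:ℚ) * C ((-1)^k * sh (tQ n) k)) := by
      rw [← map_mul, ← map_mul, ← map_mul, ← map_mul, ← map_add]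
      exact congrArg C (by linear_combination ((-1):ℚ)^k * rec_coeff n k)
    rw [show n+1+1-2*k = n+2-2*k by omega, hco]
    ring
  rw [legP_X (n+2), legP_X (n+1), legP_X n, e1, e2, map_mul, map_mul]
  linear_combination C ((2⁻¹:ℚ)^(n+2)) * key

lemma Ka_sum (n : ℕ) :
    C (((n:ℚ)+2)^2) * F (n+2)
      = C ((2*(n:ℚ)+3)^2) * (X^2 * F (n+1))
        - C (2*(2*(n:ℚ)+3)) * (X^2 * G n) + C (((n:ℚ)+1)^2) * F n := by
  have hF1 : X^2 * F (n+1)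
      = ∑ k ∈ range (n+3), C (aQ (n+1) k + 4 * sh (aQ (n+1)) k) * w^k := by
    rw [hX2, F_ext (n+1) (n+2) (by omega), add_mul, one_mul, mul_assoc,
      show n+3 = n+2+1 from rfl, w_mul_sum]
    rw [show (∑ k ∈ range (n+2), C (aQ (n+1) k) * w^k)
        = ∑ k ∈ range (n+2+1), C (aQ (n+1) k) * w^k from by
      rw [← F_ext (n+1) (n+2) (by omega), F_ext (n+1) (n+2+1) (by omega)]]
    rw [Finset.mul_sum, ← Finset.sum_add_distrib]
    refine Finset.sum_congr rfl fun k _ => ?_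
    rw [map_add, map_mul]
    push_cast
    ring
  have hG1 : X^2 * G n
      = ∑ k ∈ range (n+3), C (cQ n k + 4 * sh (cQ n) k) * w^k := by
    rw [hX2, G_ext n (n+2) (by omega), add_mul, one_mul, mul_assoc,
      show n+3 = n+2+1 from rfl, w_mul_sum]
    rw [show (∑ k ∈ range (n+2), C (cQ n k) * w^k)
        = ∑ k ∈ range (n+2+1), C (cQ n k) * w^k from by
      rw [← G_ext n (n+2) (by omega), G_ext n (n+2+1) (by omega)]]
    rw [Finset.mul_sum, ← Finset.sum_add_distrib]
    refine Finset.sum_congr rfl fun k _ => ?_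
    rw [map_add, map_mul]
    push_cast
    ring
  rw [hF1, hG1, F_ext (n+2) (n+3) (by omega), F_ext n (n+3) (by omega)]
  rw [Finset.mul_sum, Finset.mul_sum, Finset.mul_sum, Finset.mul_sum,
    ← Finset.sum_sub_distrib, ← Finset.sum_add_distrib]
  refine Finset.sum_congr rfl fun k _ => ?_
  have hco : C ((((n:ℚ)+2)^2) * aQ (n+2) k)
      = C ((2*(n:ℚ)+3)^2) * C (aQ (n+1) k + 4 * sh (aQ (n+1)) k)
        - C (2*(2*(n:ℚ)+3)) * C (cQ n k + 4 * sh (cQ n) k)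
        + C (((n:ℚ)+1)^2) * C (aQ n k) := by
    rw [← map_mul, ← map_mul, ← map_mul, ← map_sub, ← map_add]
    exact congrArg C (by linear_combination Ka_coeff n k)
  calc C (((n:ℚ)+2)^2) * (C (aQ (n+2) k) * w^k)
      = C ((((n:ℚ)+2)^2) * aQ (n+2) k) * w^k := by rw [map_mul, mul_assoc]
    _ = _ := by rw [hco]; ring

/-! ### main induction -/

lemma main (n : ℕ) :
    legP n (X:ℚ[X])^2 = F n ∧ legP (n+1) (X:ℚ[X])^2 = F (n+1) ∧
      C ((n:ℚ)+1) * (legP n (X:ℚ[X]) * legP (n+1) (X:ℚ[X])) = X * G n := by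
  induction n with
  | zero =>
    have h0 : legP 0 (X:ℚ[X]) = 1 := by
      rw [legP_X]
      simp [L, tQ]
    have h1 : legP 1 (X:ℚ[X]) = X := by
      rw [legP_X]
      have hL : L 1 = C (2:ℚ) * X := by
        rw [L, Finset.sum_range_succ, Finset.sum_range_succ, Finset.sum_range_zero]
        norm_num [tQ]
      rw [hL, ← mul_assoc, ← map_mul]
      norm_num
    refine ⟨?_, ?_, ?_⟩
    · rw [h0, F]
      norm_num [aQ]
    · rw [h1, F, Finset.sum_range_succ, Finset.sum_range_succ, Finset.sum_range_zero, hX2]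
      norm_num [aQ]
      ring
    · rw [h0, h1, G]
      norm_num [cQ, aQ]
  | succ n ih =>
    obtain ⟨hA, hA1, hB⟩ := ih
    have hrec := legP_rec n
    have hstep2 : legP (n+2) (X:ℚ[X])^2 = F (n+2) := by
      have hC : (C (((n:ℚ)+2)^2) : ℚ[X]) ≠ 0 := by
        rw [Ne, Polynomial.C_eq_zero]
        positivity
      apply mul_left_cancel₀ hC
      calc C (((n:ℚ)+2)^2) * legP (n+2) (X:ℚ[X])^2
          = (C ((n:ℚ)+2) * legP (n+2) X)^2 := by rw [mul_pow, ← map_pow]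
        _ = (C (2*(n:ℚ)+3) * (X * legP (n+1) X) - C ((n:ℚ)+1) * legP n X)^2 := by
            rw [hrec]
        _ = C ((2*(n:ℚ)+3)^2) * (X^2 * legP (n+1) X^2)
            - C (2*(2*(n:ℚ)+3)) * (X * (C ((n:ℚ)+1) * (legP n X * legP (n+1) X)))
            + C (((n:ℚ)+1)^2) * legP n X^2 := by
            simp only [map_pow, map_mul, map_ofNat]
            ring
        _ = C ((2*(n:ℚ)+3)^2) * (X^2 * F (n+1))
            - C (2*(2*(n:ℚ)+3)) * (X * (X * G n)) + C (((n:ℚ)+1)^2) * F n := by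
            rw [hA1, hB, hA]
        _ = C ((2*(n:ℚ)+3)^2) * (X^2 * F (n+1))
            - C (2*(2*(n:ℚ)+3)) * (X^2 * G n) + C (((n:ℚ)+1)^2) * F n := by ring
        _ = C (((n:ℚ)+2)^2) * F (n+2) := (Ka_sum n).symm
    have hstep3 : C (((n+1:ℕ):ℚ)+1) * (legP (n+1) (X:ℚ[X]) * legP (n+2) X) = X * G (n+1) := by
      rw [show ((n+1:ℕ):ℚ)+1 = (n:ℚ)+2 by push_cast; ring]
      calc C ((n:ℚ)+2) * (legP (n+1) (X:ℚ[X]) * legP (n+2) X)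
          = (C ((n:ℚ)+2) * legP (n+2) X) * legP (n+1) X := by ring
        _ = (C (2*(n:ℚ)+3) * (X * legP (n+1) X) - C ((n:ℚ)+1) * legP n X) * legP (n+1) X := by
            rw [hrec]
        _ = C (2*(n:ℚ)+3) * (X * legP (n+1) X^2)
            - (C ((n:ℚ)+1) * (legP n X * legP (n+1) X)) := by ring
        _ = C (2*(n:ℚ)+3) * (X * F (n+1)) - X * G n := by rw [hA1, hB]
        _ = X * (C (2*(n:ℚ)+3) * F (n+1) - G n) := by ring
        _ = X * G (n+1) := by rw [← Kb_sum n]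
    exact ⟨hA1, hstep2, hstep3⟩

end Stmt11

theorem stmt_11 (n : ℕ) :
    legP n (Polynomial.X : Polynomial ℚ) ^ 2
      = ∑ k ∈ Finset.range (n + 1),
          (((2 * k).choose k : ℕ) : Polynomial ℚ) ^ 2 * (((n + k).choose (2 * k) : ℕ) : Polynomial ℚ) *
            ((Polynomial.X ^ 2 - 1) * Polynomial.C (4⁻¹ : ℚ)) ^ k := by
  have h := (Stmt11.main n).1
  rw [h, Stmt11.F]
  refine Finset.sum_congr rfl fun k _ => ?_
  rw [Stmt11.aQ, Stmt11.w, map_mul, map_pow, Polynomial.C_eq_natCast, Polynomial.C_eq_natCast]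
end

section
/- Let p be an odd prime, let m be an integer not divisible by p, and suppose t ∈ ℤ/p²ℤ satisfies t² = 1 − 64/m (where 1/m denotes the inverse of the image of m in ℤ/p²ℤ). Then in ℤ/p²ℤ: Σ_{k=0}^{(p−1)/2} C(2k,k)³·m^{−k} = P_{(p−1)/2}(t)². -/
namespace Stmt12Aux

open Finset Nat

private lemma fct (n : ℕ) : ((n+1).factorial : ℚ) = (n+1) * (n.factorial : ℚ) := by
  rw [Nat.factorial_succ]; push_cast; ring

private lemma fne (n : ℕ) : ((n.factorial : ℕ) : ℚ) ≠ 0 := by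
  exact_mod_cast Nat.factorial_ne_zero n

lemma id1a (a : ℕ) : (a+2) * ((2*a+4).choose (a+2)) = 2*(2*a+3) * ((2*a+2).choose (a+1)) := by
  have h1 : ((2*a+4).choose (a+2) : ℚ) = (2*a+4).factorial / ((a+2).factorial * (a+2).factorial) := by
    rw [Nat.cast_choose ℚ (by omega : a+2 ≤ 2*a+4), show 2*a+4 - (a+2) = a+2 from by omega]
  have h2 : ((2*a+2).choose (a+1) : ℚ) = (2*a+2).factorial / ((a+1).factorial * (a+1).factorial) := by
    rw [Nat.cast_choose ℚ (by omega : a+1 ≤ 2*a+2), show 2*a+2 - (a+1) = a+1 from by omega]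
  have e1 : ((2*a+4).factorial : ℚ) = (2*a+4)*(2*a+3)*((2*a+2).factorial : ℚ) := by
    rw [show 2*a+4 = (2*a+3)+1 from by omega, fct, show 2*a+3 = (2*a+2)+1 from by omega, fct]; push_cast; ring
  have e2 : ((a+2).factorial : ℚ) = (a+2)*((a+1).factorial : ℚ) := by
    rw [show a+2 = (a+1)+1 from by omega, fct]; push_cast; ring
  have key : ((a:ℚ)+2) * ((2*a+4).choose (a+2) : ℚ) = 2*(2*(a:ℚ)+3) * ((2*a+2).choose (a+1) : ℚ) := by
    rw [h1, h2, e1, e2]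
    have := Nat.factorial_ne_zero (a+1)
    have h3 : ((a+1).factorial : ℚ) ≠ 0 := by exact_mod_cast this
    field_simp
    ring
  exact_mod_cast key

lemma central_step (i : ℕ) : (2*i+2) * ((2*i+2).choose (i+1)) = 4*(2*i+1) * ((2*i).choose i) := by
  have h1 : ((2*i+2).choose (i+1) : ℚ) = (2*i+2).factorial / ((i+1).factorial * (i+1).factorial) := by
    rw [Nat.cast_choose ℚ (by omega : i+1 ≤ 2*i+2), show 2*i+2 - (i+1) = i+1 from by omega]
  have h2 : ((2*i).choose i : ℚ) = (2*i).factorial / (i.factorial * i.factorial) := by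
    rw [Nat.cast_choose ℚ (by omega : i ≤ 2*i), show 2*i - i = i from by omega]
  have e1 : ((2*i+2).factorial : ℚ) = (2*i+2)*(2*i+1)*((2*i).factorial : ℚ) := by
    rw [show 2*i+2 = (2*i+1)+1 from by omega, fct, show 2*i+1 = (2*i)+1 from by omega, fct]; push_cast; ring
  have e2 : ((i+1).factorial : ℚ) = (i+1)*(i.factorial : ℚ) := fct i
  have key : (((2*i+2 : ℕ)) : ℚ) * ((2*i+2).choose (i+1) : ℚ) = ((4*(2*i+1) : ℕ) : ℚ) * ((2*i).choose i : ℚ) := by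
    rw [h1, h2, e1, e2]
    have := fne i
    have := fne (2*i)
    push_cast
    field_simp
    ring
  exact_mod_cast key

lemma central_step' (i : ℕ) : (i+1) * ((2*i+2).choose (i+1)) = 2*(2*i+1) * ((2*i).choose i) := by
  have h := central_step i
  have h2 : 2 * ((i+1) * ((2*i+2).choose (i+1))) = 2 * (2*(2*i+1) * ((2*i).choose i)) := by
    rw [show 2 * ((i+1) * ((2*i+2).choose (i+1))) = (2*i+2) * ((2*i+2).choose (i+1)) from by ring, h]
    ring
  omega

lemma id1b (a i : ℕ) :
    (a+2) * ((a+2).choose (i+1)) * ((2*a+2-2*i).choose (a+2))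
    = 2*(2*a+3) * ((a+1).choose (i+1)) * ((2*a-2*i).choose (a+1))
      + 4*(a+1) * (a.choose i) * ((2*a-2*i).choose a) := by
  rcases lt_trichotomy a (2*i) with h|rfl|h
  · -- all zero
    rw [Nat.choose_eq_zero_of_lt (show 2*a+2-2*i < a+2 from by omega),
        Nat.choose_eq_zero_of_lt (show 2*a-2*i < a+1 from by omega)]
    rcases lt_or_ge a i with h2|h2
    · rw [Nat.choose_eq_zero_of_lt (show a < i from h2)]
      ring
    · rw [Nat.choose_eq_zero_of_lt (show 2*a-2*i < a from by omega)]
      ring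
  · -- boundary a = 2i
    rw [show 2*(2*i)+2-2*i = 2*i+2 from by omega, show 2*(2*i)-2*i = 2*i from by omega,
        Nat.choose_self, Nat.choose_eq_zero_of_lt (show 2*i < 2*i+1 from by omega),
        Nat.choose_self]
    have := central_step i
    rw [show 2*i+2 = 2*i+2 from rfl]
    nlinarith [this]
  · -- in-range: a = 2i+1+e
    obtain ⟨e, rfl⟩ : ∃ e, a = 2*i+1+e := ⟨a-(2*i+1), by omega⟩
    rw [show 2*(2*i+1+e)+2-2*i = 2*i+2*e+4 from by omega,
        show 2*(2*i+1+e)-2*i = 2*i+2*e+2 from by omega,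
        show 2*i+1+e+2 = 2*i+e+3 from by omega,
        show 2*i+1+e+1 = 2*i+e+2 from by omega,
        show 2*i+1+e = 2*i+e+1 from by omega]
    have c1 : ((2*i+e+3).choose (i+1) : ℚ) = (2*i+e+3).factorial / ((i+1).factorial * (i+e+2).factorial) := by
          rw [Nat.cast_choose ℚ (by omega : i+1 ≤ 2*i+e+3), show 2*i+e+3 - (i+1) = i+e+2 from by omega]
    have c2 : ((2*i+2*e+4).choose (2*i+e+3) : ℚ) = (2*i+2*e+4).factorial / ((2*i+e+3).factorial * (e+1).factorial) := by
          rw [Nat.cast_choose ℚ (by omega : 2*i+e+3 ≤ 2*i+2*e+4), show 2*i+2*e+4 - (2*i+e+3) = e+1 from by omega]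
    have c3 : ((2*i+e+2).choose (i+1) : ℚ) = (2*i+e+2).factorial / ((i+1).factorial * (i+e+1).factorial) := by
          rw [Nat.cast_choose ℚ (by omega : i+1 ≤ 2*i+e+2), show 2*i+e+2 - (i+1) = i+e+1 from by omega]
    have c4 : ((2*i+2*e+2).choose (2*i+e+2) : ℚ) = (2*i+2*e+2).factorial / ((2*i+e+2).factorial * e.factorial) := by
          rw [Nat.cast_choose ℚ (by omega : 2*i+e+2 ≤ 2*i+2*e+2), show 2*i+2*e+2 - (2*i+e+2) = e from by omega]
    have c5 : ((2*i+e+1).choose i : ℚ) = (2*i+e+1).factorial / (i.factorial * (i+e+1).factorial) := by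
          rw [Nat.cast_choose ℚ (by omega : i ≤ 2*i+e+1), show 2*i+e+1 - i = i+e+1 from by omega]
    have c6 : ((2*i+2*e+2).choose (2*i+e+1) : ℚ) = (2*i+2*e+2).factorial / ((2*i+e+1).factorial * (e+1).factorial) := by
          rw [Nat.cast_choose ℚ (by omega : 2*i+e+1 ≤ 2*i+2*e+2), show 2*i+2*e+2 - (2*i+e+1) = e+1 from by omega]
    have f1 : ((i+1).factorial : ℚ) = (i+1) * i.factorial := fct i
    have f2 : ((i+e+2).factorial : ℚ) = (i+e+2) * (i+e+1).factorial := by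
      rw [show i+e+2 = (i+e+1)+1 from by omega, fct]; push_cast; ring
    have f3 : ((e+1).factorial : ℚ) = (e+1) * e.factorial := fct e
    have f4 : ((2*i+e+2).factorial : ℚ) = (2*i+e+2) * (2*i+e+1).factorial := by
      rw [show 2*i+e+2 = (2*i+e+1)+1 from by omega, fct]; push_cast; ring
    have f5 : ((2*i+e+3).factorial : ℚ) = (2*i+e+3) * ((2*i+e+2) * (2*i+e+1).factorial) := by
      rw [show 2*i+e+3 = (2*i+e+2)+1 from by omega, fct, f4]; push_cast; ring
    have f6 : ((2*i+2*e+4).factorial : ℚ) = (2*i+2*e+4) * (2*i+2*e+3) * (2*i+2*e+2).factorial := by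
      rw [show 2*i+2*e+4 = (2*i+2*e+3)+1 from by omega, fct, show 2*i+2*e+3 = (2*i+2*e+2)+1 from by omega, fct]
      push_cast; ring
    have KEY : (((2*i+e+1+2) * ((2*i+e+3).choose (i+1)) * ((2*i+2*e+4).choose (2*i+e+3)) : ℕ) : ℚ)
        = ((2*(2*(2*i+e+1)+3) * ((2*i+e+2).choose (i+1)) * ((2*i+2*e+2).choose (2*i+e+2))
          + 4*((2*i+e+1)+1) * ((2*i+e+1).choose i) * ((2*i+2*e+2).choose (2*i+e+1)) : ℕ) : ℚ) := by
      push_cast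
      rw [c1, c2, c3, c4, c5, c6, f5, f6, f4, f3, f2, f1]
      have h1 := fne i
      have h2 := fne e
      have h3 := fne (i+e+1)
      have h4 := fne (2*i+e+1)
      have h5 := fne (2*i+2*e+2)
      field_simp
      ring
    exact_mod_cast KEY

lemma e1z (j m : ℕ) : (((j+m+2) * ((j+m+1).choose (2*m)) : ℕ) : ℤ)
    = (2*(j:ℤ)+3) * ((j+m+1).choose (2*m) : ℤ) - ((j:ℤ)+(m:ℤ)+1) * ((j+m).choose (2*m) : ℤ) := by
  rcases le_or_gt m (j+1) with h|h
  · have base := Nat.choose_mul_succ_eq (j+m) (2*m)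
    have base' : (((j+m).choose (2*m) * (j+m+1) : ℕ) : ℤ) = (((j+m+1).choose (2*m) * (j+m+1-2*m) : ℕ) : ℤ) := by
      exact_mod_cast congrArg (Nat.cast : ℕ → ℤ) base
    rw [show j+m+1-2*m = j+1-m from by omega] at base'
    have hsub : ((j+1-m : ℕ) : ℤ) = (j:ℤ)+1-(m:ℤ) := by
      have : m ≤ j+1 := h
      push_cast [Nat.cast_sub this]
      ring
    push_cast [hsub] at base'
    push_cast
    linarith [base']
  · rw [Nat.choose_eq_zero_of_lt (show j+m+1 < 2*m from by omega),
        Nat.choose_eq_zero_of_lt (show j+m < 2*m from by omega)]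
    push_cast
    ring

lemma e2c (j μ : ℕ) :
    (j+2)^2 * ((j+μ+3).choose (2*μ+2)) * ((2*μ+2).choose (μ+1))^2
      + 2*(2*j+3) * ((j+μ+2) * ((j+μ+1).choose (2*μ+2)) * ((2*μ+2).choose (μ+1))^2
          + 4*(j+μ+1) * ((j+μ).choose (2*μ)) * ((2*μ).choose μ)^2)
    = (2*j+3)^2 * (((j+μ+2).choose (2*μ+2)) * ((2*μ+2).choose (μ+1))^2
          + 4 * ((j+μ+1).choose (2*μ)) * ((2*μ).choose μ)^2)
      + (j+1)^2 * ((j+μ+1).choose (2*μ+2)) * ((2*μ+2).choose (μ+1))^2 := by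
  rcases lt_or_ge μ j with h|h
  · obtain ⟨d, rfl⟩ : ∃ d, j = μ+1+d := ⟨j-(μ+1), by omega⟩
    rw [show μ+1+d+μ+3 = 2*μ+d+4 from by omega,
        show μ+1+d+μ+2 = 2*μ+d+3 from by omega,
        show μ+1+d+μ+1 = 2*μ+d+2 from by omega,
        show μ+1+d+μ = 2*μ+d+1 from by omega,
        ← Nat.cast_inj (R := ℚ)]
    push_cast
    have c1 : ((2*μ+d+4).choose (2*μ+2) : ℚ) = (2*μ+d+4).factorial / ((2*μ+2).factorial * (d+2).factorial) := by
      rw [Nat.cast_choose ℚ (by omega : 2*μ+2 ≤ 2*μ+d+4), show 2*μ+d+4 - (2*μ+2) = d+2 from by omega]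
    have c2 : ((2*μ+d+2).choose (2*μ+2) : ℚ) = (2*μ+d+2).factorial / ((2*μ+2).factorial * d.factorial) := by
      rw [Nat.cast_choose ℚ (by omega : 2*μ+2 ≤ 2*μ+d+2), show 2*μ+d+2 - (2*μ+2) = d from by omega]
    have c3 : ((2*μ+d+1).choose (2*μ) : ℚ) = (2*μ+d+1).factorial / ((2*μ).factorial * (d+1).factorial) := by
      rw [Nat.cast_choose ℚ (by omega : 2*μ ≤ 2*μ+d+1), show 2*μ+d+1 - 2*μ = d+1 from by omega]
    have c4 : ((2*μ+d+3).choose (2*μ+2) : ℚ) = (2*μ+d+3).factorial / ((2*μ+2).factorial * (d+1).factorial) := by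
      rw [Nat.cast_choose ℚ (by omega : 2*μ+2 ≤ 2*μ+d+3), show 2*μ+d+3 - (2*μ+2) = d+1 from by omega]
    have c5 : ((2*μ+d+2).choose (2*μ) : ℚ) = (2*μ+d+2).factorial / ((2*μ).factorial * (d+2).factorial) := by
      rw [Nat.cast_choose ℚ (by omega : 2*μ ≤ 2*μ+d+2), show 2*μ+d+2 - 2*μ = d+2 from by omega]
    have cD : ((2*μ+2).choose (μ+1) : ℚ) = (2*μ+2).factorial / ((μ+1).factorial * (μ+1).factorial) := by
      rw [Nat.cast_choose ℚ (by omega : μ+1 ≤ 2*μ+2), show 2*μ+2 - (μ+1) = μ+1 from by omega]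
    have cE : ((2*μ).choose μ : ℚ) = (2*μ).factorial / (μ.factorial * μ.factorial) := by
      rw [Nat.cast_choose ℚ (by omega : μ ≤ 2*μ), show 2*μ - μ = μ from by omega]
    have f1 : ((2*μ+2).factorial : ℚ) = (2*μ+2)*(2*μ+1)*((2*μ).factorial : ℚ) := by
      rw [show 2*μ+2 = (2*μ+1)+1 from by omega, fct, show 2*μ+1 = (2*μ)+1 from by omega, fct]; push_cast; ring
    have f2 : ((d+1).factorial : ℚ) = (d+1)*(d.factorial : ℚ) := fct d
    have f3 : ((d+2).factorial : ℚ) = (d+2)*(d+1)*(d.factorial : ℚ) := by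
      rw [show d+2 = (d+1)+1 from by omega, fct, f2]; push_cast; ring
    have f4 : ((2*μ+d+2).factorial : ℚ) = (2*μ+d+2)*((2*μ+d+1).factorial : ℚ) := by
      rw [show 2*μ+d+2 = (2*μ+d+1)+1 from by omega, fct]; push_cast; ring
    have f5 : ((2*μ+d+3).factorial : ℚ) = (2*μ+d+3)*(2*μ+d+2)*((2*μ+d+1).factorial : ℚ) := by
      rw [show 2*μ+d+3 = (2*μ+d+2)+1 from by omega, fct, f4]; push_cast; ring
    have f6 : ((2*μ+d+4).factorial : ℚ) = (2*μ+d+4)*(2*μ+d+3)*(2*μ+d+2)*((2*μ+d+1).factorial : ℚ) := by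
      rw [show 2*μ+d+4 = (2*μ+d+3)+1 from by omega, fct, f5]; push_cast; ring
    have f7 : ((μ+1).factorial : ℚ) = (μ+1)*(μ.factorial : ℚ) := fct μ
    rw [c1, c2, c3, c4, c5, cD, cE, f6, f5, f4, f3, f2, f1, f7]
    have h1 := fne d
    have h2 := fne (2*μ)
    have h3 := fne (2*μ+d+1)
    have h4 := fne μ
    field_simp
    ring
  · have hD := central_step' μ
    by_cases h1 : μ = j
    case pos =>
      subst h1
      rw [show μ+μ+3 = (2*μ+2)+1 from by omega, show μ+μ+2 = 2*μ+2 from by omega,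
          show μ+μ+1 = (2*μ)+1 from by omega, show μ+μ = 2*μ from by omega,
          Nat.choose_succ_self_right]
      rw [show 2*μ+1 = (2*μ)+1 from rfl, Nat.choose_succ_self_right]
      rw [Nat.choose_self, Nat.choose_self,
          Nat.choose_eq_zero_of_lt (show 2*μ+1 < 2*μ+2 from by omega)]
      have hD2 : (((μ+1) * ((2*μ+2).choose (μ+1)) : ℕ) : ℤ)^2 = (((2*(2*μ+1) * ((2*μ).choose μ) : ℕ)) : ℤ)^2 := by
        rw [hD]
      push_cast at hD2
      rw [← Nat.cast_inj (R := ℤ)]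
      push_cast
      linear_combination (2*(μ:ℤ)+3) * hD2
    case neg =>
    by_cases h2 : μ = j+1
    case pos =>
      subst h2
      rw [show j+(j+1)+3 = 2*j+4 from by omega, show j+(j+1)+2 = 2*j+3 from by omega,
          show j+(j+1)+1 = 2*j+2 from by omega, show 2*(j+1)+2 = 2*j+4 from by omega,
          show 2*(j+1) = 2*j+2 from by omega, show j+(j+1) = 2*j+1 from by omega]
      rw [Nat.choose_self, Nat.choose_self,
          Nat.choose_eq_zero_of_lt (show 2*j+2 < 2*j+4 from by omega),
          Nat.choose_eq_zero_of_lt (show 2*j+1 < 2*j+2 from by omega),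
          Nat.choose_eq_zero_of_lt (show 2*j+3 < 2*j+4 from by omega)]
      have hD2 : (((j+2) * ((2*j+4).choose (j+2)) : ℕ) : ℤ)^2 = (((2*(2*j+3) * ((2*j+2).choose (j+1)) : ℕ)) : ℤ)^2 := by
        rw [show (j+2) * ((2*j+4).choose (j+2)) = (j+1+1) * ((2*(j+1)+2).choose ((j+1)+1)) from by
              rw [show 2*(j+1)+2 = 2*j+4 from by omega, show (j+1)+1 = j+2 from by omega],
            central_step' (j+1)]
        rw [show 2*(2*(j+1)+1) * ((2*(j+1)).choose (j+1)) = 2*(2*j+3) * ((2*j+2).choose (j+1)) from by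
              rw [show 2*(j+1)+1 = 2*j+3 from by omega, show 2*(j+1) = 2*j+2 from by omega]]
      push_cast at hD2
      rw [← Nat.cast_inj (R := ℤ)]
      push_cast
      linear_combination hD2
    case neg =>
      have h4 : j+2 ≤ μ := by omega
      rw [Nat.choose_eq_zero_of_lt (show j+μ+3 < 2*μ+2 from by omega),
          Nat.choose_eq_zero_of_lt (show j+μ+1 < 2*μ+2 from by omega),
          Nat.choose_eq_zero_of_lt (show j+μ < 2*μ from by omega),
          Nat.choose_eq_zero_of_lt (show j+μ+2 < 2*μ+2 from by omega),
          Nat.choose_eq_zero_of_lt (show j+μ+1 < 2*μ from by omega)]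
      ring

section
variable {R : Type*} [CommRing R]

noncomputable def Aa (t : R) (j : ℕ) : R :=
  ∑ k ∈ Finset.range (j+1),
    (-1:R)^k * (j.choose k : R) * (((2*j-2*k).choose j : ℕ) : R) * t^(j-2*k)

noncomputable def Sz (u z : R) (j : ℕ) : R :=
  ∑ m ∈ Finset.range (j+1),
    (((j+m).choose (2*m) : ℕ) : R) * (((2*m).choose m : ℕ) : R)^2 * u^(2*m) * z^m

noncomputable def Tz (u z : R) (j : ℕ) : R :=
  ∑ m ∈ Finset.range (j+1),
    (((j+m+1) : ℕ) : R) * (((j+m).choose (2*m) : ℕ) : R) * (((2*m).choose m : ℕ) : R)^2 * u^(2*m) * z^m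

lemma sum_ext {f : ℕ → R} {N M : ℕ} (hNM : N ≤ M) (h : ∀ i, N ≤ i → i < M → f i = 0) :
    ∑ i ∈ Finset.range N, f i = ∑ i ∈ Finset.range M, f i :=
  Finset.sum_subset (Finset.range_subset_range.mpr hNM)
    (fun x hx hnx => h x (by simpa using hnx) (by simpa using hx))

lemma zshift (z : R) (f : ℕ → R) (N : ℕ) :
    z * ∑ i ∈ Finset.range N, f i * z^i
      = ∑ m ∈ Finset.range (N+1), (if m = 0 then 0 else f (m-1)) * z^m := by
  rw [Finset.sum_range_succ' (fun m => (if m = 0 then 0 else f (m-1)) * z^m) N]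
  simp only [Nat.succ_ne_zero, if_false, Nat.add_sub_cancel, if_pos, pow_zero, reduceIte]
  rw [Finset.mul_sum, zero_mul, add_zero]
  exact Finset.sum_congr rfl (fun i _ => by ring)

lemma Aa_rec (t : R) (j : ℕ) :
    ((j:R)+2) * Aa t (j+2) + 4*((j:R)+1) * Aa t j = 2*(2*(j:R)+3) * t * Aa t (j+1) := by
  have h1 : ((j:R)+2) * Aa t (j+2)
      = (∑ i ∈ Finset.range (j+2), ((j:R)+2) * ((-1:R)^(i+1) * (((j+2).choose (i+1) : ℕ) : R)
          * (((2*(j+2)-2*(i+1)).choose (j+2) : ℕ) : R) * t^((j+2)-2*(i+1))))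
        + ((j:R)+2) * ((-1:R)^0 * (((j+2).choose 0 : ℕ) : R)
          * (((2*(j+2)-2*0).choose (j+2) : ℕ) : R) * t^((j+2)-2*0)) := by
    rw [Aa, Finset.mul_sum]
    exact Finset.sum_range_succ' _ (j+2)
  have h2 : 4*((j:R)+1) * Aa t j
      = ∑ i ∈ Finset.range (j+2), 4*((j:R)+1) * ((-1:R)^i * ((j.choose i : ℕ) : R)
          * (((2*j-2*i).choose j : ℕ) : R) * t^(j-2*i)) := by
    rw [Aa, Finset.mul_sum]
    conv_rhs => rw [Finset.sum_range_succ]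
    rw [Nat.choose_eq_zero_of_lt (show j < j+1 from by omega)]
    push_cast
    ring
  have h3 : 2*(2*(j:R)+3) * t * Aa t (j+1)
      = (∑ i ∈ Finset.range (j+2), 2*(2*(j:R)+3) * t * ((-1:R)^(i+1) * (((j+1).choose (i+1) : ℕ) : R)
          * (((2*(j+1)-2*(i+1)).choose (j+1) : ℕ) : R) * t^((j+1)-2*(i+1))))
        + 2*(2*(j:R)+3) * t * ((-1:R)^0 * (((j+1).choose 0 : ℕ) : R)
          * (((2*(j+1)-2*0).choose (j+1) : ℕ) : R) * t^((j+1)-2*0)) := by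
    rw [Aa, Finset.mul_sum]
    rw [Finset.sum_range_succ' _ (j+1)]
    congr 1
    conv_rhs => rw [Finset.sum_range_succ]
    rw [Nat.choose_eq_zero_of_lt (show j+1 < (j+1)+1 from by omega)]
    push_cast
    ring
  have hcong : ∀ i ∈ Finset.range (j+2),
      ((j:R)+2) * ((-1:R)^(i+1) * (((j+2).choose (i+1) : ℕ) : R)
          * (((2*(j+2)-2*(i+1)).choose (j+2) : ℕ) : R) * t^((j+2)-2*(i+1)))
        + 4*((j:R)+1) * ((-1:R)^i * ((j.choose i : ℕ) : R)
          * (((2*j-2*i).choose j : ℕ) : R) * t^(j-2*i))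
      = 2*(2*(j:R)+3) * t * ((-1:R)^(i+1) * (((j+1).choose (i+1) : ℕ) : R)
          * (((2*(j+1)-2*(i+1)).choose (j+1) : ℕ) : R) * t^((j+1)-2*(i+1))) := by
    intro i _
    rcases le_or_gt (2*i+1) j with hc|hc
    · obtain ⟨e, rfl⟩ : ∃ e, j = 2*i+1+e := ⟨j-(2*i+1), by omega⟩
      have hid := congrArg (Nat.cast : ℕ → R) (id1b (2*i+1+e) i)
      push_cast at hid
      rw [show (2*i+1+e+2)-2*(i+1) = e+1 from by omega,
          show (2*i+1+e)-2*i = e+1 from by omega,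
          show ((2*i+1+e)+1)-2*(i+1) = e from by omega,
          show 2*((2*i+1+e)+2)-2*(i+1) = 2*(2*i+1+e)+2-2*i from by omega,
          show 2*((2*i+1+e)+1)-2*(i+1) = 2*(2*i+1+e)-2*i from by omega,
          pow_succ]
      push_cast
      linear_combination ((-1:R)^(i+1) * (t^e * t)) * hid
    · have hid := congrArg (Nat.cast : ℕ → R) (id1b j i)
      rw [Nat.choose_eq_zero_of_lt (show 2*j-2*i < j+1 from by omega)] at hid
      push_cast at hid
      rw [show 2*(j+2)-2*(i+1) = 2*j+2-2*i from by omega,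
          show 2*(j+1)-2*(i+1) = 2*j-2*i from by omega,
          show (j+2)-2*(i+1) = 0 from by omega,
          show j - 2*i = 0 from by omega,
          show (j+1)-2*(i+1) = 0 from by omega,
          Nat.choose_eq_zero_of_lt (show 2*j-2*i < j+1 from by omega)]
      push_cast
      linear_combination ((-1:R)^(i+1)) * hid
  have h00 : ((j:R)+2) * ((-1:R)^0 * (((j+2).choose 0 : ℕ) : R)
          * (((2*(j+2)-2*0).choose (j+2) : ℕ) : R) * t^((j+2)-2*0))
      = 2*(2*(j:R)+3) * t * ((-1:R)^0 * (((j+1).choose 0 : ℕ) : R)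
          * (((2*(j+1)-2*0).choose (j+1) : ℕ) : R) * t^((j+1)-2*0)) := by
    have hid := congrArg (Nat.cast : ℕ → R) (id1a j)
    push_cast at hid
    rw [show 2*(j+2)-2*0 = 2*j+4 from by omega, show 2*(j+1)-2*0 = 2*j+2 from by omega,
        show (j+2)-2*0 = j+2 from by omega, show (j+1)-2*0 = j+1 from by omega,
        show j+2 = (j+1)+1 from rfl, pow_succ]
    push_cast [Nat.choose_zero_right]
    linear_combination (t^(j+1) * t) * hid
  rw [h1, h2, h3, add_right_comm, ← Finset.sum_add_distrib]
  rw [Finset.sum_congr rfl hcong]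
  linear_combination h00

lemma TS1 (u z : R) (j : ℕ) :
    (2*(j:R)+3) * Sz u z (j+1) = Tz u z (j+1) + Tz u z j := by
  have hT0 : Tz u z j
      = ∑ m ∈ Finset.range (j+2),
          (((j+m+1) : ℕ) : R) * (((j+m).choose (2*m) : ℕ) : R) * (((2*m).choose m : ℕ) : R)^2 * u^(2*m) * z^m := by
    rw [Tz]
    apply sum_ext (by omega)
    intro i hi hi2
    have : i = j+1 := by omega
    subst this
    rw [Nat.choose_eq_zero_of_lt (show j+(j+1) < 2*(j+1) from by omega)]
    push_cast
    ring
  rw [Sz, Tz, hT0, Finset.mul_sum, ← Finset.sum_add_distrib]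
  apply Finset.sum_congr rfl
  intro m _
  have hid := congrArg (Int.cast : ℤ → R) (e1z j m)
  push_cast at hid
  rw [show j+1+m+1 = j+m+2 from by omega, show j+1+m = j+m+1 from by omega]
  push_cast
  linear_combination (-((((2*m).choose m : ℕ) : R)^2 * u^(2*m) * z^m)) * hid

lemma E2S (u z : R) (hu : (2:R)*u = 1) (j : ℕ) :
    ((j:R)+2)^2 * Sz u z (j+2)
      = (2*(j:R)+3)^2 * ((z+1) * Sz u z (j+1))
        - 2*(2*(j:R)+3) * ((z+1) * Tz u z j)
        + ((j:R)+1)^2 * Sz u z j := by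
  have hS2 : ((j:R)+2)^2 * Sz u z (j+2)
      = ∑ m ∈ Finset.range (j+3), ((j:R)+2)^2
          * ((((j+2+m).choose (2*m) : ℕ) : R) * (((2*m).choose m : ℕ) : R)^2 * u^(2*m) * z^m) := by
    rw [Sz, Finset.mul_sum]
  have hS1 : Sz u z (j+1)
      = ∑ m ∈ Finset.range (j+3),
          (((j+1+m).choose (2*m) : ℕ) : R) * (((2*m).choose m : ℕ) : R)^2 * u^(2*m) * z^m := by
    rw [Sz]
    apply sum_ext (by omega)
    intro i hi hi2
    rw [Nat.choose_eq_zero_of_lt (show j+1+i < 2*i from by omega)]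
    push_cast; ring
  have hzS1 : z * Sz u z (j+1)
      = ∑ m ∈ Finset.range (j+3),
          (if m = 0 then 0 else
            (((j+1+(m-1)).choose (2*(m-1)) : ℕ) : R) * (((2*(m-1)).choose (m-1) : ℕ) : R)^2 * u^(2*(m-1)))
          * z^m := by
    rw [Sz]
    exact zshift z (fun i => (((j+1+i).choose (2*i) : ℕ) : R) * (((2*i).choose i : ℕ) : R)^2 * u^(2*i)) (j+2)
  have hT0 : Tz u z j
      = ∑ m ∈ Finset.range (j+3),
          (((j+m+1) : ℕ) : R) * (((j+m).choose (2*m) : ℕ) : R) * (((2*m).choose m : ℕ) : R)^2 * u^(2*m) * z^m := by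
    rw [Tz]
    apply sum_ext (by omega)
    intro i hi hi2
    rw [Nat.choose_eq_zero_of_lt (show j+i < 2*i from by omega)]
    push_cast; ring
  have hzT0 : z * Tz u z j
      = ∑ m ∈ Finset.range (j+3),
          (if m = 0 then 0 else
            (((j+(m-1)+1) : ℕ) : R) * (((j+(m-1)).choose (2*(m-1)) : ℕ) : R)
              * (((2*(m-1)).choose (m-1) : ℕ) : R)^2 * u^(2*(m-1)))
          * z^m := by
    rw [Tz]
    rw [zshift z (fun i => (((j+i+1) : ℕ) : R) * (((j+i).choose (2*i) : ℕ) : R)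
          * (((2*i).choose i : ℕ) : R)^2 * u^(2*i)) (j+1)]
    apply sum_ext (by omega)
    intro i hi hi2
    have : i = j+2 := by omega
    subst this
    rw [if_neg (show ¬ (j+2 = 0) from by omega), show j+2-1 = j+1 from by omega,
        Nat.choose_eq_zero_of_lt (show j+(j+1) < 2*(j+1) from by omega)]
    push_cast; ring
  have hS0 : Sz u z j
      = ∑ m ∈ Finset.range (j+3),
          (((j+m).choose (2*m) : ℕ) : R) * (((2*m).choose m : ℕ) : R)^2 * u^(2*m) * z^m := by
    rw [Sz]
    apply sum_ext (by omega)
    intro i hi hi2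
    rw [Nat.choose_eq_zero_of_lt (show j+i < 2*i from by omega)]
    push_cast; ring
  have expand : (2*(j:R)+3)^2 * ((z+1) * Sz u z (j+1))
        - 2*(2*(j:R)+3) * ((z+1) * Tz u z j)
        + ((j:R)+1)^2 * Sz u z j
      = (2*(j:R)+3)^2 * (z * Sz u z (j+1)) + (2*(j:R)+3)^2 * Sz u z (j+1)
        - 2*(2*(j:R)+3) * (z * Tz u z j) - 2*(2*(j:R)+3) * Tz u z j
        + ((j:R)+1)^2 * Sz u z j := by ring
  rw [expand, hS2, hzS1, hS1, hzT0, hT0, hS0]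
  simp only [Finset.mul_sum]
  rw [← Finset.sum_add_distrib, ← Finset.sum_sub_distrib, ← Finset.sum_sub_distrib,
      ← Finset.sum_add_distrib]
  apply Finset.sum_congr rfl
  intro m _
  match m with
  | 0 =>
    simp only [if_pos rfl, Nat.mul_zero, Nat.add_zero, Nat.choose_zero_right, Nat.choose_self,
      Nat.cast_one, pow_zero, Nat.cast_ofNat]
    push_cast
    ring
  | (μ+1) =>
    rw [if_neg (Nat.succ_ne_zero μ)]
    simp only [Nat.add_sub_cancel]
    have h4u : u^(2*μ) = 4 * u^(2*(μ+1)) := by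
      have h : (4:R) * u^(2*(μ+1)) = ((2:R)*u)^2 * u^(2*μ) := by ring
      rw [hu, one_pow, one_mul] at h
      exact h.symm
    rw [h4u]
    rw [show j+2+(μ+1) = j+μ+3 from by omega,
        show j+1+(μ+1) = j+μ+2 from by omega,
        show j+1+μ = j+μ+1 from by omega,
        show j+(μ+1)+1 = j+μ+2 from by omega,
        show j+(μ+1) = j+μ+1 from by omega,
        show 2*(μ+1) = 2*μ+2 from by omega]
    have hid := congrArg (Nat.cast : ℕ → R) (e2c j μ)
    push_cast at hid
    push_cast
    linear_combination (u^(2*μ+2) * z^(μ+1)) * hid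

lemma legP_Aa (t : R) (j : ℕ) : legP j t = Ring.inverse (2:R) ^ j * Aa t j := by
  rw [legP, Aa]
  congr 1
  apply sum_ext (by omega)
  intro i hi hi2
  rw [Nat.choose_eq_zero_of_lt (show 2*j-2*i < j from by omega)]
  push_cast
  ring

lemma Pa_rec (t u : R) (hu : (2:R)*u = 1) (j : ℕ) :
    ((j:R)+2) * (u^(j+2) * Aa t (j+2))
      = (2*(j:R)+3) * t * (u^(j+1) * Aa t (j+1)) - ((j:R)+1) * (u^j * Aa t j) := by
  have h := Aa_rec t j
  linear_combination (u^(j+2)) * h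
    + ((2*(j:R)+3) * t * Aa t (j+1) * u^(j+1) - ((j:R)+1) * Aa t j * u^j * (1+2*u)) * hu

lemma Aa0 (t : R) : Aa t 0 = 1 := by
  simp [Aa]

lemma Aa1 (t : R) : Aa t 1 = 2*t := by
  rw [Aa, Finset.sum_range_succ, Finset.sum_range_succ, Finset.sum_range_zero]
  norm_num

lemma Sz0 (u z : R) : Sz u z 0 = 1 := by simp [Sz]

lemma Tz0 (u z : R) : Tz u z 0 = 1 := by simp [Tz]

lemma Sz1 (u z : R) (hu : (2:R)*u = 1) : Sz u z 1 = 1 + z := by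
  rw [Sz, Finset.sum_range_succ, Finset.sum_range_succ, Finset.sum_range_zero]
  norm_num
  linear_combination (z*(2*u+1)) * hu

lemma invariant (t u : R) (hu : (2:R)*u = 1) (n : ℕ)
    (hunit : ∀ k : ℕ, 0 < k → k ≤ n+1 → IsUnit ((k : ℕ) : R)) :
    ∀ j, j + 2 ≤ n + 1 →
      (u^j * Aa t j)^2 = Sz u (t^2-1) j
      ∧ (u^(j+1) * Aa t (j+1))^2 = Sz u (t^2-1) (j+1)
      ∧ ((j:R)+1) * ((u^j * Aa t j) * (u^(j+1) * Aa t (j+1))) = t * Tz u (t^2-1) j := by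
  intro j
  induction j with
  | zero =>
    intro _
    refine ⟨?_, ?_, ?_⟩
    · rw [Aa0, Sz0]; ring
    · rw [Aa1, Sz1 u _ hu]
      have : u^(0+1) * (2*t) = (2*u)*t := by ring
      rw [this, hu]
      ring
    · rw [Aa0, Aa1, Tz0]
      have : ((0:ℕ):R)+1 = 1 := by norm_num
      rw [this]
      have h2 : u^0 * 1 * (u^(0+1) * (2*t)) = (2*u)*t := by ring
      rw [h2, hu]
      ring
  | succ j ih =>
    intro hj
    obtain ⟨hx0, hx1, hy0⟩ := ih (by omega)
    have hUj2 : IsUnit ((j:R)+2) := by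
      have := hunit (j+2) (by omega) (by omega)
      push_cast at this
      exact this
    have Prec := Pa_rec t u hu j
    -- y step
    have key1 : ((j:R)+2) * (((j:R)+2) * ((u^(j+1) * Aa t (j+1)) * (u^(j+2) * Aa t (j+2))))
        = ((j:R)+2) * (t * Tz u (t^2-1) (j+1)) := by
      have hts := TS1 u (t^2-1) j
      linear_combination (((j:R)+2) * (u^(j+1) * Aa t (j+1))) * Prec
        + (((j:R)+2)*(2*(j:R)+3)*t) * hx1
        - (((j:R)+2)) * hy0
        + (((j:R)+2)*t) * hts
    have hy1 : (((j+1:ℕ):R)+1) * ((u^(j+1) * Aa t (j+1)) * (u^(j+1+1) * Aa t (j+1+1)))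
        = t * Tz u (t^2-1) (j+1) := by
      have h := hUj2.mul_left_cancel key1
      rw [show j+1+1 = j+2 from rfl]
      push_cast
      linear_combination h
    -- x step
    have key2 : (((j:R)+2)*((j:R)+2)) * ((u^(j+2) * Aa t (j+2))^2)
        = (((j:R)+2)*((j:R)+2)) * Sz u (t^2-1) (j+2) := by
      have he2 := E2S u (t^2-1) hu j
      linear_combination
        (((j:R)+2) * (u^(j+2) * Aa t (j+2)) + (2*(j:R)+3)*t*(u^(j+1) * Aa t (j+1))
          - ((j:R)+1)*(u^j * Aa t j)) * Prec
        + ((2*(j:R)+3)^2*t^2) * hx1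
        - (2*(2*(j:R)+3)*t) * hy0
        + (((j:R)+1)^2) * hx0
        - he2
    have hx2 : (u^(j+1+1) * Aa t (j+1+1))^2 = Sz u (t^2-1) (j+1+1) := by
      have h := (hUj2.mul (hUj2)).mul_left_cancel key2
      rw [show j+1+1 = j+2 from rfl]
      exact h
    exact ⟨hx1, hx2, hy1⟩

end

lemma oddprod (m : ℕ) : 2^m * m.factorial * ∏ i ∈ Finset.range m, (2*i+1) = (2*m).factorial := by
  induction m with
  | zero => simp
  | succ m ih =>
    have ihZ := congrArg (Nat.cast : ℕ → ℤ) ih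
    push_cast at ihZ
    rw [← Nat.cast_inj (R := ℤ)]
    rw [show 2*(m+1) = (2*m+1)+1 from by omega, Nat.factorial_succ,
        show 2*m+1 = (2*m)+1 from by omega, Nat.factorial_succ]
    push_cast [Finset.prod_range_succ, Nat.factorial_succ]
    linear_combination (2*(↑m+1)*(2*(m:ℤ)+1)) * ihZ

lemma prodform (n : ℕ) : ∀ m, m ≤ n → (2*m).factorial * ((n+m).choose (2*m)) = ∏ i ∈ Finset.range m, ((n-i)*(n+1+i)) := by
  intro m
  induction m with
  | zero => simp
  | succ m ih =>
    intro hm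
    have ihZ := congrArg (Nat.cast : ℕ → ℤ) (ih (by omega))
    push_cast at ihZ
    have s1 := Nat.add_one_mul_choose_eq (n+m) (2*m+1)
    rw [show 2*m+1+1 = 2*m+2 from by omega] at s1
    have s1Z := congrArg (Nat.cast : ℕ → ℤ) s1
    push_cast at s1Z
    have s2 := Nat.choose_succ_right_eq (n+m) (2*m)
    rw [show n+m-2*m = n-m from by omega] at s2
    have s2Z := congrArg (Nat.cast : ℕ → ℤ) s2
    push_cast at s2Z
    rw [← Nat.cast_inj (R := ℤ)]
    rw [show 2*(m+1) = (2*m+1)+1 from by omega, Nat.factorial_succ,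
        show 2*m+1 = (2*m)+1 from by omega, Nat.factorial_succ,
        show n+(m+1) = (n+m)+1 from by omega, show (2*m)+1+1 = 2*m+2 from by omega]
    push_cast [Finset.prod_range_succ]
    linear_combination (-(2*(m:ℤ)+1)*((2*m).factorial : ℤ)) * s1Z
      + (((n:ℤ)+(m:ℤ)+1)*((2*m).factorial : ℤ)) * s2Z
      + (((n:ℤ)+(m:ℤ)+1)*((n-m : ℕ) : ℤ)) * ihZ

section
variable (p : ℕ) [hP : Fact p.Prime]

lemma fact_unit (k : ℕ) (hk : k < p) : IsUnit ((k.factorial : ℕ) : ZMod (p^2)) := by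
  haveI : NeZero (p^2) := ⟨pow_ne_zero 2 hP.out.pos.ne'⟩
  rw [ZMod.isUnit_iff_coprime]
  apply Nat.Coprime.pow_right
  have hnd : ¬ p ∣ k.factorial := fun hd => by
    have := (Nat.Prime.dvd_factorial hP.out).1 hd
    omega
  exact ((Nat.Prime.coprime_iff_not_dvd hP.out).2 hnd).symm

lemma nat_unit (k : ℕ) (h0 : 0 < k) (hk : k < p) : IsUnit ((k : ℕ) : ZMod (p^2)) := by
  haveI : NeZero (p^2) := ⟨pow_ne_zero 2 hP.out.pos.ne'⟩
  rw [ZMod.isUnit_iff_coprime]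
  apply Nat.Coprime.pow_right
  exact ((Nat.Prime.coprime_iff_not_dvd hP.out).2 (fun hd => by
    have := Nat.le_of_dvd h0 hd; omega)).symm

lemma hB (n : ℕ) (hpn : p = 2*n+1) (m : ℕ) (hm : m ≤ n) :
    (16 : ZMod (p^2))^m * (((n+m).choose (2*m) : ℕ) : ZMod (p^2))
      = (-1)^m * (((2*m).choose m : ℕ) : ZMod (p^2)) := by
  set R := ZMod (p^2)
  have hp20 : ((p:ℕ) : R)^2 = 0 := by rw [← Nat.cast_pow, ZMod.natCast_self]
  have step1 : (((2*m).factorial : ℕ) : R) * (((n+m).choose (2*m) : ℕ) : R)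
      = ∏ i ∈ Finset.range m, ((((n-i) : ℕ) : R) * ((n:R)+1+((i:ℕ):R))) := by
    have h := congrArg (Nat.cast : ℕ → ZMod (p^2)) (prodform n m hm)
    push_cast at h
    exact h
  have step3 : ∀ i ∈ Finset.range m, (4:R) * ((((n-i) : ℕ) : R) * ((n:R)+1+((i:ℕ):R)))
      = -((2*((i:ℕ):R)+1)^2) := by
    intro i hi
    have hin : i ≤ n := by have := Finset.mem_range.1 hi; omega
    have hZ : (4:ℤ) * (((n-i : ℕ) : ℤ) * ((n:ℤ)+1+(i:ℤ))) = (p:ℤ)^2 - ((2*i+1 : ℕ) : ℤ)^2 := by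
      rw [Nat.cast_sub hin]
      have hpZ : (p:ℤ) = 2*(n:ℤ)+1 := by exact_mod_cast congrArg (Nat.cast : ℕ → ℤ) hpn
      rw [hpZ]
      push_cast
      ring
    have hR := congrArg (Int.cast : ℤ → ZMod (p^2)) hZ
    push_cast at hR
    rw [hR]
    rw [show ((p:ℕ):R)^2 - (2*(i:R)+1)^2 = ((p:ℕ):R)^2 - (2*(i:R)+1)^2 from rfl, hp20]
    push_cast
    ring
  have main4 : (((2*m).factorial : ℕ) : R) * (((n+m).choose (2*m) : ℕ) : R) * (4:R)^m
      = (-1)^m * (∏ i ∈ Finset.range m, (2*((i:ℕ):R)+1))^2 := by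
    have c1 : (4:R)^m = ∏ _i ∈ Finset.range m, (4:R) := by
      rw [Finset.prod_const, Finset.card_range]
    rw [step1, c1, ← Finset.prod_mul_distrib]
    have : ∀ i ∈ Finset.range m, ((((n-i) : ℕ) : R) * ((n:R)+1+((i:ℕ):R))) * (4:R)
        = (-1) * ((2*((i:ℕ):R)+1)^2) := by
      intro i hi
      have := step3 i hi
      linear_combination this
    rw [Finset.prod_congr rfl this, Finset.prod_mul_distrib, Finset.prod_const,
        Finset.card_range, Finset.prod_pow]
  have hXunit := fact_unit p (2*m) (by omega)
  have hMunit := fact_unit p m (by omega)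
  have hodd := congrArg (Nat.cast : ℕ → ZMod (p^2)) (oddprod m)
  push_cast at hodd
  have hctrN := Nat.choose_mul_factorial_mul_factorial (show m ≤ 2*m from by omega)
  rw [show 2*m - m = m from by omega] at hctrN
  have hctr := congrArg (Nat.cast : ℕ → ZMod (p^2)) hctrN
  push_cast at hctr
  have h4 : (4:R)^m = 2^m*2^m := by rw [← mul_pow]; norm_num
  have h16 : (16:R)^m = 2^m*2^m*(2^m*2^m) := by rw [← mul_pow, ← mul_pow]; norm_num
  rw [h4] at main4
  have hcomb : ((((2*m).factorial : ℕ) : R) * (((m.factorial : ℕ) : R) * ((m.factorial : ℕ) : R)))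
        * ((16:R)^m * (((n+m).choose (2*m) : ℕ) : R))
      = ((((2*m).factorial : ℕ) : R) * (((m.factorial : ℕ) : R) * ((m.factorial : ℕ) : R)))
        * ((-1)^m * (((2*m).choose m : ℕ) : R)) := by
    rw [h16]
    linear_combination ((2:R)^m*2^m*((m.factorial : ℕ) : R)^2) * main4
      + ((-1:R)^m * (2^m*((m.factorial : ℕ) : R)*(∏ i ∈ Finset.range m, (2*((i:ℕ):R)+1))
          + (((2*m).factorial : ℕ) : R))) * hodd
      + (-((-1:R)^m * (((2*m).factorial : ℕ) : R))) * hctr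
  exact (hXunit.mul (hMunit.mul hMunit)).mul_left_cancel hcomb

end

end Stmt12Aux

theorem stmt_12 (p : ℕ) [Fact p.Prime] (hp : p ≠ 2) (m : ℤ) (hm : ¬ (p : ℤ) ∣ m)
    (t : ZMod (p ^ 2)) (ht : t ^ 2 = 1 - 64 * Ring.inverse ((m : ℤ) : ZMod (p ^ 2))) :
    ∑ k ∈ Finset.range ((p - 1) / 2 + 1),
        (((2 * k).choose k : ℕ) : ZMod (p ^ 2)) ^ 3 * (Ring.inverse ((m : ℤ) : ZMod (p ^ 2))) ^ k
      = legP ((p - 1) / 2) t ^ 2 := by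
  have hPP : p.Prime := Fact.out
  have hodd : p % 2 = 1 := by
    rcases hPP.eq_two_or_odd with h|h
    · exact absurd h hp
    · exact h
  have h2le := hPP.two_le
  set n := (p - 1) / 2 with hn
  have hpn : p = 2*n+1 := by omega
  have hn1 : 1 ≤ n := by omega
  set u := Ring.inverse (2 : ZMod (p^2)) with hu_def
  have h2u : IsUnit (2 : ZMod (p^2)) := by
    have h := Stmt12Aux.nat_unit p 2 (by norm_num) (by omega)
    push_cast at h
    exact h
  have hu : (2 : ZMod (p^2)) * u = 1 := Ring.mul_inverse_cancel _ h2u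
  have hunit : ∀ k : ℕ, 0 < k → k ≤ n+1 → IsUnit ((k:ℕ) : ZMod (p^2)) :=
    fun k h0 hk => Stmt12Aux.nat_unit p k h0 (by omega)
  obtain ⟨-, hx, -⟩ := Stmt12Aux.invariant t u hu n hunit (n-1) (by omega)
  rw [show n-1+1 = n from by omega] at hx
  rw [Stmt12Aux.legP_Aa, ← hu_def, hx, Stmt12Aux.Sz]
  apply Finset.sum_congr rfl
  intro k hk
  have hkn : k ≤ n := by
    have := Finset.mem_range.1 hk
    omega
  have hBk := Stmt12Aux.hB p n hpn k hkn
  have hzx : t^2 - 1 = -64 * Ring.inverse ((m : ℤ) : ZMod (p ^ 2)) := by linear_combination ht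
  rw [hzx, mul_pow, pow_mul]
  have e1 : (4 : ZMod (p^2)) * u^2 = 1 := by linear_combination (2*u+1) * hu
  have e2 : ((u^2))^k * ((-64 : ZMod (p^2)))^k = (-1)^k * 16^k := by
    rw [← mul_pow, show u^2 * (-64 : ZMod (p^2)) = (-1) * 16 from by linear_combination (-16) * e1,
        mul_pow]
  have hsq : ((-1 : ZMod (p^2))^k) * (-1)^k = 1 := by
    rw [← mul_pow]; norm_num
  linear_combination
    (-((((n+k).choose (2*k) : ℕ) : ZMod (p^2)) * (((2*k).choose k : ℕ) : ZMod (p^2))^2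
        * (Ring.inverse ((m : ℤ) : ZMod (p ^ 2)))^k)) * e2
    + (-((((2*k).choose k : ℕ) : ZMod (p^2))^2 * (-1 : ZMod (p^2))^k
        * (Ring.inverse ((m : ℤ) : ZMod (p ^ 2)))^k)) * hBk
    + (-((((2*k).choose k : ℕ) : ZMod (p^2))^3 * (Ring.inverse ((m : ℤ) : ZMod (p ^ 2)))^k)) * hsq
end
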